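/- arXiv:1704.07598 — 6 statements merged into one kernel-verified Lean document; each statement's English description precedes it below -/
import Mathlib

section
/- If X is a geodesic metric space and every geodesic segment in X is N-Morse for a fixed Morse gauge N, then X is δ-hyperbolic for some δ depending only on N. In particular one may take δ = 4·N(3,0), in the sense that all geodesic triangles in X are 4·N(3,0)-slim. -/
open Metric Set

/-- A `(λ, ε)`-quasi-geodesic defined on the interval `[a,b]`. -/
def IsQuasiGeodesicOn {X : Type*} [MetricSpace X] (lam eps a b : ℝ) (σ : ℝ → X) : Prop :=
  ∀ s ∈ Set.Icc a b, ∀ t ∈ Set.Icc a b,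
    (1 / lam) * |s - t| - eps ≤ dist (σ s) (σ t) ∧ dist (σ s) (σ t) ≤ lam * |s - t| + eps

/-- A geodesic segment from `x` to `y`, parametrized by arclength on `[0, dist x y]`. -/
def IsGeodesicSegment {X : Type*} [MetricSpace X] (γ : ℝ → X) (x y : X) : Prop :=
  γ 0 = x ∧ γ (dist x y) = y ∧
    ∀ s ∈ Set.Icc (0:ℝ) (dist x y), ∀ t ∈ Set.Icc (0:ℝ) (dist x y),
      dist (γ s) (γ t) = |s - t|

/-- A geodesic metric space: any two points are joined by a geodesic segment. -/
def GeodesicSpace (X : Type*) [MetricSpace X] : Prop :=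
  ∀ x y : X, ∃ γ : ℝ → X, IsGeodesicSegment γ x y

/-- A geodesic ray, parametrized by arclength on `[0, ∞)`. -/
def IsGeodesicRay {X : Type*} [MetricSpace X] (γ : ℝ → X) : Prop :=
  ∀ s ∈ Set.Ici (0:ℝ), ∀ t ∈ Set.Ici (0:ℝ), dist (γ s) (γ t) = |s - t|

/-- A set `im` (the image of a geodesic) is `N`-Morse for a Morse gauge `N : ℝ → ℝ → ℝ` if
every `(λ,ε)`-quasi-geodesic (`λ ≥ 1`, `ε ≥ 0`) with endpoints on `im` stays in the
`N λ ε`-neighborhood of `im`. -/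
def IsMorseWith {X : Type*} [MetricSpace X] (N : ℝ → ℝ → ℝ) (im : Set X) : Prop :=
  ∀ lam eps : ℝ, 1 ≤ lam → 0 ≤ eps → ∀ a b : ℝ, a ≤ b → ∀ σ : ℝ → X,
    IsQuasiGeodesicOn lam eps a b σ → σ a ∈ im → σ b ∈ im →
    ∀ t ∈ Set.Icc a b, Metric.infDist (σ t) im ≤ N lam eps

/-- An `N`-Morse geodesic ray. -/
def IsMorseRay {X : Type*} [MetricSpace X] (N : ℝ → ℝ → ℝ) (γ : ℝ → X) : Prop :=
  IsGeodesicRay γ ∧ IsMorseWith N (γ '' Set.Ici 0)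

/-- An `N`-Morse geodesic segment from `x` to `y`. -/
def IsMorseSegment {X : Type*} [MetricSpace X] (N : ℝ → ℝ → ℝ) (γ : ℝ → X) (x y : X) : Prop :=
  IsGeodesicSegment γ x y ∧ IsMorseWith N (γ '' Set.Icc 0 (dist x y))

/-- A geodesic triangle with vertices `x, y, z` and sides `γ₁ : x→y`, `γ₂ : y→z`, `γ₃ : z→x`
is `δ`-slim if each side lies in the `δ`-neighborhood of the union of the other two sides. -/
def TriangleIsSlim {X : Type*} [MetricSpace X] (δ : ℝ) (x y z : X) (γ₁ γ₂ γ₃ : ℝ → X) : Prop :=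
  (∀ s ∈ Set.Icc (0:ℝ) (dist x y),
    Metric.infDist (γ₁ s) (γ₂ '' Set.Icc 0 (dist y z) ∪ γ₃ '' Set.Icc 0 (dist z x)) ≤ δ) ∧
  (∀ s ∈ Set.Icc (0:ℝ) (dist y z),
    Metric.infDist (γ₂ s) (γ₁ '' Set.Icc 0 (dist x y) ∪ γ₃ '' Set.Icc 0 (dist z x)) ≤ δ) ∧
  (∀ s ∈ Set.Icc (0:ℝ) (dist z x),
    Metric.infDist (γ₃ s) (γ₁ '' Set.Icc 0 (dist x y) ∪ γ₂ '' Set.Icc 0 (dist y z)) ≤ δ)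

/-- The main concatenation certificate: a geodesic `β₁` from a point `p₀` of length `a₁`,
followed by a geodesic piece `β₂` of length `a₂`, all of whose points are at distance
at least `a₁` from `p₀`, is a `(3,0)`-quasigeodesic. -/
lemma quasi_of_concat {X : Type*} [MetricSpace X] (β₁ β₂ : ℝ → X) (a₁ a₂ : ℝ)
    (ha₁ : 0 ≤ a₁) (ha₂ : 0 ≤ a₂)
    (h₁ : ∀ s ∈ Icc (0:ℝ) a₁, ∀ t ∈ Icc (0:ℝ) a₁, dist (β₁ s) (β₁ t) = |s - t|)
    (h₂ : ∀ s ∈ Icc (0:ℝ) a₂, ∀ t ∈ Icc (0:ℝ) a₂, dist (β₂ s) (β₂ t) = |s - t|)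
    (hj : β₁ a₁ = β₂ 0)
    (hlow : ∀ t ∈ Icc (0:ℝ) a₂, a₁ ≤ dist (β₁ 0) (β₂ t)) :
    IsQuasiGeodesicOn 3 0 0 (a₁ + a₂) (fun t => if t ≤ a₁ then β₁ t else β₂ (t - a₁)) := by
  have key : ∀ s t : ℝ, s ∈ Icc (0:ℝ) (a₁+a₂) → t ∈ Icc (0:ℝ) (a₁+a₂) → s ≤ t →
      (1/3) * (t - s) ≤ dist (if s ≤ a₁ then β₁ s else β₂ (s - a₁))
          (if t ≤ a₁ then β₁ t else β₂ (t - a₁)) ∧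
        dist (if s ≤ a₁ then β₁ s else β₂ (s - a₁))
          (if t ≤ a₁ then β₁ t else β₂ (t - a₁)) ≤ t - s := by
    intro s t hs ht hst
    by_cases h2t : t ≤ a₁
    · have h2s : s ≤ a₁ := hst.trans h2t
      rw [if_pos h2s, if_pos h2t,
        h₁ s ⟨hs.1, h2s⟩ t ⟨ht.1, h2t⟩, abs_sub_comm, abs_of_nonneg (by linarith)]
      constructor <;> linarith
    · push_neg at h2t
      by_cases h1s : s ≤ a₁
      · -- crossing pair
        have hw : t - a₁ ∈ Icc (0:ℝ) a₂ := ⟨by linarith, by linarith [ht.2]⟩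
        rw [if_pos h1s, if_neg (not_le.2 h2t)]
        have hβ1 : dist (β₁ s) (β₁ a₁) = a₁ - s := by
          rw [h₁ s ⟨hs.1, h1s⟩ a₁ ⟨ha₁, le_rfl⟩, abs_of_nonpos (by linarith)]; ring
        have hβ2 : dist (β₂ 0) (β₂ (t - a₁)) = t - a₁ := by
          rw [h₂ 0 ⟨le_rfl, ha₂⟩ (t - a₁) hw, abs_of_nonpos (by linarith)]; ring
        have hd0 : dist (β₁ 0) (β₁ s) = s := by
          rw [h₁ 0 ⟨le_rfl, ha₁⟩ s ⟨hs.1, h1s⟩, abs_of_nonpos (by linarith [hs.1])]; ring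
        have hup : dist (β₁ s) (β₂ (t - a₁)) ≤ (a₁ - s) + (t - a₁) := by
          calc dist (β₁ s) (β₂ (t - a₁))
              ≤ dist (β₁ s) (β₁ a₁) + dist (β₁ a₁) (β₂ (t - a₁)) := dist_triangle _ _ _
            _ = (a₁ - s) + dist (β₂ 0) (β₂ (t - a₁)) := by rw [hβ1, hj]
            _ = (a₁ - s) + (t - a₁) := by rw [hβ2]
        have hl1 : a₁ - s ≤ dist (β₁ s) (β₂ (t - a₁)) := by
          have h0 := hlow (t - a₁) hw
          have htr : dist (β₁ 0) (β₂ (t - a₁))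
              ≤ dist (β₁ 0) (β₁ s) + dist (β₁ s) (β₂ (t - a₁)) := dist_triangle _ _ _
          rw [hd0] at htr
          linarith
        have hl2 : (t - a₁) - (a₁ - s) ≤ dist (β₁ s) (β₂ (t - a₁)) := by
          have htr : dist (β₂ 0) (β₂ (t - a₁))
              ≤ dist (β₂ 0) (β₁ s) + dist (β₁ s) (β₂ (t - a₁)) := dist_triangle _ _ _
          have hba : dist (β₂ 0) (β₁ s) = a₁ - s := by rw [← hj, dist_comm, hβ1]
          rw [hβ2, hba] at htr
          linarith
        constructor
        · rcases le_total (t - a₁) (2 * (a₁ - s)) with h | h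
          · linarith
          · linarith
        · linarith
      · -- both in second piece
        push_neg at h1s
        have hws : s - a₁ ∈ Icc (0:ℝ) a₂ := ⟨by linarith, by linarith [hs.2]⟩
        have hwt : t - a₁ ∈ Icc (0:ℝ) a₂ := ⟨by linarith, by linarith [ht.2]⟩
        rw [if_neg (not_le.2 h1s), if_neg (not_le.2 h2t),
          h₂ (s - a₁) hws (t - a₁) hwt,
          show s - a₁ - (t - a₁) = s - t by ring, abs_sub_comm,
          abs_of_nonneg (by linarith)]
        constructor <;> linarith
  intro s hs t ht
  rcases le_total s t with h | h
  · have hk := key s t hs ht h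
    have habs : |s - t| = t - s := by rw [abs_sub_comm]; exact abs_of_nonneg (by linarith)
    simp only [habs]
    constructor
    · calc 1/3 * (t - s) - 0 = 1/3 * (t - s) := by ring
        _ ≤ _ := hk.1
    · calc dist _ _ ≤ t - s := hk.2
        _ ≤ 3 * (t - s) + 0 := by linarith
  · have hk := key t s ht hs h
    have habs : |s - t| = s - t := abs_of_nonneg (by linarith)
    simp only [habs]
    rw [dist_comm]
    constructor
    · calc 1/3 * (s - t) - 0 = 1/3 * (s - t) := by ring
        _ ≤ _ := hk.1
    · calc dist _ _ ≤ s - t := hk.2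
        _ ≤ 3 * (s - t) + 0 := by linarith

/-- Feeding a two-piece concatenation to the Morse property. -/
lemma morse_of_concat {X : Type*} [MetricSpace X] {N : ℝ → ℝ → ℝ} {im : Set X}
    (hM : IsMorseWith N im) (β₁ β₂ : ℝ → X) (a₁ a₂ : ℝ)
    (ha₁ : 0 ≤ a₁) (ha₂ : 0 ≤ a₂)
    (h₁ : ∀ s ∈ Icc (0:ℝ) a₁, ∀ t ∈ Icc (0:ℝ) a₁, dist (β₁ s) (β₁ t) = |s - t|)
    (h₂ : ∀ s ∈ Icc (0:ℝ) a₂, ∀ t ∈ Icc (0:ℝ) a₂, dist (β₂ s) (β₂ t) = |s - t|)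
    (hj : β₁ a₁ = β₂ 0)
    (hlow : ∀ t ∈ Icc (0:ℝ) a₂, a₁ ≤ dist (β₁ 0) (β₂ t))
    (he0 : β₁ 0 ∈ im) (he1 : β₂ a₂ ∈ im) :
    ∀ t ∈ Icc (0:ℝ) a₁, Metric.infDist (β₁ t) im ≤ N 3 0 := by
  intro t htmem
  have hQ := quasi_of_concat β₁ β₂ a₁ a₂ ha₁ ha₂ h₁ h₂ hj hlow
  have hσ0 : (if (0:ℝ) ≤ a₁ then β₁ 0 else β₂ (0 - a₁)) = β₁ 0 := if_pos ha₁
  have hσend : (if a₁ + a₂ ≤ a₁ then β₁ (a₁ + a₂) else β₂ (a₁ + a₂ - a₁)) = β₂ a₂ := by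
    by_cases h : a₁ + a₂ ≤ a₁
    · have ha20 : a₂ = 0 := le_antisymm (by linarith) ha₂
      rw [if_pos h, ha20, add_zero, hj]
    · rw [if_neg h, add_sub_cancel_left]
  have hres := hM 3 0 (by norm_num) le_rfl 0 (a₁ + a₂) (by linarith) _ hQ
    (by simpa only [hσ0] using he0) (by simpa only [hσend] using he1)
    t ⟨htmem.1, by linarith [htmem.2]⟩
  simpa only [if_pos htmem.2] using hres

/-- Shadow lemma: a point `W` at distance exactly `s` from `x` which is `C`-close to the
image of a geodesic `g` from `x` is `2C`-close to `g s`. -/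
lemma shadow {X : Type*} [MetricSpace X] {g : ℝ → X} {x y W : X} {C s : ℝ}
    (hg : IsGeodesicSegment g x y) (hs : s ∈ Icc (0:ℝ) (dist x y))
    (hW : dist x W = s) (hinf : infDist W (g '' Icc 0 (dist x y)) ≤ C) :
    dist (g s) W ≤ 2 * C := by
  have hne : (g '' Icc 0 (dist x y)).Nonempty :=
    ⟨g 0, mem_image_of_mem _ ⟨le_rfl, dist_nonneg⟩⟩
  refine le_of_forall_pos_le_add fun ε hε => ?_
  have h2 : infDist W (g '' Icc 0 (dist x y)) < C + ε/2 := lt_of_le_of_lt hinf (by linarith)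
  obtain ⟨G, hG, hdG⟩ := (infDist_lt_iff hne).1 h2
  obtain ⟨τ, hτ, rfl⟩ := hG
  have hdx : dist x (g τ) = τ := by
    have h0 := hg.2.2 0 ⟨le_rfl, dist_nonneg⟩ τ hτ
    rw [hg.1] at h0
    rw [h0, abs_of_nonpos (by linarith [hτ.1])]; ring
  have habs : |s - τ| ≤ dist W (g τ) := by
    have h3 := abs_dist_sub_le W (g τ) x
    rw [dist_comm W x, dist_comm (g τ) x, hW, hdx] at h3
    exact h3
  have hgs : dist (g s) (g τ) = |s - τ| := hg.2.2 s hs τ hτ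
  calc dist (g s) W ≤ dist (g s) (g τ) + dist (g τ) W := dist_triangle _ _ _
    _ = |s - τ| + dist W (g τ) := by rw [hgs, dist_comm]
    _ ≤ dist W (g τ) + dist W (g τ) := by linarith
    _ ≤ (C + ε/2) + (C + ε/2) := by linarith
    _ = 2*C + ε := by ring

lemma key_side {X : Type*} [MetricSpace X] (hX : GeodesicSpace X) (N : ℝ → ℝ → ℝ)
    (hN : ∀ (x y : X) (γ : ℝ → X), IsGeodesicSegment γ x y →
      IsMorseWith N (γ '' Set.Icc 0 (dist x y)))
    (x y z : X) (g₁ g₂ g₃ : ℝ → X)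
    (h₁ : IsGeodesicSegment g₁ x y) (h₂ : IsGeodesicSegment g₂ y z)
    (h₃ : IsGeodesicSegment g₃ z x) :
    ∀ s ∈ Set.Icc (0:ℝ) (dist x y),
      infDist (g₁ s) (g₂ '' Set.Icc 0 (dist y z) ∪ g₃ '' Set.Icc 0 (dist z x)) ≤ 4 * N 3 0 := by
  intro s hs
  by_cases hcase : ∃ v ∈ Icc (0:ℝ) (dist y z), dist x (g₂ v) ≤ s
  · -- CASE A: some point of g₂ is at distance ≤ s from x
    set b := dist y z with hbdef
    set S : Set ℝ := {v | v ∈ Icc (0:ℝ) b ∧ dist x (g₂ v) ≤ s} with hSdef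
    obtain ⟨v₀, hv₀I, hv₀le⟩ := hcase
    have hSne : S.Nonempty := ⟨v₀, hv₀I, hv₀le⟩
    have hSbdd : BddBelow S := ⟨0, fun v hv => hv.1.1⟩
    set v' := sInf S with hv'def
    have hv'0 : 0 ≤ v' := le_csInf hSne fun v hv => hv.1.1
    have hv'b : v' ≤ b := le_trans (csInf_le hSbdd ⟨hv₀I, hv₀le⟩) hv₀I.2
    have hv'I : v' ∈ Icc (0:ℝ) b := ⟨hv'0, hv'b⟩
    -- ξ v' = s and ξ ≥ s before v'
    have hlip : ∀ u ∈ Icc (0:ℝ) b, ∀ w ∈ Icc (0:ℝ) b,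
        dist x (g₂ u) ≤ dist x (g₂ w) + |u - w| := by
      intro u hu w hw
      calc dist x (g₂ u) ≤ dist x (g₂ w) + dist (g₂ w) (g₂ u) := dist_triangle _ _ _
        _ = dist x (g₂ w) + |u - w| := by rw [h₂.2.2 w hw u hu, abs_sub_comm]
    have hge : ∀ w ∈ Icc (0:ℝ) v', s ≤ dist x (g₂ w) := by
      intro w hw
      rcases lt_or_eq_of_le hw.2 with hlt | heq
      · by_contra hcon
        push_neg at hcon
        have : w ∈ S := ⟨⟨hw.1, le_trans hw.2 hv'b⟩, hcon.le⟩
        exact absurd (csInf_le hSbdd this) (not_le.2 hlt)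
      · subst heq
        -- s ≤ ξ v' : for every ε > 0, s ≤ ξ v' + ε
        refine le_of_forall_pos_le_add fun ε hε => ?_
        rcases le_or_gt v' ε with hsmall | hbig
        · -- use ξ 0 = dist x y ≥ s
          have h0 : dist x (g₂ 0) = dist x y := by rw [h₂.1]
          have := hlip 0 ⟨le_rfl, dist_nonneg⟩ v' hv'I
          rw [h0] at this
          have habs : |0 - v'| = v' := by rw [abs_sub_comm, sub_zero, abs_of_nonneg hv'0]
          rw [habs] at this
          linarith [hs.2]
        · -- use a point just below v'
          have hwI : v' - ε ∈ Icc (0:ℝ) b := ⟨by linarith, by linarith⟩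
          have hnotS : v' - ε ∉ S := fun hmem =>
            absurd (csInf_le hSbdd hmem) (not_le.2 (by linarith))
          have hgt : s < dist x (g₂ (v' - ε)) := by
            by_contra hcon
            push_neg at hcon
            exact hnotS ⟨hwI, hcon⟩
          have := hlip (v' - ε) hwI v' hv'I
          have habs : |v' - ε - v'| = ε := by
            rw [show v' - ε - v' = -ε by ring, abs_neg, abs_of_nonneg hε.le]
          rw [habs] at this
          linarith
    have hle' : dist x (g₂ v') ≤ s := by
      refine le_of_forall_pos_le_add fun ε hε => ?_
      obtain ⟨v, hvS, hvlt⟩ := Real.lt_sInf_add_pos hSne hε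
      have hv'v : v' ≤ v := csInf_le hSbdd hvS
      have := hlip v' hv'I v hvS.1
      have habs : |v' - v| = v - v' := by rw [abs_sub_comm]; exact abs_of_nonneg (by linarith)
      rw [habs] at this
      have : dist x (g₂ v') ≤ dist x (g₂ v) + (v - v') := this
      have hvv : v - v' < ε := by rw [hv'def]; linarith [hvlt]
      linarith [hvS.2]
    have hq : dist x (g₂ v') = s := le_antisymm hle' (hge v' ⟨hv'0, le_rfl⟩)
    -- geodesic from x to q
    obtain ⟨α, hα0, hα1, hαiso⟩ := hX x (g₂ v')
    rw [hq] at hα1 hαiso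
    -- Morse for g₁ applied to α ⌢ (g₂ reversed from v')
    have hmorse := morse_of_concat (hN x y g₁ h₁) α (fun w => g₂ (v' - w)) s v'
      hs.1 hv'0 hαiso
      (by
        intro u hu w hw
        show dist (g₂ (v' - u)) (g₂ (v' - w)) = |u - w|
        rw [h₂.2.2 (v' - u) ⟨by linarith [hu.2], by linarith [hu.1]⟩
            (v' - w) ⟨by linarith [hw.2], by linarith [hw.1]⟩,
          show v' - u - (v' - w) = w - u by ring, abs_sub_comm])
      (by show α s = g₂ (v' - 0); rw [sub_zero]; exact hα1)
      (by
        intro t ht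
        show s ≤ dist (α 0) (g₂ (v' - t))
        rw [hα0]
        exact hge (v' - t) ⟨by linarith [ht.2], by linarith [ht.1]⟩)
      (by rw [hα0]; exact ⟨0, ⟨le_rfl, dist_nonneg⟩, h₁.1⟩)
      (by
        show g₂ (v' - v') ∈ _
        rw [sub_self, h₂.1]
        exact ⟨dist x y, ⟨dist_nonneg, le_rfl⟩, h₁.2.1⟩)
      s ⟨hs.1, le_rfl⟩
    rw [hα1] at hmorse
    have hC0 : 0 ≤ N 3 0 := le_trans infDist_nonneg hmorse
    have hsh : dist (g₁ s) (g₂ v') ≤ 2 * N 3 0 := shadow h₁ hs hq hmorse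
    have hmem : g₂ v' ∈ g₂ '' Icc 0 (dist y z) ∪ g₃ '' Icc 0 (dist z x) :=
      mem_union_left _ (mem_image_of_mem _ hv'I)
    calc infDist (g₁ s) (g₂ '' Icc 0 (dist y z) ∪ g₃ '' Icc 0 (dist z x))
        ≤ dist (g₁ s) (g₂ v') := infDist_le_dist_of_mem hmem
      _ ≤ 2 * N 3 0 := hsh
      _ ≤ 4 * N 3 0 := by linarith
  · -- CASE B: every point of g₂ is at distance > s from x
    push_neg at hcase
    set b := dist y z with hbdef
    -- minimizer of dist x (g₂ ·) on [0,b]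
    have hg₂lip : LipschitzOnWith 1 g₂ (Icc (0:ℝ) b) := by
      refine LipschitzOnWith.of_dist_le_mul fun u hu w hw => ?_
      rw [h₂.2.2 u hu w hw, Real.dist_eq]
      simp
    have hcont : ContinuousOn (fun v => dist x (g₂ v)) (Icc (0:ℝ) b) :=
      (continuous_const.dist continuous_id).comp_continuousOn hg₂lip.continuousOn
    obtain ⟨vm, hvmI, hminOn⟩ :=
      isCompact_Icc.exists_isMinOn (nonempty_Icc.2 dist_nonneg) hcont
    have hmin : ∀ v ∈ Icc (0:ℝ) b, dist x (g₂ vm) ≤ dist x (g₂ v) :=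
      fun v hv => isMinOn_iff.1 hminOn v hv
    have hsm : s ≤ dist x (g₂ vm) := (hcase vm hvmI).le
    obtain ⟨α, hα0, hα1, hαiso⟩ := hX x (g₂ vm)
    set m := dist x (g₂ vm) with hmdef
    -- Σ : α ⌢ (g₂ reversed from vm to y), endpoints x, y on g₁
    have hSig := morse_of_concat (hN x y g₁ h₁) α (fun w => g₂ (vm - w)) m vm
      dist_nonneg hvmI.1 hαiso
      (by
        intro u hu w hw
        show dist (g₂ (vm - u)) (g₂ (vm - w)) = |u - w|
        rw [h₂.2.2 (vm - u) ⟨by linarith [hu.2], by linarith [hu.1, hvmI.2]⟩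
            (vm - w) ⟨by linarith [hw.2], by linarith [hw.1, hvmI.2]⟩,
          show vm - u - (vm - w) = w - u by ring, abs_sub_comm])
      (by show α m = g₂ (vm - 0); rw [sub_zero]; exact hα1)
      (by
        intro t ht
        show m ≤ dist (α 0) (g₂ (vm - t))
        rw [hα0]
        exact hmin (vm - t) ⟨by linarith [ht.2], by linarith [ht.1, hvmI.2]⟩)
      (by rw [hα0]; exact ⟨0, ⟨le_rfl, dist_nonneg⟩, h₁.1⟩)
      (by
        show g₂ (vm - vm) ∈ _
        rw [sub_self, h₂.1]
        exact ⟨dist x y, ⟨dist_nonneg, le_rfl⟩, h₁.2.1⟩)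
      s ⟨hs.1, hsm⟩
    -- Ψ : α ⌢ (g₂ forward from vm to z), endpoints x, z on g₃
    have hPsi := morse_of_concat (hN z x g₃ h₃) α (fun w => g₂ (vm + w)) m (b - vm)
      dist_nonneg (by linarith [hvmI.2]) hαiso
      (by
        intro u hu w hw
        show dist (g₂ (vm + u)) (g₂ (vm + w)) = |u - w|
        rw [h₂.2.2 (vm + u) ⟨by linarith [hu.1, hvmI.1], by linarith [hu.2]⟩
            (vm + w) ⟨by linarith [hw.1, hvmI.1], by linarith [hw.2]⟩,
          show vm + u - (vm + w) = u - w by ring])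
      (by show α m = g₂ (vm + 0); rw [add_zero]; exact hα1)
      (by
        intro t ht
        show m ≤ dist (α 0) (g₂ (vm + t))
        rw [hα0]
        exact hmin (vm + t) ⟨by linarith [ht.1, hvmI.1], by linarith [ht.2]⟩)
      (by rw [hα0]; exact ⟨dist z x, ⟨dist_nonneg, le_rfl⟩, h₃.2.1⟩)
      (by
        show g₂ (vm + (b - vm)) ∈ _
        rw [show vm + (b - vm) = b by ring, hbdef, h₂.2.1]
        exact ⟨0, ⟨le_rfl, dist_nonneg⟩, h₃.1⟩)
      s ⟨hs.1, hsm⟩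
    have hC0 : 0 ≤ N 3 0 := le_trans infDist_nonneg hSig
    -- shadow: g₁ s is close to α s
    have hxA : dist x (α s) = s := by
      have h0 := hαiso 0 ⟨le_rfl, dist_nonneg⟩ s ⟨hs.1, hsm⟩
      rw [hα0] at h0
      rw [h0, abs_of_nonpos (by linarith [hs.1])]; ring
    have hsh : dist (g₁ s) (α s) ≤ 2 * N 3 0 := shadow h₁ hs hxA hSig
    -- conclude
    refine le_of_forall_pos_le_add fun ε hε => ?_
    have hne₃ : (g₃ '' Icc 0 (dist z x)).Nonempty :=
      ⟨g₃ 0, mem_image_of_mem _ ⟨le_rfl, dist_nonneg⟩⟩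
    have hlt : infDist (α s) (g₃ '' Icc 0 (dist z x)) < N 3 0 + ε :=
      lt_of_le_of_lt hPsi (by linarith)
    obtain ⟨w₃, hw₃, hdw₃⟩ := (infDist_lt_iff hne₃).1 hlt
    calc infDist (g₁ s) (g₂ '' Icc 0 (dist y z) ∪ g₃ '' Icc 0 (dist z x))
        ≤ dist (g₁ s) w₃ := infDist_le_dist_of_mem (mem_union_right _ hw₃)
      _ ≤ dist (g₁ s) (α s) + dist (α s) w₃ := dist_triangle _ _ _
      _ ≤ 2 * N 3 0 + (N 3 0 + ε) := by linarith
      _ ≤ 4 * N 3 0 + ε := by linarith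

/-- If `X` is a geodesic metric space in which every geodesic segment is `N`-Morse for a fixed
Morse gauge `N`, then `X` is hyperbolic: every geodesic triangle is `4·N(3,0)`-slim. -/
theorem hyperbolic_of_all_geodesics_morse {X : Type*} [MetricSpace X]
    (hX : GeodesicSpace X) (N : ℝ → ℝ → ℝ)
    (hN : ∀ (x y : X) (γ : ℝ → X), IsGeodesicSegment γ x y → IsMorseSegment N γ x y) :
    ∀ (x y z : X) (γ₁ γ₂ γ₃ : ℝ → X),
      IsGeodesicSegment γ₁ x y → IsGeodesicSegment γ₂ y z → IsGeodesicSegment γ₃ z x →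
      TriangleIsSlim (4 * N 3 0) x y z γ₁ γ₂ γ₃ := by
  intro x y z γ₁ γ₂ γ₃ h₁ h₂ h₃
  have hN' : ∀ (x y : X) (γ : ℝ → X), IsGeodesicSegment γ x y →
      IsMorseWith N (γ '' Set.Icc 0 (dist x y)) := fun x y γ h => (hN x y γ h).2
  refine ⟨key_side hX N hN' x y z γ₁ γ₂ γ₃ h₁ h₂ h₃, ?_, ?_⟩
  · intro s hs
    have := key_side hX N hN' y z x γ₂ γ₃ γ₁ h₂ h₃ h₁ s hs
    rwa [Set.union_comm] at this
  · exact key_side hX N hN' z x y γ₃ γ₁ γ₂ h₃ h₁ h₂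
end

section
/- Let X be a geodesic metric space, e ∈ X, N a Morse gauge, and x, y ∈ X points such that the geodesics [e,x] and [e,y] are N-Morse. Then any geodesic triangle with vertices e, x, y is 4·N(3,0)-slim. -/
open Metric Set

namespace SlimTriAux

variable {X : Type*} [MetricSpace X]

/-- Concatenation of two paths, switching at parameter `B`. -/
noncomputable def pconcat (B : ℝ) (η β : ℝ → X) (r : ℝ) : X :=
  if r ≤ B then η r else β (r - B)

lemma pconcat_of_le {B : ℝ} {η β : ℝ → X} {r : ℝ} (h : r ≤ B) :
    pconcat B η β r = η r := if_pos h

lemma pconcat_of_ge {B : ℝ} {η β : ℝ → X} (hηβ : η B = β 0) {r : ℝ} (h : B ≤ r) :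
    pconcat B η β r = β (r - B) := by
  by_cases h' : r ≤ B
  · have hrB : r = B := le_antisymm h' h
    subst hrB
    rw [pconcat, if_pos le_rfl, hηβ, sub_self]
  · rw [pconcat, if_neg h']

lemma concat_bounds (e p : X) (η β : ℝ → X) (B C : ℝ) (hB : 0 ≤ B) (hC : 0 ≤ C)
    (hη0 : η 0 = e) (hηB : η B = p)
    (hηiso : ∀ s ∈ Icc 0 B, ∀ t ∈ Icc 0 B, dist (η s) (η t) = |s - t|)
    (hβ0 : β 0 = p)
    (hβiso : ∀ u ∈ Icc 0 C, ∀ v ∈ Icc 0 C, dist (β u) (β v) = |u - v|)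
    (hmin : ∀ u ∈ Icc 0 C, B ≤ dist e (β u)) :
    ∀ s ∈ Icc 0 (B + C), ∀ t ∈ Icc 0 (B + C),
      |s - t| ≤ 3 * dist (pconcat B η β s) (pconcat B η β t) ∧
      dist (pconcat B η β s) (pconcat B η β t) ≤ |s - t| := by
  have hηβ : η B = β 0 := by rw [hηB, hβ0]
  have key : ∀ s ∈ Icc 0 (B + C), ∀ t ∈ Icc 0 (B + C), s ≤ t →
      |s - t| ≤ 3 * dist (pconcat B η β s) (pconcat B η β t) ∧
      dist (pconcat B η β s) (pconcat B η β t) ≤ |s - t| := by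
    intro s hs t ht hst
    have habs : |s - t| = t - s := by rw [abs_sub_comm, abs_of_nonneg (by linarith)]
    by_cases hsB : s ≤ B
    · by_cases htB : t ≤ B
      · rw [pconcat_of_le hsB, pconcat_of_le htB,
          hηiso s ⟨hs.1, hsB⟩ t ⟨ht.1, htB⟩]
        constructor <;> linarith [abs_nonneg (s - t)]
      · have htB' : B ≤ t := le_of_not_ge htB
        rw [pconcat_of_le hsB, pconcat_of_ge hηβ htB']
        set u := t - B with hu_def
        have hu : u ∈ Icc 0 C := ⟨by simp [hu_def]; linarith, by simp [hu_def]; linarith [ht.2]⟩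
        have hes : dist e (η s) = s := by
          rw [← hη0, hηiso 0 ⟨le_rfl, hB⟩ s ⟨hs.1, hsB⟩, zero_sub, abs_neg,
            abs_of_nonneg hs.1]
        have hps : dist p (η s) = B - s := by
          rw [← hηB, hηiso B ⟨hB, le_rfl⟩ s ⟨hs.1, hsB⟩, abs_of_nonneg (by linarith)]
        have hpu : dist p (β u) = u := by
          rw [← hβ0, hβiso 0 ⟨le_rfl, hC⟩ u hu, zero_sub, abs_neg, abs_of_nonneg hu.1]
        have hm : B ≤ dist e (β u) := hmin u hu
        have tri1 : dist e (β u) ≤ dist e (η s) + dist (η s) (β u) := dist_triangle _ _ _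
        have tri2 : dist p (β u) ≤ dist p (η s) + dist (η s) (β u) := dist_triangle _ _ _
        have tri3 : dist (η s) (β u) ≤ dist (η s) p + dist p (β u) := dist_triangle _ _ _
        have hsp : dist (η s) p = B - s := by rw [dist_comm]; exact hps
        have huts : u = t - B := rfl
        constructor <;> [skip; skip] <;>
          · rw [habs] <;> try skip
            linarith
    · have hsB' : B ≤ s := le_of_not_ge hsB
      have htB' : B ≤ t := le_trans hsB' hst
      rw [pconcat_of_ge hηβ hsB', pconcat_of_ge hηβ htB',
        hβiso (s - B) ⟨by linarith, by linarith [hs.2]⟩ (t - B) ⟨by linarith, by linarith [ht.2]⟩]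
      have : s - B - (t - B) = s - t := by ring
      rw [this]
      constructor <;> linarith [abs_nonneg (s - t)]
  intro s hs t ht
  rcases le_total s t with h | h
  · exact key s hs t ht h
  · obtain ⟨h1, h2⟩ := key t ht s hs h
    rw [dist_comm] at h1 h2
    rw [abs_sub_comm] at h1 h2
    exact ⟨h1, h2⟩

lemma transfer (e : X) (σ g : ℝ → X) (L D N₀ : ℝ)
    (hL : 0 ≤ L) (hD : 0 ≤ D) (hN₀ : 0 ≤ N₀)
    (hσ0 : σ 0 = e)
    (hσlip : ∀ s ∈ Icc 0 L, ∀ t ∈ Icc 0 L, dist (σ s) (σ t) ≤ |s - t|)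
    (hend : dist e (σ L) = D)
    (hg0 : g 0 = e)
    (hgiso : ∀ s ∈ Icc 0 D, ∀ t ∈ Icc 0 D, dist (g s) (g t) = |s - t|)
    (hnear : ∀ t ∈ Icc 0 L, infDist (σ t) (g '' Icc 0 D) ≤ N₀)
    (U : Set X)
    (hnearU : ∀ t ∈ Icc 0 L, infDist (σ t) U ≤ N₀) :
    ∀ s ∈ Icc 0 D, infDist (g s) U ≤ 3 * N₀ := by
  intro s hsIcc
  -- continuity of t ↦ dist e (σ t) on [0, L]
  have hcont : ContinuousOn (fun t => dist e (σ t)) (Icc 0 L) := by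
    apply LipschitzOnWith.continuousOn (K := 1)
    apply LipschitzOnWith.of_dist_le_mul
    intro a ha b hb
    simp only [NNReal.coe_one, one_mul, Real.dist_eq]
    have h1 : |dist e (σ a) - dist e (σ b)| ≤ dist (σ a) (σ b) := by
      have := abs_dist_sub_le (σ a) (σ b) e
      rw [dist_comm (σ a) e, dist_comm (σ b) e] at this
      exact this
    exact le_trans h1 (hσlip a ha b hb)
  -- intermediate value: find t with dist e (σ t) = s
  have hmem : s ∈ Icc (dist e (σ 0)) (dist e (σ L)) := by
    rw [hσ0, dist_self, hend]; exact hsIcc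
  obtain ⟨t, htIcc, ht0⟩ := intermediate_value_Icc hL hcont hmem
  have ht : dist e (σ t) = s := ht0
  -- compactness of the geodesic image
  have hgcont : ContinuousOn g (Icc 0 D) := by
    apply LipschitzOnWith.continuousOn (K := 1)
    apply LipschitzOnWith.of_dist_le_mul
    intro a ha b hb
    simp only [NNReal.coe_one, one_mul, Real.dist_eq]
    exact le_of_eq (hgiso a ha b hb)
  have hK : IsCompact (g '' Icc 0 D) := (isCompact_Icc).image_of_continuousOn hgcont
  have hKne : (g '' Icc 0 D).Nonempty := ⟨g 0, mem_image_of_mem g ⟨le_rfl, hD⟩⟩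
  obtain ⟨q, hqK, hq⟩ := hK.exists_infDist_eq_dist hKne (σ t)
  obtain ⟨u, huIcc, huq⟩ := hqK
  have hdq : dist (σ t) q ≤ N₀ := hq ▸ hnear t htIcc
  -- dist e q = u
  have heq : dist e q = u := by
    rw [← hg0, ← huq, hgiso 0 ⟨le_rfl, hD⟩ u huIcc, zero_sub, abs_neg, abs_of_nonneg huIcc.1]
  have hsu : |s - u| ≤ N₀ := by
    have h1 : |dist (σ t) e - dist q e| ≤ dist (σ t) q := abs_dist_sub_le _ _ _
    rw [dist_comm (σ t) e, ht, dist_comm q e, heq] at h1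
    exact le_trans h1 hdq
  have hgs : dist (g s) q ≤ N₀ := by
    rw [← huq, hgiso s hsIcc u huIcc]
    exact hsu
  calc infDist (g s) U ≤ infDist (σ t) U + dist (g s) (σ t) := infDist_le_infDist_add_dist
    _ ≤ N₀ + (dist (g s) q + dist q (σ t)) := by
        gcongr
        · exact hnearU t htIcc
        · exact dist_triangle _ _ _
    _ ≤ N₀ + (N₀ + N₀) := by
        rw [dist_comm q (σ t)]
        gcongr
    _ = 3 * N₀ := by ring

end SlimTriAux

/-- If geodesics `[e,x]` and `[e,y]` are `N`-Morse, then any geodesic triangle with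
vertices `e, x, y` is `4·N(3,0)`-slim.  Here the triangle has sides `γ₁ : e→x`,
`γ₂ : x→y`, `γ₃ : y→e`, where `γ₁` and (the reverse of) `γ₃` are `N`-Morse geodesics. -/
theorem slim_triangle_of_two_morse_sides {X : Type*} [MetricSpace X]
    (hX : GeodesicSpace X) (N : ℝ → ℝ → ℝ) (e x y : X) (γ₁ γ₂ γ₃ : ℝ → X)
    (h₁ : IsMorseSegment N γ₁ e x)
    (h₂ : IsGeodesicSegment γ₂ x y)
    (h₃ : IsGeodesicSegment γ₃ y e)
    (h₃M : IsMorseWith N (γ₃ '' Set.Icc 0 (dist y e))) :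
    TriangleIsSlim (4 * N 3 0) e x y γ₁ γ₂ γ₃ := by
  classical
  obtain ⟨⟨hγ₁0, hγ₁e, hγ₁iso⟩, h₁M⟩ := h₁
  obtain ⟨hγ₂0, hγ₂e, hγ₂iso⟩ := h₂
  obtain ⟨hγ₃0, hγ₃e, hγ₃iso⟩ := h₃
  set dex := dist e x with hdex
  set dxy := dist x y with hdxy
  set dye := dist y e with hdye
  have hdex0 : 0 ≤ dex := dist_nonneg
  have hdxy0 : 0 ≤ dxy := dist_nonneg
  have hdye0 : 0 ≤ dye := dist_nonneg
  -- continuity of γ₂ distance function, nearest point to e on γ₂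
  have hcont2 : ContinuousOn (fun t => dist e (γ₂ t)) (Icc 0 dxy) := by
    apply LipschitzOnWith.continuousOn (K := 1)
    apply LipschitzOnWith.of_dist_le_mul
    intro a ha b hb
    simp only [NNReal.coe_one, one_mul, Real.dist_eq]
    have h1 : |dist e (γ₂ a) - dist e (γ₂ b)| ≤ dist (γ₂ a) (γ₂ b) := by
      have := abs_dist_sub_le (γ₂ a) (γ₂ b) e
      rw [dist_comm (γ₂ a) e, dist_comm (γ₂ b) e] at this
      exact this
    exact le_trans h1 (le_of_eq (hγ₂iso a ha b hb))
  obtain ⟨t₀, ht₀, hmin'⟩ := isCompact_Icc.exists_isMinOn ⟨0, ⟨le_rfl, hdxy0⟩⟩ hcont2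
  have hmin : ∀ u ∈ Icc (0:ℝ) dxy, dist e (γ₂ t₀) ≤ dist e (γ₂ u) := fun u hu => hmin' hu
  set p := γ₂ t₀ with hp
  obtain ⟨η, hη0, hηB, hηiso⟩ := hX e p
  set B := dist e p with hB
  have hB0 : 0 ≤ B := dist_nonneg
  -- the two quasi-geodesic concatenations
  set βx : ℝ → X := fun u => γ₂ (t₀ - u) with hβx
  set βy : ℝ → X := fun u => γ₂ (t₀ + u) with hβy
  set Cx := t₀ with hCx
  set Cy := dxy - t₀ with hCy
  have hCx0 : 0 ≤ Cx := ht₀.1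
  have hCy0 : 0 ≤ Cy := by simp only [hCy, sub_nonneg]; exact ht₀.2
  have hβx0 : βx 0 = p := by simp [hβx, hp]
  have hβy0 : βy 0 = p := by simp [hβy, hp]
  have hmemx : ∀ u ∈ Icc (0:ℝ) Cx, t₀ - u ∈ Icc (0:ℝ) dxy := by
    intro u hu
    exact ⟨by linarith [hu.2], by linarith [hu.1, ht₀.2]⟩
  have hmemy : ∀ u ∈ Icc (0:ℝ) Cy, t₀ + u ∈ Icc (0:ℝ) dxy := by
    intro u hu
    exact ⟨by linarith [hu.1, ht₀.1], by simp only [hCy] at hu; linarith [hu.2]⟩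
  have hβxiso : ∀ u ∈ Icc (0:ℝ) Cx, ∀ v ∈ Icc (0:ℝ) Cx, dist (βx u) (βx v) = |u - v| := by
    intro u hu v hv
    rw [hγ₂iso _ (hmemx u hu) _ (hmemx v hv)]
    rw [show t₀ - u - (t₀ - v) = -(u - v) by ring, abs_neg]
  have hβyiso : ∀ u ∈ Icc (0:ℝ) Cy, ∀ v ∈ Icc (0:ℝ) Cy, dist (βy u) (βy v) = |u - v| := by
    intro u hu v hv
    rw [hγ₂iso _ (hmemy u hu) _ (hmemy v hv)]
    rw [show t₀ + u - (t₀ + v) = u - v by ring]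
  have hminx : ∀ u ∈ Icc (0:ℝ) Cx, B ≤ dist e (βx u) := fun u hu => hmin _ (hmemx u hu)
  have hminy : ∀ u ∈ Icc (0:ℝ) Cy, B ≤ dist e (βy u) := fun u hu => hmin _ (hmemy u hu)
  have hηβx : η B = βx 0 := by rw [hηB, hβx0]
  have hηβy : η B = βy 0 := by rw [hηB, hβy0]
  set σx := SlimTriAux.pconcat B η βx with hσx
  set σy := SlimTriAux.pconcat B η βy with hσy
  have hbx := SlimTriAux.concat_bounds e p η βx B Cx hB0 hCx0 hη0 hηB hηiso hβx0 hβxiso hminx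
  have hby := SlimTriAux.concat_bounds e p η βy B Cy hB0 hCy0 hη0 hηB hηiso hβy0 hβyiso hminy
  have hQGx : IsQuasiGeodesicOn 3 0 0 (B + Cx) σx := by
    intro s hs t ht
    obtain ⟨h1, h2⟩ := hbx s hs t ht
    constructor <;> [linarith; linarith [abs_nonneg (s - t)]]
  have hQGy : IsQuasiGeodesicOn 3 0 0 (B + Cy) σy := by
    intro s hs t ht
    obtain ⟨h1, h2⟩ := hby s hs t ht
    constructor <;> [linarith; linarith [abs_nonneg (s - t)]]
  -- endpoint values
  have hσx0 : σx 0 = e := by rw [hσx, SlimTriAux.pconcat_of_le hB0, hη0]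
  have hσy0 : σy 0 = e := by rw [hσy, SlimTriAux.pconcat_of_le hB0, hη0]
  have hσxEnd : σx (B + Cx) = x := by
    rw [hσx, SlimTriAux.pconcat_of_ge hηβx (by linarith), add_sub_cancel_left]
    simp only [hβx, hCx, sub_self]
    exact hγ₂0
  have hσyEnd : σy (B + Cy) = y := by
    rw [hσy, SlimTriAux.pconcat_of_ge hηβy (by linarith), add_sub_cancel_left]
    simp only [hβy, hCy]
    rw [show t₀ + (dxy - t₀) = dxy by ring]
    exact hγ₂e
  have hσxfirst : ∀ t, t ≤ B → σx t = η t := fun t h => SlimTriAux.pconcat_of_le h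
  have hσyfirst : ∀ t, t ≤ B → σy t = η t := fun t h => SlimTriAux.pconcat_of_le h
  -- Morse applications
  have Mx : ∀ t ∈ Icc (0:ℝ) (B + Cx), infDist (σx t) (γ₁ '' Icc 0 dex) ≤ N 3 0 := by
    apply h₁M 3 0 (by norm_num) le_rfl 0 (B + Cx) (by linarith) σx hQGx
    · rw [hσx0, ← hγ₁0]
      exact mem_image_of_mem γ₁ ⟨le_rfl, hdex0⟩
    · rw [hσxEnd, ← hγ₁e]
      exact mem_image_of_mem γ₁ ⟨hdex0, le_rfl⟩
  have My : ∀ t ∈ Icc (0:ℝ) (B + Cy), infDist (σy t) (γ₃ '' Icc 0 dye) ≤ N 3 0 := by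
    apply h₃M 3 0 (by norm_num) le_rfl 0 (B + Cy) (by linarith) σy hQGy
    · rw [hσy0, ← hγ₃e]
      exact mem_image_of_mem γ₃ ⟨hdye0, le_rfl⟩
    · rw [hσyEnd, ← hγ₃0]
      exact mem_image_of_mem γ₃ ⟨le_rfl, hdye0⟩
  have hN0 : 0 ≤ N 3 0 :=
    le_trans infDist_nonneg (Mx 0 ⟨le_rfl, by linarith⟩)
  -- nonemptiness of images
  have h1ne : (γ₁ '' Icc 0 dex).Nonempty := ⟨γ₁ 0, mem_image_of_mem γ₁ ⟨le_rfl, hdex0⟩⟩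
  have h2ne : (γ₂ '' Icc 0 dxy).Nonempty := ⟨γ₂ 0, mem_image_of_mem γ₂ ⟨le_rfl, hdxy0⟩⟩
  have h3ne : (γ₃ '' Icc 0 dye).Nonempty := ⟨γ₃ 0, mem_image_of_mem γ₃ ⟨le_rfl, hdye0⟩⟩
  -- each point of σx is near γ₂ ∪ γ₃  (first part near γ₃ via My, second part on γ₂)
  have hσxU : ∀ t ∈ Icc (0:ℝ) (B + Cx),
      infDist (σx t) (γ₂ '' Icc 0 dxy ∪ γ₃ '' Icc 0 dye) ≤ N 3 0 := by
    intro t htI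
    by_cases htB : t ≤ B
    · have : σx t = σy t := by rw [hσxfirst t htB, hσyfirst t htB]
      rw [this]
      refine le_trans (infDist_le_infDist_of_subset subset_union_right h3ne) ?_
      exact My t ⟨htI.1, by linarith⟩
    · have htB' : B ≤ t := le_of_not_ge htB
      have hmem : σx t ∈ γ₂ '' Icc 0 dxy := by
        rw [hσx, SlimTriAux.pconcat_of_ge hηβx htB']
        exact mem_image_of_mem γ₂ (hmemx (t - B) ⟨by linarith, by linarith [htI.2]⟩)
      have : infDist (σx t) (γ₂ '' Icc 0 dxy ∪ γ₃ '' Icc 0 dye) ≤ dist (σx t) (σx t) :=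
        infDist_le_dist_of_mem (mem_union_left _ hmem)
      rw [dist_self] at this
      exact le_trans this hN0
  -- each point of σy is near γ₁ ∪ γ₂
  have hσyU : ∀ t ∈ Icc (0:ℝ) (B + Cy),
      infDist (σy t) (γ₁ '' Icc 0 dex ∪ γ₂ '' Icc 0 dxy) ≤ N 3 0 := by
    intro t htI
    by_cases htB : t ≤ B
    · have : σy t = σx t := by rw [hσxfirst t htB, hσyfirst t htB]
      rw [this]
      refine le_trans (infDist_le_infDist_of_subset subset_union_left h1ne) ?_
      exact Mx t ⟨htI.1, by linarith⟩
    · have htB' : B ≤ t := le_of_not_ge htB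
      have hmem : σy t ∈ γ₂ '' Icc 0 dxy := by
        rw [hσy, SlimTriAux.pconcat_of_ge hηβy htB']
        exact mem_image_of_mem γ₂ (hmemy (t - B) ⟨by linarith, by linarith [htI.2]⟩)
      have : infDist (σy t) (γ₁ '' Icc 0 dex ∪ γ₂ '' Icc 0 dxy) ≤ dist (σy t) (σy t) :=
        infDist_le_dist_of_mem (mem_union_right _ hmem)
      rw [dist_self] at this
      exact le_trans this hN0
  refine ⟨?_, ?_, ?_⟩
  · -- side γ₁
    intro s hs
    have := SlimTriAux.transfer e σx γ₁ (B + Cx) dex (N 3 0) (by linarith) hdex0 hN0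
      hσx0 (fun a ha b hb => (hbx a ha b hb).2)
      (by rw [hσxEnd]) hγ₁0 hγ₁iso Mx _ hσxU s hs
    linarith
  · -- side γ₂
    intro s hs
    rcases le_total s t₀ with hst | hst
    · have hval : γ₂ s = σx (B + (t₀ - s)) := by
        rw [hσx, SlimTriAux.pconcat_of_ge hηβx (by linarith), add_sub_cancel_left]
        simp only [hβx, hCx, sub_sub_cancel]
      have hm : B + (t₀ - s) ∈ Icc (0:ℝ) (B + Cx) := ⟨by linarith [hs.1], by simp only [hCx]; linarith [hs.1]⟩
      have h1 := Mx _ hm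
      rw [← hval] at h1
      refine le_trans (le_trans (infDist_le_infDist_of_subset subset_union_left h1ne) h1) ?_
      linarith
    · have hval : γ₂ s = σy (B + (s - t₀)) := by
        rw [hσy, SlimTriAux.pconcat_of_ge hηβy (by linarith), add_sub_cancel_left]
        simp only [hβy, hCx, add_sub_cancel]
      have hm : B + (s - t₀) ∈ Icc (0:ℝ) (B + Cy) := ⟨by linarith, by simp only [hCy]; linarith [hs.2]⟩
      have h1 := My _ hm
      rw [← hval] at h1
      refine le_trans (le_trans (infDist_le_infDist_of_subset subset_union_right h3ne) h1) ?_
      linarith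
  · -- side γ₃, via the reversed parametrization
    intro s hs
    set g : ℝ → X := fun r => γ₃ (dye - r) with hg
    have hgim : g '' Icc 0 dye = γ₃ '' Icc 0 dye := by
      rw [hg, show (fun r => γ₃ (dye - r)) = γ₃ ∘ (fun r => dye - r) from rfl, image_comp,
        Set.image_const_sub_Icc, sub_zero, sub_self]
    have hgiso : ∀ a ∈ Icc (0:ℝ) dye, ∀ b ∈ Icc (0:ℝ) dye, dist (g a) (g b) = |a - b| := by
      intro a ha b hb
      rw [hg]
      simp only
      rw [hγ₃iso (dye - a) ⟨by linarith [ha.2], by linarith [ha.1]⟩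
        (dye - b) ⟨by linarith [hb.2], by linarith [hb.1]⟩]
      rw [show dye - a - (dye - b) = -(a - b) by ring, abs_neg]
    have hg0 : g 0 = e := by rw [hg]; simp only [sub_zero]; exact hγ₃e
    have hMy' : ∀ t ∈ Icc (0:ℝ) (B + Cy), infDist (σy t) (g '' Icc 0 dye) ≤ N 3 0 := by
      intro t htI; rw [hgim]; exact My t htI
    have key := SlimTriAux.transfer e σy g (B + Cy) dye (N 3 0) (by linarith) hdye0 hN0
      hσy0 (fun a ha b hb => (hby a ha b hb).2)
      (by rw [hσyEnd, dist_comm, hdye]) hg0 hgiso hMy' _ hσyU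
      (dye - s) ⟨by linarith [hs.2], by linarith [hs.1]⟩
    have : g (dye - s) = γ₃ s := by rw [hg]; simp only [sub_sub_cancel]
    rw [this] at key
    linarith
end

section
/- Let X be a proper geodesic metric space and let γ : [0,∞) → X be a D-contracting geodesic ray. Then γ is N-Morse for a Morse gauge N depending only on D. (Contracting implies Morse.) -/
open Metric Set

/-- The set of closest-point projections of `x` to the set `im`. -/
def projSet {X : Type*} [MetricSpace X] (im : Set X) (x : X) : Set X :=
  {p ∈ im | dist x p = Metric.infDist x im}

/-- `im` (the image of a geodesic) is `D`-contracting: if `d(x,y) < d(x, π(x))` then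
`diam (π(x) ∪ π(y)) < D`, where `π` is closest point projection to `im`. -/
def IsContractingSet {X : Type*} [MetricSpace X] (D : ℝ) (im : Set X) : Prop :=
  ∀ x y : X, dist x y < Metric.infDist x im →
    Metric.diam (projSet im x ∪ projSet im y) < D

/-- The image of a geodesic ray is a closed set. -/
theorem ray_image_closed {X : Type*} [MetricSpace X] {γ : ℝ → X} (hray : IsGeodesicRay γ) :
    IsClosed (γ '' Set.Ici 0) := by
  refine isClosed_of_closure_subset ?_
  intro q hq
  rcases mem_closure_iff_seq_limit.1 hq with ⟨x, hmem, hlim⟩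
  choose f hf0 hfeq using hmem
  have hcx : CauchySeq x := hlim.cauchySeq
  have hdist : ∀ m n, dist (f m) (f n) = dist (x m) (x n) := by
    intro m n
    rw [← hfeq m, ← hfeq n, hray _ (hf0 m) _ (hf0 n), Real.dist_eq]
  have hcf : CauchySeq f := by
    rw [Metric.cauchySeq_iff]
    intro ε hε
    rcases Metric.cauchySeq_iff.1 hcx ε hε with ⟨M, hM⟩
    exact ⟨M, fun m hm n hn => by rw [hdist]; exact hM m hm n hn⟩
  obtain ⟨L, hL⟩ := cauchySeq_tendsto_of_complete hcf
  have hL0 : (0:ℝ) ≤ L := ge_of_tendsto' hL fun n => hf0 n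
  have hγ : Filter.Tendsto (fun n => γ (f n)) Filter.atTop (nhds (γ L)) := by
    rw [tendsto_iff_dist_tendsto_zero]
    have heq : (fun n => dist (γ (f n)) (γ L)) = fun n => dist (f n) L := by
      funext n; rw [hray _ (hf0 n) _ hL0, Real.dist_eq]
    rw [heq]
    exact tendsto_iff_dist_tendsto_zero.1 hL
  have hγ' : Filter.Tendsto x Filter.atTop (nhds (γ L)) := by
    have hfun : (fun n => γ (f n)) = x := funext hfeq
    rwa [hfun] at hγ
  exact ⟨L, hL0, (tendsto_nhds_unique hlim hγ').symm⟩

set_option maxHeartbeats 1000000 in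
/-- Contracting implies Morse: in a proper geodesic space, a `D`-contracting geodesic ray is
`N`-Morse for a Morse gauge `N` depending only on `D`. -/
theorem morse_of_contracting (D : ℝ) :
    ∃ N : ℝ → ℝ → ℝ, ∀ (X : Type) [MetricSpace X],
      ProperSpace X → GeodesicSpace X →
      ∀ γ : ℝ → X, IsGeodesicRay γ → IsContractingSet D (γ '' Set.Ici 0) →
        IsMorseRay N γ := by
  set E := max D 1 with hEdef
  have hE1 : (1:ℝ) ≤ E := le_max_right D 1
  have hDE : D ≤ E := le_max_left D 1
  refine ⟨fun lam eps => (4*E*lam^2 + eps + 1) + 2*eps +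
      lam * (2*lam*(4*lam*(2*E*lam + 1) + 7*eps + 2*(4*E*lam^2 + eps + 1))), ?_⟩
  intro X _inst hProp hGeo γ hray hcon
  refine ⟨hray, ?_⟩
  intro lam eps hlam heps a b hab σ hq hσa hσb t ht
  have hlam0 : (0:ℝ) < lam := lt_of_lt_of_le one_pos hlam
  show Metric.infDist (σ t) (γ '' Set.Ici 0) ≤ (4*E*lam^2 + eps + 1) + 2*eps +
      lam * (2*lam*(4*lam*(2*E*lam + 1) + 7*eps + 2*(4*E*lam^2 + eps + 1)))
  set im := γ '' Set.Ici 0 with him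
  have him_ne : im.Nonempty := ⟨γ 0, ⟨0, Set.self_mem_Ici, rfl⟩⟩
  have him_cl : IsClosed im := ray_image_closed hray
  have hproj : ∀ x : X, ∃ p ∈ im, Metric.infDist x im = dist x p :=
    fun x => him_cl.exists_infDist_eq_dist him_ne x
  have hstep : ∀ x y px py : X, px ∈ im → dist x px = Metric.infDist x im →
      py ∈ im → dist y py = Metric.infDist y im →
      dist x y < Metric.infDist x im → dist px py ≤ E := by
    intro x y px py hpx hdx hpy hdy hxy
    have hd := hcon x y hxy
    have hsub : projSet im x ∪ projSet im y ⊆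
        Metric.closedBall x (Metric.infDist x im) ∪
          Metric.closedBall y (Metric.infDist y im) := by
      intro z hz
      rcases hz with hz | hz
      · exact Or.inl (by rw [Metric.mem_closedBall, dist_comm]; exact hz.2.le)
      · exact Or.inr (by rw [Metric.mem_closedBall, dist_comm]; exact hz.2.le)
    have hbd : Bornology.IsBounded (projSet im x ∪ projSet im y) :=
      (Metric.isBounded_closedBall.union Metric.isBounded_closedBall).subset hsub
    have h1 : px ∈ projSet im x ∪ projSet im y := Or.inl ⟨hpx, hdx⟩
    have h2 : py ∈ projSet im x ∪ projSet im y := Or.inr ⟨hpy, hdy⟩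
    calc dist px py ≤ Metric.diam (projSet im x ∪ projSet im y) :=
          Metric.dist_le_diam_of_mem hbd h1 h2
      _ ≤ E := le_trans hd.le hDE
  set R := 4*E*lam^2 + eps + 1 with hRdef
  set δ := 2*E*lam + 1 with hδdef
  have hk1 : (0:ℝ) ≤ (lam - 1) * lam := mul_nonneg (by linarith only [hlam]) hlam0.le
  have hk2 : (0:ℝ) ≤ (E - 1) * lam^2 := mul_nonneg (by linarith only [hE1]) (sq_nonneg lam)
  have hEll : (0:ℝ) ≤ E * lam^2 := mul_nonneg (by linarith only [hE1]) (sq_nonneg lam)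
  have hδpos : (0:ℝ) < δ := by
    rw [hδdef]
    have h1 : (0:ℝ) ≤ E * lam := mul_nonneg (by linarith only [hE1]) hlam0.le
    linarith only [h1]
  have hR0 : (0:ℝ) ≤ R := by rw [hRdef]; linarith only [hEll, heps]
  have hδR : lam * δ + eps < R := by
    rw [hRdef, hδdef]
    linarith only [hk1, hk2, hEll]
  set L := 2*lam*(4*lam*δ + 7*eps + 2*R) with hLdef
  have hm1 : (0:ℝ) ≤ lam^2 * δ := mul_nonneg (sq_nonneg lam) hδpos.le
  have hm2 : (0:ℝ) ≤ lam * eps := mul_nonneg hlam0.le heps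
  have hm3 : (0:ℝ) ≤ lam * R := mul_nonneg hlam0.le hR0
  have hL0 : (0:ℝ) ≤ L := by rw [hLdef]; linarith only [hm1, hm2, hm3]
  by_cases hfar : Metric.infDist (σ t) im ≤ R
  · have h1 : (0:ℝ) ≤ lam * L := mul_nonneg hlam0.le hL0
    linarith only [hfar, heps, h1]
  push_neg at hfar
  have hta : a ≤ t := ht.1
  have htb : t ≤ b := ht.2
  set S₁ := {u : ℝ | u ∈ Set.Icc a t ∧ Metric.infDist (σ u) im ≤ R} with hS₁def
  have haS₁ : a ∈ S₁ := ⟨⟨le_refl a, hta⟩, by rw [Metric.infDist_zero_of_mem hσa]; exact hR0⟩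
  have hS₁bdd : BddAbove S₁ := ⟨t, fun u hu => hu.1.2⟩
  set s := sSup S₁ with hsdef
  have has : a ≤ s := le_csSup hS₁bdd haS₁
  have hst : s ≤ t := csSup_le ⟨a, haS₁⟩ fun u hu => hu.1.2
  set S₂ := {u : ℝ | u ∈ Set.Icc t b ∧ Metric.infDist (σ u) im ≤ R} with hS₂def
  have hbS₂ : b ∈ S₂ := ⟨⟨htb, le_refl b⟩, by rw [Metric.infDist_zero_of_mem hσb]; exact hR0⟩
  have hS₂bdd : BddBelow S₂ := ⟨t, fun u hu => hu.1.1⟩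
  set t' := sInf S₂ with ht'def
  have htt' : t ≤ t' := le_csInf ⟨b, hbS₂⟩ fun u hu => hu.1.1
  have ht'b : t' ≤ b := csInf_le hS₂bdd hbS₂
  have hsab : s ∈ Set.Icc a b := ⟨has, hst.trans htb⟩
  have ht'ab : t' ∈ Set.Icc a b := ⟨hta.trans htt', ht'b⟩
  have hqd : ∀ u ∈ Set.Icc a b, ∀ v ∈ Set.Icc a b, dist (σ u) (σ v) ≤ lam * |u - v| + eps :=
    fun u hu v hv => (hq u hu v hv).2
  have hmid : ∀ u : ℝ, s < u → u < t' → R < Metric.infDist (σ u) im := by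
    intro u hsu hut'
    by_contra hle
    push_neg at hle
    rcases le_or_gt u t with h | h
    · exact absurd (le_csSup hS₁bdd ⟨⟨has.trans hsu.le, h⟩, hle⟩) (not_le.2 hsu)
    · exact absurd (csInf_le hS₂bdd ⟨⟨h.le, hut'.le.trans ht'b⟩, hle⟩) (not_le.2 hut')
  have hends : Metric.infDist (σ s) im ≤ R + eps := by
    by_contra h'
    push_neg at h'
    set η := (Metric.infDist (σ s) im - (R + eps)) / lam with hη
    have hηpos : 0 < η := div_pos (by linarith only [h']) hlam0
    obtain ⟨u, huS, hu_gt⟩ := exists_lt_of_lt_csSup (⟨a, haS₁⟩ : S₁.Nonempty)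
      (show s - η < sSup S₁ from by rw [← hsdef]; linarith only [hηpos])
    have hu_le : u ≤ s := le_csSup hS₁bdd huS
    have huab : u ∈ Set.Icc a b := ⟨huS.1.1, huS.1.2.trans htb⟩
    have hd1 : dist (σ s) (σ u) ≤ lam * |s - u| + eps := hqd s hsab u huab
    have habs : |s - u| < η := by
      rw [abs_of_nonneg (by linarith only [hu_le])]
      linarith only [hu_gt]
    have h2 : Metric.infDist (σ s) im ≤ Metric.infDist (σ u) im + dist (σ s) (σ u) :=
      Metric.infDist_le_infDist_add_dist
    have hlη : lam * |s - u| < lam * η := mul_lt_mul_of_pos_left habs hlam0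
    have hle : lam * η = Metric.infDist (σ s) im - (R + eps) := by
      rw [hη]; field_simp
    linarith only [h2, hd1, hlη, hle, huS.2]
  have hends' : Metric.infDist (σ t') im ≤ R + eps := by
    by_contra h'
    push_neg at h'
    set η := (Metric.infDist (σ t') im - (R + eps)) / lam with hη
    have hηpos : 0 < η := div_pos (by linarith only [h']) hlam0
    obtain ⟨u, huS, hu_lt⟩ := exists_lt_of_csInf_lt (⟨b, hbS₂⟩ : S₂.Nonempty)
      (show sInf S₂ < t' + η from by rw [← ht'def]; linarith only [hηpos])
    have hu_ge : t' ≤ u := csInf_le hS₂bdd huS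
    have huab : u ∈ Set.Icc a b := ⟨hta.trans huS.1.1, huS.1.2⟩
    have hd1 : dist (σ t') (σ u) ≤ lam * |t' - u| + eps := hqd t' ht'ab u huab
    have habs : |t' - u| < η := by
      rw [abs_sub_comm, abs_of_nonneg (by linarith only [hu_ge])]
      linarith only [hu_lt]
    have h2 : Metric.infDist (σ t') im ≤ Metric.infDist (σ u) im + dist (σ t') (σ u) :=
      Metric.infDist_le_infDist_add_dist
    have hlη : lam * |t' - u| < lam * η := mul_lt_mul_of_pos_left habs hlam0
    have hle : lam * η = Metric.infDist (σ t') im - (R + eps) := by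
      rw [hη]; field_simp
    linarith only [h2, hd1, hlη, hle, huS.2]
  have hsle : s ≤ t' := hst.trans htt'
  have hT : t' - s ≤ L := by
    rcases eq_or_lt_of_le hsle with heq | hlt
    · rw [← heq]; simpa using hL0
    set n := ⌈(t' - s) / δ⌉₊ with hndef
    have hn1 : 1 ≤ n := by
      have h0 : 0 < (t' - s) / δ := div_pos (by linarith only [hlt]) hδpos
      exact Nat.one_le_iff_ne_zero.2 (Nat.ceil_pos.2 h0).ne'
    have hnpos : (0:ℝ) < (n:ℝ) := by exact_mod_cast hn1
    have hnne : (n:ℝ) ≠ 0 := hnpos.ne'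
    have hnceil : (t' - s) / δ ≤ (n : ℝ) := Nat.le_ceil _
    have hnlt : (n : ℝ) < (t' - s) / δ + 1 :=
      Nat.ceil_lt_add_one (le_of_lt (div_pos (by linarith only [hlt]) hδpos))
    set h := (t' - s) / (n:ℝ) with hhdef
    have hhpos : 0 < h := div_pos (by linarith only [hlt]) hnpos
    have hhδ : h ≤ δ := by
      rw [hhdef, div_le_iff₀ hnpos]
      have hx : (t' - s)/δ * δ ≤ (n:ℝ) * δ := mul_le_mul_of_nonneg_right hnceil hδpos.le
      rw [div_mul_cancel₀ _ hδpos.ne'] at hx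
      linarith only [hx]
    set u : ℕ → ℝ := fun i => s + (i:ℝ) * h with hudef
    have hu0 : u 0 = s := by simp [hudef]
    have hun : u n = t' := by
      simp only [hudef]
      rw [hhdef]
      field_simp
      ring
    have humem : ∀ i : ℕ, i ≤ n → u i ∈ Set.Icc a b := by
      intro i hi
      have hico : (i:ℝ) ≤ (n:ℝ) := by exact_mod_cast hi
      have h1 : (0:ℝ) ≤ (i:ℝ) * h := mul_nonneg (Nat.cast_nonneg i) hhpos.le
      have h2 : (i:ℝ) * h ≤ (n:ℝ) * h := mul_le_mul_of_nonneg_right hico hhpos.le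
      have h4 : s + (n:ℝ) * h = t' := by simpa only [hudef] using hun
      simp only [hudef, Set.mem_Icc]
      constructor
      · linarith only [has, h1]
      · linarith only [h2, h4, ht'b]
    have hustep : ∀ i : ℕ, i + 1 ≤ n → dist (σ (u i)) (σ (u (i+1))) ≤ lam * h + eps := by
      intro i hi
      have h1 := hqd (u i) (humem i (by omega)) (u (i+1)) (humem (i+1) hi)
      have h2 : u i - u (i+1) = -h := by
        simp only [hudef]; push_cast; ring
      rw [h2, abs_neg, abs_of_pos hhpos] at h1
      exact h1
    have huint : ∀ i : ℕ, 1 ≤ i → i + 1 ≤ n → R < Metric.infDist (σ (u i)) im := by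
      intro i h1 h2
      have hi1 : (1:ℝ) ≤ (i:ℝ) := by exact_mod_cast h1
      have hin : (i:ℝ) < (n:ℝ) := by exact_mod_cast (by omega : i < n)
      apply hmid
      · have h3 : 1 * h ≤ (i:ℝ) * h := mul_le_mul_of_nonneg_right hi1 hhpos.le
        simp only [hudef]
        linarith only [h3, hhpos]
      · have h4 : s + (n:ℝ) * h = t' := by simpa only [hudef] using hun
        have h5 : (i:ℝ) * h < (n:ℝ) * h := mul_lt_mul_of_pos_right hin hhpos
        simp only [hudef]
        linarith only [h4, h5]
    have hpex : ∀ i : ℕ, ∃ p, p ∈ im ∧ Metric.infDist (σ (u i)) im = dist (σ (u i)) p := by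
      intro i; obtain ⟨p, hp1, hp2⟩ := hproj (σ (u i)); exact ⟨p, hp1, hp2⟩
    choose p hpim hpd using hpex
    have hpstep : ∀ i : ℕ, 1 ≤ i → i + 2 ≤ n → dist (p i) (p (i+1)) ≤ E := by
      intro i h1 h2
      refine hstep (σ (u i)) (σ (u (i+1))) _ _ (hpim i) (hpd i).symm
        (hpim (i+1)) (hpd (i+1)).symm ?_
      have h3 : lam * h ≤ lam * δ := mul_le_mul_of_nonneg_left hhδ hlam0.le
      calc dist (σ (u i)) (σ (u (i+1))) ≤ lam * h + eps := hustep i (by omega)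
        _ ≤ lam * δ + eps := by linarith only [h3]
        _ < R := hδR
        _ < Metric.infDist (σ (u i)) im := huint i h1 (by omega)
    have hchain : ∀ i : ℕ, 1 ≤ i → i + 1 ≤ n → dist (p 1) (p i) ≤ ((i:ℝ) - 1) * E := by
      intro i
      induction i with
      | zero => intro h1 _; exact absurd h1 (by omega)
      | succ k ih =>
        intro h1 h2
        rcases Nat.eq_zero_or_pos k with hk | hk
        · subst hk; simp
        · have hk1 : 1 ≤ k := hk
          have ih' := ih hk1 (by omega)
          have hstep' := hpstep k hk1 (by omega)
          have htri := dist_triangle (p 1) (p k) (p (k+1))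
          have hcast : (((k+1:ℕ)):ℝ) - 1 = ((k:ℝ) - 1) + 1 := by push_cast; ring
          rw [hcast]
          linarith only [htri, ih', hstep']
    rcases eq_or_lt_of_le hn1 with hn1' | hn2
    · -- n = 1 : the whole excursion is short
      have hh : t' - s = h := by
        rw [hhdef, ← hn1']; simp
      have hql := (hq s hsab t' ht'ab).1
      have habs' : |s - t'| = t' - s := by
        rw [abs_sub_comm, abs_of_nonneg (by linarith only [hlt])]
      rw [habs'] at hql
      have hqu := hqd s hsab t' ht'ab
      rw [habs'] at hqu
      have hmul : t' - s ≤ lam * (dist (σ s) (σ t') + eps) := by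
        have h1 : lam * ((1/lam) * (t' - s) - eps) ≤ lam * dist (σ s) (σ t') :=
          mul_le_mul_of_nonneg_left hql hlam0.le
        have h2 : lam * ((1/lam) * (t' - s) - eps) = (t' - s) - lam * eps := by
          field_simp
        linarith only [h1, h2]
      have hd : dist (σ s) (σ t') ≤ lam * δ + eps := by
        have h1 : t' - s ≤ δ := by rw [hh]; exact hhδ
        have h2 : lam * (t' - s) ≤ lam * δ := mul_le_mul_of_nonneg_left h1 hlam0.le
        linarith only [hqu, h2]
      have hc : lam * (dist (σ s) (σ t') + eps) ≤ lam * (lam * δ + 2*eps) :=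
        mul_le_mul_of_nonneg_left (by linarith only [hd]) hlam0.le
      rw [hLdef]
      linarith only [hmul, hc, hm1, hm2, hm3]
    · -- n ≥ 2 : chain projections
      have hn2' : 2 ≤ n := hn2
      set m := n - 1 with hmdef
      have hm1' : 1 ≤ m := by omega
      have hmn : m + 1 = n := by omega
      have hmcast : (m:ℝ) = (n:ℝ) - 1 := by
        rw [hmdef, Nat.cast_sub (by omega : 1 ≤ n), Nat.cast_one]
      have hchain' := hchain m hm1' (by omega)
      have d1 : dist (σ s) (σ (u 1)) ≤ lam * h + eps := by
        have := hustep 0 (by omega)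
        rwa [hu0] at this
      have d3 : dist (σ (u m)) (σ t') ≤ lam * h + eps := by
        have := hustep m (by omega)
        rwa [hmn, hun] at this
      have d2 : Metric.infDist (σ (u 1)) im ≤ R + eps + (lam * h + eps) := by
        have htri : Metric.infDist (σ (u 1)) im ≤
            Metric.infDist (σ s) im + dist (σ (u 1)) (σ s) :=
          Metric.infDist_le_infDist_add_dist
        rw [dist_comm] at htri
        linarith only [htri, hends, d1]
      have d4 : Metric.infDist (σ (u m)) im ≤ R + eps + (lam * h + eps) := by
        have htri : Metric.infDist (σ (u m)) im ≤
            Metric.infDist (σ t') im + dist (σ (u m)) (σ t') :=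
          Metric.infDist_le_infDist_add_dist
        linarith only [htri, hends', d3]
      have e1 : dist (σ (u 1)) (p 1) ≤ R + eps + (lam * h + eps) := by
        rw [← hpd 1]; exact d2
      have e2 : dist (p m) (σ (u m)) ≤ R + eps + (lam * h + eps) := by
        rw [dist_comm, ← hpd m]; exact d4
      have dtot : dist (σ s) (σ t') ≤
          4*(lam*h + eps) + 2*(R + eps) + ((m:ℝ) - 1) * E := by
        have t1 := dist_triangle (σ s) (σ (u 1)) (σ t')
        have t2 := dist_triangle (σ (u 1)) (p 1) (σ t')
        have t3 := dist_triangle (p 1) (p m) (σ t')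
        have t4 := dist_triangle (p m) (σ (u m)) (σ t')
        linarith only [t1, t2, t3, t4, d1, d3, e1, e2, hchain']
      have hql := (hq s hsab t' ht'ab).1
      have habs' : |s - t'| = t' - s := by
        rw [abs_sub_comm, abs_of_nonneg (by linarith only [hlt])]
      rw [habs'] at hql
      have hmul : t' - s ≤ lam * (dist (σ s) (σ t') + eps) := by
        have h1 : lam * ((1/lam) * (t' - s) - eps) ≤ lam * dist (σ s) (σ t') :=
          mul_le_mul_of_nonneg_left hql hlam0.le
        have h2 : lam * ((1/lam) * (t' - s) - eps) = (t' - s) - lam * eps := by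
          field_simp
        linarith only [h1, h2]
      have hn2cast : (2:ℝ) ≤ (n:ℝ) := by exact_mod_cast hn2'
      have hA1 : ((n:ℝ) - 2) * δ ≤ t' - s := by
        have hx : ((n:ℝ) - 1) * δ < t' - s := by
          have h1 : ((n:ℝ) - 1) < (t' - s)/δ := by linarith only [hnlt]
          have h2 := mul_lt_mul_of_pos_right h1 hδpos
          rwa [div_mul_cancel₀ _ hδpos.ne'] at h2
        linarith only [hx, hδpos]
      have hA2 : 2 * lam * E ≤ δ := by
        rw [hδdef]
        linarith only []
      have hA : ((n:ℝ) - 2) * E * (2 * lam) ≤ t' - s := by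
        have h1 : ((n:ℝ) - 2) * (2 * lam * E) ≤ ((n:ℝ) - 2) * δ :=
          mul_le_mul_of_nonneg_left hA2 (by linarith only [hn2cast])
        linarith only [h1, hA1]
      have hB2 : lam * (lam * h) ≤ lam * (lam * δ) :=
        mul_le_mul_of_nonneg_left (mul_le_mul_of_nonneg_left hhδ hlam0.le) hlam0.le
      have hd2 : dist (σ s) (σ t') ≤ 4*(lam*h + eps) + 2*(R + eps) + ((n:ℝ) - 2) * E := by
        rw [hmcast] at dtot
        linarith only [dtot]
      have hfinal : t' - s ≤
          lam * (4*(lam*h + eps) + 2*(R + eps) + ((n:ℝ) - 2) * E + eps) := by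
        have hc : lam * (dist (σ s) (σ t') + eps) ≤
            lam * (4*(lam*h + eps) + 2*(R + eps) + ((n:ℝ) - 2) * E + eps) :=
          mul_le_mul_of_nonneg_left (by linarith only [hd2]) hlam0.le
        linarith only [hmul, hc]
      rw [hLdef]
      linarith only [hfinal, hA, hB2]
  -- conclusion
  have hds : dist (σ t) (σ s) ≤ lam * (t - s) + eps := by
    have := hqd t ⟨hta, htb⟩ s hsab
    rwa [abs_of_nonneg (by linarith only [hst])] at this
  have hfin : Metric.infDist (σ t) im ≤ Metric.infDist (σ s) im + dist (σ t) (σ s) :=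
    Metric.infDist_le_infDist_add_dist
  have hts : t - s ≤ L := by linarith only [hT, htt']
  have hmono : lam * (t - s) ≤ lam * L := mul_le_mul_of_nonneg_left hts hlam0.le
  linarith only [hfin, hends, hds, hmono]
end

section
/- There exists a proper geodesic metric space X containing a geodesic ray Y such that Y is Morse but not D-contracting for any constant D. Concretely, let X be obtained from a ray Y = [0,∞) by attaching, for each i ∈ ℕ, an arc of length i² to the endpoints of an interval I_i ⊂ Y of length i (with the intervals I_i pairwise disjoint and marching to infinity). Then Y is Morse in X, but for every D > 0 there is a metric ball in X disjoint from Y whose closest-point projection to Y has diameter greater than 2D. -/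
open Metric Set

/-- The content of the example: `X` is a proper geodesic space containing a Morse geodesic
ray `γ` such that for every `D > 0` there is a metric ball disjoint from `γ` whose
closest-point projection to `γ` has diameter greater than `2D` (so `γ` is not
`D`-contracting for any `D`). -/
def MorseNotContractingSpace (X : Type) [MetricSpace X] : Prop :=
  ProperSpace X ∧ GeodesicSpace X ∧
    ∃ γ : ℝ → X, IsGeodesicRay γ ∧ (∃ N : ℝ → ℝ → ℝ, IsMorseWith N (γ '' Set.Ici 0)) ∧
      ∀ D : ℝ, 0 < D → ∃ (c : X) (r : ℝ), 0 < r ∧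
        Metric.ball c r ∩ (γ '' Set.Ici 0) = ∅ ∧
        2 * D < Metric.diam (⋃ y ∈ Metric.ball c r, projSet (γ '' Set.Ici 0) y)


namespace MNC

noncomputable section

/-- length of the interval on the ray to which arc `n` is attached -/
def ell (n : ℕ) : ℝ := (n : ℝ) + 3
/-- length of arc `n` -/
def Ln (n : ℕ) : ℝ := ((n : ℝ) + 3) ^ 2
/-- left attachment point of arc `n` -/
def pa (n : ℕ) : ℝ := ((n : ℝ) + 3) ^ 2
/-- right attachment point of arc `n` -/
def qa (n : ℕ) : ℝ := pa n + ell n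

lemma ell_ge3 (n : ℕ) : 3 ≤ ell n := by
  have : (0:ℝ) ≤ n := Nat.cast_nonneg n
  unfold ell; linarith

lemma ell_pos (n : ℕ) : 0 < ell n := by linarith [ell_ge3 n]

lemma Ln_eq_sq (n : ℕ) : Ln n = ell n ^ 2 := rfl

lemma ell_le_Ln (n : ℕ) : ell n ≤ Ln n := by
  have h := ell_ge3 n
  rw [Ln_eq_sq]; nlinarith

lemma Ln_pos (n : ℕ) : 0 < Ln n := lt_of_lt_of_le (ell_pos n) (ell_le_Ln n)

lemma pa_nonneg (n : ℕ) : 0 ≤ pa n := le_of_lt (Ln_pos n)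

lemma qa_nonneg (n : ℕ) : 0 ≤ qa n := by
  have := pa_nonneg n; have := ell_pos n; unfold qa; linarith

lemma qa_sub_pa (n : ℕ) : qa n - pa n = ell n := by unfold qa; ring

lemma pa_ge (n : ℕ) : (n : ℝ) ≤ pa n := by
  have : (0:ℝ) ≤ n := Nat.cast_nonneg n
  unfold pa; nlinarith

/-- underlying points -/
inductive P : Type
  | ray (t : ℝ) : P
  | arc (n : ℕ) (s : ℝ) : P

open P

def Valid : P → Prop
  | ray t => 0 ≤ t
  | arc n s => 0 < s ∧ s < Ln n

/-- the space -/
def Xc : Type := { x : P // Valid x }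

/-- gate positions on the ray -/
def gA : Bool → P → ℝ
  | _, ray t => t
  | false, arc n _ => pa n
  | true, arc n _ => qa n

/-- cost to reach a gate -/
def cA : Bool → P → ℝ
  | _, ray _ => 0
  | false, arc _ s => s
  | true, arc n s => Ln n - s

def gdb (a b : Bool) (x y : P) : ℝ := cA a x + |gA a x - gA b y| + cA b y

/-- distance through the ray -/
def gd (x y : P) : ℝ :=
  min (min (gdb false false x y) (gdb false true x y))
      (min (gdb true false x y) (gdb true true x y))

/-- the distance function -/
def pd : P → P → ℝ
  | ray u, ray v => |u - v|
  | arc n s, arc m t =>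
      if n = m then min |s - t| (gd (arc n s) (arc m t)) else gd (arc n s) (arc m t)
  | x, y => gd x y

lemma gdb_comm (a b : Bool) (x y : P) : gdb a b x y = gdb b a y x := by
  unfold gdb; rw [abs_sub_comm]; ring

@[simp] lemma cA_ray (b : Bool) (t : ℝ) : cA b (ray t) = 0 := by cases b <;> rfl
@[simp] lemma gA_ray (b : Bool) (t : ℝ) : gA b (ray t) = t := by cases b <;> rfl

lemma gd_le (a b : Bool) (x y : P) : gd x y ≤ gdb a b x y := by
  unfold gd
  rcases a <;> rcases b
  · exact le_trans (min_le_left _ _) (min_le_left _ _)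
  · exact le_trans (min_le_left _ _) (min_le_right _ _)
  · exact le_trans (min_le_right _ _) (min_le_left _ _)
  · exact le_trans (min_le_right _ _) (min_le_right _ _)

lemma gd_eq (x y : P) : ∃ a b : Bool, gd x y = gdb a b x y := by
  unfold gd
  rcases le_total (min (gdb false false x y) (gdb false true x y))
      (min (gdb true false x y) (gdb true true x y)) with h | h
  · rw [min_eq_left h]
    rcases le_total (gdb false false x y) (gdb false true x y) with h' | h'
    · exact ⟨false, false, min_eq_left h'⟩
    · exact ⟨false, true, min_eq_right h'⟩
  · rw [min_eq_right h]
    rcases le_total (gdb true false x y) (gdb true true x y) with h' | h'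
    · exact ⟨true, false, min_eq_left h'⟩
    · exact ⟨true, true, min_eq_right h'⟩

lemma gd_comm (x y : P) : gd x y = gd y x := by
  have key : ∀ u v : P, gd u v ≤ gd v u := by
    intro u v
    obtain ⟨a, b, h⟩ := gd_eq v u
    rw [h, gdb_comm]
    exact gd_le b a u v
  exact le_antisymm (key x y) (key y x)

lemma cA_nonneg (a : Bool) {x : P} (hx : Valid x) : 0 ≤ cA a x := by
  rcases x with t | ⟨n, s⟩
  · rcases a <;> simp [cA]
  · rcases hx with ⟨h1, h2⟩
    rcases a <;> simp [cA] <;> linarith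

/-- the two gates of a point differ by at most the sum of the costs -/
lemma gate_spread (b b' : Bool) {y : P} (hy : Valid y) :
    |gA b y - gA b' y| ≤ cA b y + cA b' y := by
  rcases y with t | ⟨n, s⟩
  · rcases b <;> rcases b' <;> simp [gA, cA]
  · rcases hy with ⟨h1, h2⟩
    have h3 := ell_le_Ln n
    have h4 := ell_pos n
    have h5 := qa_sub_pa n
    rcases b <;> rcases b' <;> simp only [gA, cA] <;>
      first
      | (rw [abs_le]; constructor <;> linarith)
      | (simp; linarith)

lemma gdb_nonneg (a b : Bool) {x y : P} (hx : Valid x) (hy : Valid y) :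
    0 ≤ gdb a b x y := by
  have := cA_nonneg a hx; have := cA_nonneg b hy
  unfold gdb
  have := abs_nonneg (gA a x - gA b y)
  linarith

lemma gd_nonneg {x y : P} (hx : Valid x) (hy : Valid y) : 0 ≤ gd x y := by
  obtain ⟨a, b, h⟩ := gd_eq x y
  rw [h]; exact gdb_nonneg a b hx hy

lemma gd_triangle {x z : P} (y : P) (hy : Valid y) : gd x z ≤ gd x y + gd y z := by
  obtain ⟨a, b, h1⟩ := gd_eq x y
  obtain ⟨b', c, h2⟩ := gd_eq y z
  rw [h1, h2]
  refine le_trans (gd_le a c x z) ?_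
  unfold gdb
  have h3 := gate_spread b b' hy
  have h4 : |gA a x - gA c z| ≤ |gA a x - gA b y| + |gA b y - gA b' y| + |gA b' y - gA c z| := by
    calc |gA a x - gA c z| ≤ |gA a x - gA b' y| + |gA b' y - gA c z| := abs_sub_le _ _ _
    _ ≤ (|gA a x - gA b y| + |gA b y - gA b' y|) + |gA b' y - gA c z| := by
        have := abs_sub_le (gA a x) (gA b y) (gA b' y); linarith
  linarith

/-- moving the left point within its component moves `gd` by at most the parameter change -/
lemma gd_ray_left (u v : ℝ) (z : P) : gd (ray u) z ≤ |u - v| + gd (ray v) z := by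
  obtain ⟨b, c, h⟩ := gd_eq (ray v) z
  rw [h]
  refine le_trans (gd_le b c (ray u) z) ?_
  unfold gdb
  rw [cA_ray, cA_ray, gA_ray, gA_ray]
  have := abs_sub_le u v (gA c z); linarith

lemma gd_arc_left (n : ℕ) (s t : ℝ) (z : P) :
    gd (arc n s) z ≤ |s - t| + gd (arc n t) z := by
  obtain ⟨b, c, h⟩ := gd_eq (arc n t) z
  rw [h]
  refine le_trans (gd_le b c (arc n s) z) ?_
  unfold gdb
  have h1 : cA b (arc n s) ≤ |s - t| + cA b (arc n t) := by
    have h3 := le_abs_self (s - t)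
    have h4 := neg_abs_le (s - t)
    rcases b <;> simp only [cA] <;> linarith
  have h2 : gA b (arc n s) = gA b (arc n t) := by rcases b <;> rfl
  rw [h2]
  linarith

lemma gd_ray_right (u v : ℝ) (x : P) : gd x (ray u) ≤ gd x (ray v) + |v - u| := by
  have h := gd_ray_left u v x
  rw [gd_comm x (ray u), gd_comm x (ray v)]
  linarith [h, abs_sub_comm u v]

lemma gd_arc_right (m : ℕ) (t r : ℝ) (x : P) :
    gd x (arc m r) ≤ gd x (arc m t) + |t - r| := by
  have h := gd_arc_left m r t x
  rw [gd_comm x (arc m r), gd_comm x (arc m t)]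
  linarith [abs_sub_comm t r]

lemma gd_ray_ray (u v : ℝ) : gd (ray u) (ray v) = |u - v| := by
  unfold gd gdb
  simp

lemma pd_le_gd (x y : P) : pd x y ≤ gd x y := by
  rcases x with u | ⟨n, s⟩ <;> rcases y with v | ⟨m, t⟩
  · rw [show pd (ray u) (ray v) = |u - v| from rfl, gd_ray_ray]
  · exact le_of_eq rfl
  · exact le_of_eq rfl
  · show (if n = m then min |s - t| (gd (arc n s) (arc m t)) else gd (arc n s) (arc m t)) ≤ _
    split_ifs
    · exact min_le_right _ _
    · exact le_rfl

lemma pd_comm (x y : P) : pd x y = pd y x := by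
  rcases x with u | ⟨n, s⟩ <;> rcases y with v | ⟨m, t⟩
  · exact abs_sub_comm u v
  · show gd _ _ = gd _ _; exact gd_comm _ _
  · show gd _ _ = gd _ _; exact gd_comm _ _
  · show (if n = m then _ else _) = (if m = n then _ else _)
    rcases eq_or_ne n m with h | h
    · subst h; simp [abs_sub_comm, gd_comm]
    · rw [if_neg h, if_neg (Ne.symm h)]; exact gd_comm _ _

lemma pd_self {x : P} (hx : Valid x) : pd x x = 0 := by
  rcases x with u | ⟨n, s⟩
  · show |u - u| = 0; simp
  · show (if n = n then min |s - s| (gd (arc n s) (arc n s)) else _) = 0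
    rw [if_pos rfl]
    have h0 : 0 ≤ gd (arc n s) (arc n s) := gd_nonneg hx hx
    simp [min_eq_left h0]

/-- gd across a point: key triangle-type lemma -/
lemma L_A {x z : P} (y : P) (hy : Valid y) : gd x z ≤ pd x y + gd y z := by
  rcases x with u | ⟨n, s⟩ <;> rcases y with v | ⟨m, t⟩
  · exact gd_ray_left u v z
  · exact gd_triangle _ hy
  · exact gd_triangle _ hy
  · show gd _ z ≤ (if n = m then min |s - t| (gd (arc n s) (arc m t)) else _) + gd _ z
    split_ifs with h
    · subst h
      rcases le_total |s - t| (gd (arc n s) (arc n t)) with h' | h'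
      · rw [min_eq_left h']
        exact gd_arc_left n s t z
      · rw [min_eq_right h']
        exact gd_triangle _ hy
    · exact gd_triangle _ hy

lemma pd_triangle {x z : P} (y : P) (hy : Valid y) : pd x z ≤ pd x y + pd y z := by
  rcases y with v | ⟨m, t⟩ <;> rcases z with w | ⟨k, r⟩
  · -- y ray, z ray
    rcases x with u | ⟨n, s⟩
    · exact abs_sub_le u v w
    · show gd _ _ ≤ gd _ _ + |v - w|
      exact gd_ray_right w v _
  · -- y ray, z arc
    refine le_trans (pd_le_gd x _) ?_
    exact L_A (ray v) hy
  · -- y arc, z ray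
    refine le_trans (pd_le_gd x _) ?_
    exact L_A (arc m t) hy
  · -- y arc m t, z arc k r
    show pd x (arc k r) ≤ pd x (arc m t) + (if m = k then min |t - r| (gd (arc m t) (arc k r)) else gd (arc m t) (arc k r))
    split_ifs with h
    · subst h
      rcases le_total |t - r| (gd (arc m t) (arc m r)) with h' | h'
      · rw [min_eq_left h']
        -- need pd x (arc m r) ≤ pd x (arc m t) + |t - r|
        rcases x with u | ⟨n, s⟩
        · show gd _ _ ≤ gd _ _ + |t - r|
          exact gd_arc_right m t r _
        · show (if n = m then min |s - r| (gd (arc n s) (arc m r)) else gd (arc n s) (arc m r)) ≤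
            (if n = m then min |s - t| (gd (arc n s) (arc m t)) else gd (arc n s) (arc m t)) + |t - r|
          split_ifs with h2
          · subst h2
            rcases le_total |s - t| (gd (arc n s) (arc n t)) with h3 | h3
            · rw [min_eq_left h3]
              refine le_trans (min_le_left _ _) ?_
              calc |s - r| ≤ |s - t| + |t - r| := abs_sub_le s t r
              _ ≤ _ := le_rfl
            · rw [min_eq_right h3]
              refine le_trans (min_le_right _ _) ?_
              exact gd_arc_right n t r _
          · exact gd_arc_right m t r _
      · rw [min_eq_right h']
        refine le_trans (pd_le_gd x _) ?_
        exact L_A (arc m t) hy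
    · refine le_trans (pd_le_gd x _) ?_
      exact L_A (arc m t) hy

lemma gdb_pos_left {x y : P} {n : ℕ} {s : ℝ} (hx : x = arc n s) (h1 : 0 < s)
    (h2 : s < Ln n) (hy : Valid y) (a b : Bool) : 0 < gdb a b x y := by
  subst hx
  have hc : 0 < cA a (arc n s) := by
    rcases a <;> simp [cA] <;> linarith
  have := cA_nonneg b hy
  have := abs_nonneg (gA a (arc n s) - gA b y)
  unfold gdb; linarith

lemma gd_pos_left {y : P} {n : ℕ} {s : ℝ} (h1 : 0 < s) (h2 : s < Ln n) (hy : Valid y) :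
    0 < gd (arc n s) y := by
  obtain ⟨a, b, h⟩ := gd_eq (arc n s) y
  rw [h]; exact gdb_pos_left rfl h1 h2 hy a b

lemma eq_of_pd_eq_zero {x y : P} (hx : Valid x) (hy : Valid y) (h : pd x y = 0) : x = y := by
  rcases x with u | ⟨n, s⟩ <;> rcases y with v | ⟨m, t⟩
  · have : |u - v| = 0 := h
    have : u = v := by rwa [abs_eq_zero, sub_eq_zero] at this
    rw [this]
  · exfalso
    have h2 : pd (ray u) (arc m t) = gd (ray u) (arc m t) := rfl
    rcases hy with ⟨ht1, ht2⟩
    have := gd_pos_left ht1 ht2 (show Valid (ray u) from hx)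
    rw [gd_comm] at this
    rw [h2] at h; linarith
  · exfalso
    have h2 : pd (arc n s) (ray v) = gd (arc n s) (ray v) := rfl
    rcases hx with ⟨hs1, hs2⟩
    have := gd_pos_left hs1 hs2 (show Valid (ray v) from hy)
    rw [h2] at h; linarith
  · rcases hx with ⟨hs1, hs2⟩
    have h2 : pd (arc n s) (arc m t) =
        (if n = m then min |s - t| (gd (arc n s) (arc m t)) else gd (arc n s) (arc m t)) := rfl
    have hgd : 0 < gd (arc n s) (arc m t) := gd_pos_left hs1 hs2 hy
    rw [h2] at h
    split_ifs at h with hnm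
    · subst hnm
      rcases le_total |s - t| (gd (arc n s) (arc n t)) with h3 | h3
      · rw [min_eq_left h3] at h
        have : s = t := by
          have := abs_eq_zero.mp h; linarith [sub_eq_zero.mp this]
        rw [this]
      · rw [min_eq_right h3] at h; linarith
    · exfalso; linarith

instance : MetricSpace Xc where
  dist x y := pd x.1 y.1
  dist_self x := pd_self x.2
  dist_comm x y := pd_comm x.1 y.1
  dist_triangle x y z := pd_triangle y.1 y.2
  eq_of_dist_eq_zero := by
    intro x y h
    exact Subtype.ext (eq_of_pd_eq_zero x.2 y.2 h)

lemma dist_def (x y : Xc) : dist x y = pd x.1 y.1 := rfl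

/-- point on the ray (clamped) -/
def rp (t : ℝ) : Xc := ⟨ray (max t 0), le_max_right _ _⟩

/-- point on arc `n` (clamped) -/
def ap (n : ℕ) (s : ℝ) : Xc :=
  if h : 0 < s ∧ s < Ln n then ⟨arc n s, h⟩ else if 0 < s then rp (qa n) else rp (pa n)

lemma rp_val {t : ℝ} (h : 0 ≤ t) : (rp t).1 = ray t := by
  simp only [rp, max_eq_left h]

lemma ap_val {n : ℕ} {s : ℝ} (h1 : 0 < s) (h2 : s < Ln n) : (ap n s).1 = arc n s := by
  rw [show ap n s = _ from dif_pos (⟨h1, h2⟩ : 0 < s ∧ s < Ln n)]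

lemma ap_of_nonpos {n : ℕ} {s : ℝ} (h : s ≤ 0) : ap n s = rp (pa n) := by
  have h1 : ¬ (0 < s ∧ s < Ln n) := by rintro ⟨h2, _⟩; linarith
  rw [show ap n s = _ from dif_neg h1, if_neg (show ¬ 0 < s by linarith)]

lemma ap_zero (n : ℕ) : ap n 0 = rp (pa n) := ap_of_nonpos le_rfl

lemma ap_of_ge {n : ℕ} {s : ℝ} (h : Ln n ≤ s) : ap n s = rp (qa n) := by
  have hL := Ln_pos n
  have h1 : ¬ (0 < s ∧ s < Ln n) := by rintro ⟨_, h2⟩; linarith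
  rw [show ap n s = _ from dif_neg h1, if_pos (show 0 < s by linarith)]

lemma abs_pa_qa (n : ℕ) : |pa n - qa n| = ell n := by
  rw [show pa n - qa n = -(ell n) by unfold qa; ring, abs_neg, abs_of_pos (ell_pos n)]

lemma abs_qa_pa (n : ℕ) : |qa n - pa n| = ell n := by
  rw [qa_sub_pa, abs_of_pos (ell_pos n)]

lemma repr_Xc (x : Xc) : (∃ t, 0 ≤ t ∧ x = rp t) ∨ ∃ n s, 0 < s ∧ s < Ln n ∧ x = ap n s := by
  obtain ⟨v, hv⟩ := x
  rcases v with u | ⟨n, s⟩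
  · exact Or.inl ⟨u, hv, Subtype.ext (rp_val hv).symm⟩
  · exact Or.inr ⟨n, s, hv.1, hv.2, Subtype.ext (by rw [ap_val hv.1 hv.2])⟩

lemma pd_ray_arc (u : ℝ) (n : ℕ) (s : ℝ) :
    pd (ray u) (arc n s) = min (|u - pa n| + s) (|u - qa n| + (Ln n - s)) := by
  show gd _ _ = _
  unfold gd gdb
  simp [cA, gA, min_self]

lemma pd_arc_arc_same (n : ℕ) {s t : ℝ} (hs0 : 0 ≤ s) (hsL : s ≤ Ln n)
    (ht0 : 0 ≤ t) (htL : t ≤ Ln n) :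
    pd (arc n s) (arc n t) =
      min |s - t| (min (s + ell n + (Ln n - t)) (t + ell n + (Ln n - s))) := by
  show (if n = n then min |s - t| (gd (arc n s) (arc n t)) else _) = _
  rw [if_pos rfl]
  unfold gd gdb
  simp only [cA, gA, abs_pa_qa, abs_qa_pa, sub_self, abs_zero]
  rcases abs_cases (s - t) with ⟨h1, h2⟩ | ⟨h1, h2⟩ <;> rw [h1] <;>
    · simp only [min_def]; split_ifs <;> linarith

lemma pd_arc_arc_ne {n m : ℕ} (h : n ≠ m) (s t : ℝ) :
    pd (arc n s) (arc m t) =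
      min (min (s + |pa n - pa m| + t) (s + |pa n - qa m| + (Ln m - t)))
          (min ((Ln n - s) + |qa n - pa m| + t) ((Ln n - s) + |qa n - qa m| + (Ln m - t))) := by
  show (if n = m then _ else gd (arc n s) (arc m t)) = _
  rw [if_neg h]
  unfold gd gdb
  simp [cA, gA]

lemma dist_rp_rp {u v : ℝ} (hu : 0 ≤ u) (hv : 0 ≤ v) : dist (rp u) (rp v) = |u - v| := by
  rw [dist_def, rp_val hu, rp_val hv]; rfl

lemma dist_rp_ap {u : ℝ} (hu : 0 ≤ u) (n : ℕ) {s : ℝ} (hs0 : 0 ≤ s) (hsL : s ≤ Ln n) :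
    dist (rp u) (ap n s) = min (|u - pa n| + s) (|u - qa n| + (Ln n - s)) := by
  have hell := ell_pos n
  have hellL := ell_le_Ln n
  have h1 : |u - pa n| ≤ |u - qa n| + ell n := by
    have := abs_sub_le u (qa n) (pa n); rw [abs_qa_pa] at this; linarith
  have h2 : |u - qa n| ≤ |u - pa n| + ell n := by
    have := abs_sub_le u (pa n) (qa n); rw [abs_pa_qa] at this; linarith
  rcases eq_or_lt_of_le hs0 with h0 | h0
  · rw [← h0, ap_zero, dist_rp_rp hu (pa_nonneg n), add_zero, sub_zero]
    exact (min_eq_left (by linarith)).symm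
  · rcases eq_or_lt_of_le hsL with hL | hL
    · rw [hL, ap_of_ge le_rfl, dist_rp_rp hu (qa_nonneg n), sub_self, add_zero]
      exact (min_eq_right (by linarith)).symm
    · rw [dist_def, rp_val hu, ap_val h0 hL]
      exact pd_ray_arc u n s

lemma dist_ap_ap (n : ℕ) {s t : ℝ} (hs0 : 0 ≤ s) (hsL : s ≤ Ln n)
    (ht0 : 0 ≤ t) (htL : t ≤ Ln n) :
    dist (ap n s) (ap n t) =
      min |s - t| (min (s + ell n + (Ln n - t)) (t + ell n + (Ln n - s))) := by
  have hell := ell_pos n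
  have hellL := ell_le_Ln n
  have hL := Ln_pos n
  rcases eq_or_lt_of_le hs0 with h0 | h0
  · -- s = 0
    rw [← h0, ap_zero, dist_rp_ap (pa_nonneg n) n ht0 htL, sub_self, abs_zero, zero_add,
      abs_pa_qa]
    rcases abs_cases (0 - t) with ⟨h1, h2⟩ | ⟨h1, h2⟩ <;> rw [h1] <;>
      · simp only [min_def]; split_ifs <;> linarith
  · rcases eq_or_lt_of_le hsL with hLs | hLs
    · -- s = Ln n
      rw [hLs, ap_of_ge le_rfl, dist_rp_ap (qa_nonneg n) n ht0 htL, sub_self, abs_zero,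
        zero_add, abs_qa_pa]
      rcases abs_cases (Ln n - t) with ⟨h1, h2⟩ | ⟨h1, h2⟩ <;> rw [h1] <;>
        · simp only [min_def]; split_ifs <;> linarith
    · rcases eq_or_lt_of_le ht0 with h0' | h0'
      · -- t = 0
        rw [← h0', ap_zero, dist_comm, dist_rp_ap (pa_nonneg n) n (le_of_lt h0) (le_of_lt hLs),
          sub_self, abs_zero, zero_add, abs_pa_qa]
        rcases abs_cases (s - 0) with ⟨h1, h2⟩ | ⟨h1, h2⟩ <;> rw [h1] <;>
          · simp only [min_def]; split_ifs <;> linarith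
      · rcases eq_or_lt_of_le htL with hLt | hLt
        · -- t = Ln n
          rw [hLt, ap_of_ge le_rfl, dist_comm,
            dist_rp_ap (qa_nonneg n) n (le_of_lt h0) (le_of_lt hLs), sub_self, abs_zero,
            zero_add, abs_qa_pa]
          rcases abs_cases (s - Ln n) with ⟨h1, h2⟩ | ⟨h1, h2⟩ <;> rw [h1] <;>
            · simp only [min_def]; split_ifs <;> linarith
        · rw [dist_def, ap_val h0 hLs, ap_val h0' hLt]
          exact pd_arc_arc_same n (le_of_lt h0) (le_of_lt hLs) (le_of_lt h0') (le_of_lt hLt)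

section GenericGeo

variable {Y : Type*} [MetricSpace Y]

lemma geo_reverse {γ : ℝ → Y} {x y : Y} (h : IsGeodesicSegment γ x y) :
    IsGeodesicSegment (fun t => γ (dist x y - t)) y x := by
  obtain ⟨h0, hd, hp⟩ := h
  have hxy : dist y x = dist x y := dist_comm y x
  refine ⟨by simpa using hd, ?_, ?_⟩
  · rw [hxy]; simpa using h0
  · intro s hs t ht
    rw [hxy] at hs ht
    have := hp (dist x y - s) ⟨by linarith [hs.2], by linarith [hs.1]⟩
      (dist x y - t) ⟨by linarith [ht.2], by linarith [ht.1]⟩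
    simp only at this ⊢
    rw [this, show dist x y - s - (dist x y - t) = t - s by ring, abs_sub_comm]

lemma geo_concat {γ₁ γ₂ : ℝ → Y} {x m y : Y}
    (h₁ : IsGeodesicSegment γ₁ x m) (h₂ : IsGeodesicSegment γ₂ m y)
    (hd : dist x y = dist x m + dist m y) :
    IsGeodesicSegment (fun t => if t ≤ dist x m then γ₁ t else γ₂ (t - dist x m)) x y := by
  obtain ⟨ha0, had, hap⟩ := h₁
  obtain ⟨hb0, hbd, hbp⟩ := h₂
  have d₁0 : 0 ≤ dist x m := dist_nonneg
  have d₂0 : 0 ≤ dist m y := dist_nonneg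
  set d₁ := dist x m with hd₁
  set d₂ := dist m y with hd₂
  have aux : ∀ s, 0 ≤ s → ∀ t, t ≤ dist x y → s ≤ t →
      dist ((fun t => if t ≤ d₁ then γ₁ t else γ₂ (t - d₁)) s)
        ((fun t => if t ≤ d₁ then γ₁ t else γ₂ (t - d₁)) t) = t - s := by
    intro s hs0 t htd hst
    rw [hd] at htd
    simp only
    by_cases hs : s ≤ d₁ <;> by_cases ht : t ≤ d₁
    · rw [if_pos hs, if_pos ht, hap s ⟨hs0, hs⟩ t ⟨by linarith, ht⟩,
        abs_of_nonpos (by linarith)]; ring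
    · push_neg at ht
      rw [if_pos hs, if_neg (not_le_of_gt ht)]
      have hu0 : 0 ≤ t - d₁ := by linarith
      have hud : t - d₁ ≤ d₂ := by linarith
      have e1 : dist (γ₁ s) m = d₁ - s := by
        have := hap s ⟨hs0, hs⟩ d₁ ⟨d₁0, le_rfl⟩
        rw [had] at this
        rw [this, abs_of_nonpos (by linarith)]; ring
      have e2 : dist m (γ₂ (t - d₁)) = t - d₁ := by
        have := hbp 0 ⟨le_rfl, d₂0⟩ (t - d₁) ⟨hu0, hud⟩
        rw [hb0] at this
        rw [this, abs_of_nonpos (by linarith)]; ring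
      have e3 : dist x (γ₁ s) = s := by
        have := hap 0 ⟨le_rfl, d₁0⟩ s ⟨hs0, hs⟩
        rw [ha0] at this
        rw [this, abs_of_nonpos (by linarith)]; ring
      have e4 : dist (γ₂ (t - d₁)) y = d₂ - (t - d₁) := by
        have := hbp (t - d₁) ⟨hu0, hud⟩ d₂ ⟨d₂0, le_rfl⟩
        rw [hbd] at this
        rw [this, abs_of_nonpos (by linarith)]; ring
      have hup : dist (γ₁ s) (γ₂ (t - d₁)) ≤ t - s := by
        calc dist (γ₁ s) (γ₂ (t - d₁)) ≤ dist (γ₁ s) m + dist m (γ₂ (t - d₁)) :=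
          dist_triangle _ _ _
        _ = t - s := by rw [e1, e2]; ring
      have hlow : t - s ≤ dist (γ₁ s) (γ₂ (t - d₁)) := by
        have := dist_triangle x (γ₁ s) y
        have h5 := dist_triangle (γ₁ s) (γ₂ (t - d₁)) y
        rw [hd] at this
        rw [e3] at this
        rw [e4] at h5
        linarith
      linarith
    · exfalso; push_neg at hs; linarith
    · push_neg at hs ht
      rw [if_neg (not_le_of_gt hs), if_neg (not_le_of_gt ht)]
      rw [hbp (s - d₁) ⟨by linarith, by linarith⟩ (t - d₁) ⟨by linarith, by linarith⟩,
        abs_of_nonpos (by linarith)]; ring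
  refine ⟨?_, ?_, ?_⟩
  · simp only [if_pos d₁0]; exact ha0
  · by_cases h : dist x y ≤ d₁
    · have hd20 : d₂ = 0 := by linarith [hd]
      have hmy : m = y := by
        have : dist m y = 0 := hd20
        exact dist_eq_zero.mp this
      simp only [if_pos h]
      have : dist x y = d₁ := by rw [hd, hd20, add_zero]
      rw [this, had, hmy]
    · simp only [if_neg h]
      have : dist x y - d₁ = d₂ := by rw [hd]; ring
      rw [this, hbd]
  · intro s hs t ht
    rcases le_total s t with h | h
    · rw [aux s hs.1 t ht.2 h, abs_of_nonpos (by linarith)]; ring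
    · rw [dist_comm, aux t ht.1 s hs.2 h, abs_of_nonneg (by linarith)]

end GenericGeo

/-- geodesic along the ray -/
lemma geo_seg_ray {u v : ℝ} (hu : 0 ≤ u) (huv : u ≤ v) :
    IsGeodesicSegment (fun τ => rp (u + τ)) (rp u) (rp v) := by
  have hv : 0 ≤ v := le_trans hu huv
  have hd : dist (rp u) (rp v) = v - u := by
    rw [dist_rp_rp hu hv, abs_of_nonpos (by linarith)]; ring
  refine ⟨by simp, ?_, ?_⟩
  · rw [hd]; show rp (u + (v - u)) = rp v; exact congrArg rp (by ring)
  · intro s hs t ht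
    rw [hd] at hs ht
    rw [dist_rp_rp (by linarith [hs.1]) (by linarith [ht.1]),
      show u + s - (u + t) = s - t by ring]

/-- geodesic along an arc -/
lemma geo_seg_arc (n : ℕ) {s t : ℝ} (hs0 : 0 ≤ s) (hst : s ≤ t) (htL : t ≤ Ln n)
    (hmin : t - s ≤ s + ell n + (Ln n - t)) :
    IsGeodesicSegment (fun τ => ap n (s + τ)) (ap n s) (ap n t) := by
  have hell := ell_pos n
  have hd : dist (ap n s) (ap n t) = t - s := by
    rw [dist_ap_ap n hs0 (le_trans hst htL) (le_trans hs0 hst) htL,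
      abs_of_nonpos (by linarith)]
    rw [min_eq_left (le_min (by linarith) (by linarith))]
    ring
  refine ⟨by simp, ?_, ?_⟩
  · rw [hd]; show ap n (s + (t - s)) = ap n t; exact congrArg (ap n) (by ring)
  · intro σ hσ τ hτ
    rw [hd] at hσ hτ
    have h1 : 0 ≤ s + σ := by linarith [hσ.1]
    have h2 : s + σ ≤ Ln n := by linarith [hσ.2]
    have h3 : 0 ≤ s + τ := by linarith [hτ.1]
    have h4 : s + τ ≤ Ln n := by linarith [hτ.2]
    rw [dist_ap_ap n h1 h2 h3 h4, show s + σ - (s + τ) = σ - τ by ring]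
    rcases abs_cases (σ - τ) with ⟨he, hge⟩ | ⟨he, hge⟩ <;>
      rw [min_eq_left (le_min (by rw [he]; linarith [hσ.2, hτ.1, hσ.1, hτ.2])
        (by rw [he]; linarith [hσ.2, hτ.1, hσ.1, hτ.2]))]

/-- geodesic between two ray points -/
lemma geo_ray_ray {u v : ℝ} (hu : 0 ≤ u) (hv : 0 ≤ v) :
    ∃ γ, IsGeodesicSegment γ (rp u) (rp v) := by
  rcases le_total u v with h | h
  · exact ⟨_, geo_seg_ray hu h⟩
  · exact ⟨_, geo_reverse (geo_seg_ray hv h)⟩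

/-- geodesic from a ray point to an arc point -/
lemma geo_ray_arc {u : ℝ} (hu : 0 ≤ u) (n : ℕ) {s : ℝ} (hs0 : 0 ≤ s) (hsL : s ≤ Ln n) :
    ∃ γ, IsGeodesicSegment γ (rp u) (ap n s) := by
  have hell := ell_pos n
  have hellL := ell_le_Ln n
  have h1 : |u - pa n| ≤ |u - qa n| + ell n := by
    have := abs_sub_le u (qa n) (pa n); rw [abs_qa_pa] at this; linarith
  have h2 : |u - qa n| ≤ |u - pa n| + ell n := by
    have := abs_sub_le u (pa n) (qa n); rw [abs_pa_qa] at this; linarith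
  rcases le_total (|u - pa n| + s) (|u - qa n| + (Ln n - s)) with hbr | hbr
  · -- via gate p
    have hs2 : s - 0 ≤ 0 + ell n + (Ln n - s) := by linarith
    have g2 : IsGeodesicSegment (fun τ => ap n (0 + τ)) (rp (pa n)) (ap n s) := by
      have := geo_seg_arc n le_rfl hs0 hsL hs2
      rwa [ap_zero] at this
    obtain ⟨γ₁, g1⟩ := geo_ray_ray hu (pa_nonneg n)
    have hdd : dist (rp u) (ap n s) = dist (rp u) (rp (pa n)) + dist (rp (pa n)) (ap n s) := by
      rw [dist_rp_ap hu n hs0 hsL, min_eq_left hbr, dist_rp_rp hu (pa_nonneg n),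
        dist_rp_ap (pa_nonneg n) n hs0 hsL, sub_self, abs_zero, zero_add, abs_pa_qa]
      rw [min_eq_left (by linarith)]
    exact ⟨_, geo_concat g1 g2 hdd⟩
  · -- via gate q
    have hs2 : Ln n - s ≤ s + ell n + (Ln n - Ln n) := by linarith
    have g2 := geo_reverse (geo_seg_arc n hs0 hsL le_rfl hs2)
    rw [ap_of_ge le_rfl] at g2
    obtain ⟨γ₁, g1⟩ := geo_ray_ray hu (qa_nonneg n)
    have hdd : dist (rp u) (ap n s) = dist (rp u) (rp (qa n)) + dist (rp (qa n)) (ap n s) := by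
      rw [dist_rp_ap hu n hs0 hsL, min_eq_right hbr, dist_rp_rp hu (qa_nonneg n),
        dist_rp_ap (qa_nonneg n) n hs0 hsL, sub_self, abs_zero, zero_add, abs_qa_pa]
      rw [min_eq_right (by linarith)]
    exact ⟨_, geo_concat g1 g2 hdd⟩

/-- geodesic from a ray point to anything -/
lemma geo_from_ray {u : ℝ} (hu : 0 ≤ u) (y : Xc) :
    ∃ γ, IsGeodesicSegment γ (rp u) y := by
  rcases repr_Xc y with ⟨v, hv, rfl⟩ | ⟨n, t, ht0, htL, rfl⟩
  · exact geo_ray_ray hu hv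
  · exact geo_ray_arc hu n (le_of_lt ht0) (le_of_lt htL)

theorem geodesic_space : GeodesicSpace Xc := by
  intro x y
  rcases repr_Xc x with ⟨u, hu, rfl⟩ | ⟨n, s, hs0, hsL, rfl⟩
  · exact geo_from_ray hu y
  rcases repr_Xc y with ⟨v, hv, rfl⟩ | ⟨m, t, ht0, htL, rfl⟩
  · obtain ⟨γ, hγ⟩ := geo_from_ray hv (ap n s)
    exact ⟨_, geo_reverse hγ⟩
  have helln := ell_pos n
  have hellLn := ell_le_Ln n
  have hellm := ell_pos m
  have hellLm := ell_le_Ln m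
  by_cases hnm : n = m
  · -- same arc
    subst hnm
    have hdist := dist_ap_ap n (le_of_lt hs0) (le_of_lt hsL) (le_of_lt ht0) (le_of_lt htL)
    rcases le_total |s - t|
        (min (s + ell n + (Ln n - t)) (t + ell n + (Ln n - s))) with hbr | hbr
    · -- direct geodesic along the arc
      rcases le_total s t with hst | hst
      · have h1 : |s - t| = t - s := by rw [abs_of_nonpos (by linarith)]; ring
        rw [h1] at hbr
        have := le_min_iff.mp hbr
        exact ⟨_, geo_seg_arc n (le_of_lt hs0) hst (le_of_lt htL) this.1⟩
      · have h1 : |s - t| = s - t := abs_of_nonneg (by linarith)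
        rw [h1] at hbr
        have := le_min_iff.mp hbr
        have h3 : s - t ≤ t + ell n + (Ln n - s) := this.2
        exact ⟨_, geo_reverse (geo_seg_arc n (le_of_lt ht0) hst (le_of_lt hsL)
          (by linarith))⟩
    · -- via the ray
      rcases le_total (s + ell n + (Ln n - t)) (t + ell n + (Ln n - s)) with h23 | h23
      · -- via gate p
        have hB : s + ell n + (Ln n - t) ≤ |s - t| := by
          rw [min_eq_left h23] at hbr; exact hbr
        have hst : s + ell n + (Ln n - t) ≤ t - s := by
          rcases abs_cases (s - t) with ⟨he, _⟩ | ⟨he, _⟩ <;> rw [he] at hB <;> linarith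
        have h5 : s - 0 ≤ 0 + ell n + (Ln n - s) := by linarith
        have hclimb := geo_reverse (geo_seg_arc n le_rfl (le_of_lt hs0) (le_of_lt hsL) h5)
        rw [ap_zero] at hclimb
        obtain ⟨γ₂, g2⟩ := geo_ray_arc (pa_nonneg n) n (le_of_lt ht0) (le_of_lt htL)
        have hdd : dist (ap n s) (ap n t) =
            dist (ap n s) (rp (pa n)) + dist (rp (pa n)) (ap n t) := by
          rw [hdist, dist_comm (ap n s),
            dist_rp_ap (pa_nonneg n) n (le_of_lt hs0) (le_of_lt hsL),
            dist_rp_ap (pa_nonneg n) n (le_of_lt ht0) (le_of_lt htL),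
            sub_self, abs_zero, zero_add, zero_add, abs_pa_qa]
          rw [min_eq_right hbr,
            min_eq_left h23, min_eq_left (by linarith), min_eq_right (by linarith)]
          ring
        exact ⟨_, geo_concat hclimb g2 hdd⟩
      · -- via gate q
        have hB : t + ell n + (Ln n - s) ≤ |s - t| := by
          rw [min_eq_right h23] at hbr; exact hbr
        have hst : t + ell n + (Ln n - s) ≤ s - t := by
          rcases abs_cases (s - t) with ⟨he, _⟩ | ⟨he, _⟩ <;> rw [he] at hB <;> linarith
        have h5 : Ln n - s ≤ s + ell n + (Ln n - Ln n) := by linarith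
        have hclimb := geo_seg_arc n (le_of_lt hs0) (le_of_lt hsL) le_rfl h5
        rw [ap_of_ge le_rfl] at hclimb
        obtain ⟨γ₂, g2⟩ := geo_ray_arc (qa_nonneg n) n (le_of_lt ht0) (le_of_lt htL)
        have hdd : dist (ap n s) (ap n t) =
            dist (ap n s) (rp (qa n)) + dist (rp (qa n)) (ap n t) := by
          rw [hdist, dist_comm (ap n s),
            dist_rp_ap (qa_nonneg n) n (le_of_lt hs0) (le_of_lt hsL),
            dist_rp_ap (qa_nonneg n) n (le_of_lt ht0) (le_of_lt htL),
            sub_self, abs_zero, zero_add, abs_qa_pa]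
          rw [min_eq_right hbr, min_eq_right h23,
            min_eq_right (by linarith), min_eq_left (by linarith)]
          ring
        exact ⟨_, geo_concat hclimb g2 hdd⟩
  · -- different arcs
    have hdist : dist (ap n s) (ap m t) =
        min (min (s + |pa n - pa m| + t) (s + |pa n - qa m| + (Ln m - t)))
            (min ((Ln n - s) + |qa n - pa m| + t) ((Ln n - s) + |qa n - qa m| + (Ln m - t))) := by
      rw [dist_def, ap_val hs0 hsL, ap_val ht0 htL]
      exact pd_arc_arc_ne hnm s t
    have habs1 : |pa n - pa m| ≤ ell n + |qa n - pa m| := by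
      have := abs_sub_le (pa n) (qa n) (pa m); rw [abs_pa_qa] at this; linarith
    have habs2 : |pa n - qa m| ≤ ell n + |qa n - qa m| := by
      have := abs_sub_le (pa n) (qa n) (qa m); rw [abs_pa_qa] at this; linarith
    have habs3 : |qa n - pa m| ≤ ell n + |pa n - pa m| := by
      have := abs_sub_le (qa n) (pa n) (pa m); rw [abs_qa_pa] at this; linarith
    have habs4 : |qa n - qa m| ≤ ell n + |pa n - qa m| := by
      have := abs_sub_le (qa n) (pa n) (qa m); rw [abs_qa_pa] at this; linarith
    rcases le_total (min (s + |pa n - pa m| + t) (s + |pa n - qa m| + (Ln m - t)))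
        (min ((Ln n - s) + |qa n - pa m| + t) ((Ln n - s) + |qa n - qa m| + (Ln m - t)))
        with hbr | hbr
    · -- exit via gate p of arc n
      have hs2 : s ≤ Ln n - s + ell n := by
        have hA := le_trans hbr (min_le_left _ _)
        have hB := le_trans hbr (min_le_right _ _)
        rcases le_total (s + |pa n - pa m| + t) (s + |pa n - qa m| + (Ln m - t)) with h | h
        · rw [min_eq_left h] at hA; linarith
        · rw [min_eq_right h] at hB; linarith
      have h5 : s - 0 ≤ 0 + ell n + (Ln n - s) := by linarith
      have hclimb := geo_reverse (geo_seg_arc n le_rfl (le_of_lt hs0) (le_of_lt hsL) h5)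
      rw [ap_zero] at hclimb
      obtain ⟨γ₂, g2⟩ := geo_ray_arc (pa_nonneg n) m (le_of_lt ht0) (le_of_lt htL)
      have hdd : dist (ap n s) (ap m t) =
          dist (ap n s) (rp (pa n)) + dist (rp (pa n)) (ap m t) := by
        rw [hdist, dist_comm (ap n s),
          dist_rp_ap (pa_nonneg n) n (le_of_lt hs0) (le_of_lt hsL),
          dist_rp_ap (pa_nonneg n) m (le_of_lt ht0) (le_of_lt htL),
          sub_self, abs_zero, zero_add, abs_pa_qa]
        rw [min_eq_left hbr, min_eq_left (show s ≤ ell n + (Ln n - s) by linarith)]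
        rw [show s + |pa n - pa m| + t = s + (|pa n - pa m| + t) by ring,
          show s + |pa n - qa m| + (Ln m - t) = s + (|pa n - qa m| + (Ln m - t)) by ring,
          min_add_add_left]
      exact ⟨_, geo_concat hclimb g2 hdd⟩
    · -- exit via gate q of arc n
      have hs2 : Ln n - s ≤ s + ell n := by
        have hA := le_trans hbr (min_le_left _ _)
        have hB := le_trans hbr (min_le_right _ _)
        rcases le_total ((Ln n - s) + |qa n - pa m| + t)
            ((Ln n - s) + |qa n - qa m| + (Ln m - t)) with h | h
        · rw [min_eq_left h] at hA; linarith
        · rw [min_eq_right h] at hB; linarith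
      have h5 : Ln n - s ≤ s + ell n + (Ln n - Ln n) := by linarith
      have hclimb := geo_seg_arc n (le_of_lt hs0) (le_of_lt hsL) le_rfl h5
      rw [ap_of_ge le_rfl] at hclimb
      obtain ⟨γ₂, g2⟩ := geo_ray_arc (qa_nonneg n) m (le_of_lt ht0) (le_of_lt htL)
      have hdd : dist (ap n s) (ap m t) =
          dist (ap n s) (rp (qa n)) + dist (rp (qa n)) (ap m t) := by
        rw [hdist, dist_comm (ap n s),
          dist_rp_ap (qa_nonneg n) n (le_of_lt hs0) (le_of_lt hsL),
          dist_rp_ap (qa_nonneg n) m (le_of_lt ht0) (le_of_lt htL),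
          sub_self, abs_zero, zero_add, abs_qa_pa]
        rw [min_eq_right hbr, min_eq_right (show ell n + s ≥ Ln n - s by linarith)]
        rw [show (Ln n - s) + |qa n - pa m| + t = (Ln n - s) + (|qa n - pa m| + t) by ring,
          show (Ln n - s) + |qa n - qa m| + (Ln m - t) =
            (Ln n - s) + (|qa n - qa m| + (Ln m - t)) by ring,
          min_add_add_left]
      exact ⟨_, geo_concat hclimb g2 hdd⟩

/-- the geodesic ray -/
def gray : ℝ → Xc := fun t => rp t

/-- the image of the ray -/
def Im : Set Xc := gray '' Set.Ici 0

lemma mem_Im {u : ℝ} (hu : 0 ≤ u) : rp u ∈ Im := ⟨u, hu, rfl⟩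

lemma Im_iff {x : Xc} : x ∈ Im ↔ ∃ u, 0 ≤ u ∧ x = rp u := by
  constructor
  · rintro ⟨u, hu, rfl⟩; exact ⟨u, hu, rfl⟩
  · rintro ⟨u, hu, rfl⟩; exact mem_Im hu

lemma gray_isray : IsGeodesicRay gray := by
  intro s hs t ht
  exact dist_rp_rp hs ht

lemma Im_nonempty : Im.Nonempty := ⟨rp 0, mem_Im le_rfl⟩

def pdepth : P → ℝ
  | P.ray _ => 0
  | P.arc n s => min s (Ln n - s)

def depth (x : Xc) : ℝ := pdepth x.1

lemma depth_nonneg (x : Xc) : 0 ≤ depth x := by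
  obtain ⟨v, hv⟩ := x
  rcases v with u | ⟨n, s⟩
  · exact le_rfl
  · exact le_min (le_of_lt hv.1) (by linarith [hv.2])

lemma depth_rp {u : ℝ} (hu : 0 ≤ u) : depth (rp u) = 0 := by
  unfold depth
  rw [rp_val hu]
  simp [pdepth]

lemma depth_ap {n : ℕ} {s : ℝ} (h1 : 0 < s) (h2 : s < Ln n) :
    depth (ap n s) = min s (Ln n - s) := by
  unfold depth
  rw [ap_val h1 h2]
  simp [pdepth]

/-- every point of the ray is at distance at least `depth x` from `x` -/
lemma dist_ge_depth (x : Xc) {u : ℝ} (hu : 0 ≤ u) : depth x ≤ dist x (rp u) := by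
  rcases repr_Xc x with ⟨v, hv, rfl⟩ | ⟨n, s, hs0, hsL, rfl⟩
  · rw [depth_rp hv]; exact dist_nonneg
  · rw [depth_ap hs0 hsL, dist_comm, dist_rp_ap hu n (le_of_lt hs0) (le_of_lt hsL)]
    refine le_min ?_ ?_
    · exact le_trans (min_le_left _ _) (by linarith [abs_nonneg (u - pa n)])
    · exact le_trans (min_le_right _ _) (by linarith [abs_nonneg (u - qa n)])

lemma le_infDist_Im {x : Xc} {b : ℝ} (h : ∀ u, 0 ≤ u → b ≤ dist x (rp u)) :
    b ≤ Metric.infDist x Im := by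
  rw [Metric.infDist_eq_iInf]
  have : Nonempty Im := ⟨⟨rp 0, mem_Im le_rfl⟩⟩
  refine le_ciInf ?_
  rintro ⟨y, hy⟩
  obtain ⟨u, hu, rfl⟩ := Im_iff.mp hy
  exact h u hu

lemma depth_le_infDist (x : Xc) : depth x ≤ Metric.infDist x Im :=
  le_infDist_Im fun u hu => dist_ge_depth x hu

lemma infDist_le_depth (x : Xc) : Metric.infDist x Im ≤ depth x := by
  rcases repr_Xc x with ⟨v, hv, rfl⟩ | ⟨n, s, hs0, hsL, rfl⟩
  · rw [depth_rp hv]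
    have := Metric.infDist_le_dist_of_mem (mem_Im hv) (x := rp v)
    rwa [dist_self] at this
  · rw [depth_ap hs0 hsL]
    have helln := ell_pos n
    rcases le_total s (Ln n - s) with h | h
    · rw [min_eq_left h]
      have hd : dist (ap n s) (rp (pa n)) = min s (ell n + (Ln n - s)) := by
        rw [dist_comm, dist_rp_ap (pa_nonneg n) n (le_of_lt hs0) (le_of_lt hsL),
          sub_self, abs_zero, zero_add, abs_pa_qa]
      refine le_trans (Metric.infDist_le_dist_of_mem (mem_Im (pa_nonneg n))) ?_
      rw [hd]
      exact min_le_left _ _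
    · rw [min_eq_right h]
      have hd : dist (ap n s) (rp (qa n)) = min (ell n + s) (Ln n - s) := by
        rw [dist_comm, dist_rp_ap (qa_nonneg n) n (le_of_lt hs0) (le_of_lt hsL),
          sub_self, abs_zero, zero_add, abs_qa_pa]
      refine le_trans (Metric.infDist_le_dist_of_mem (mem_Im (qa_nonneg n))) ?_
      rw [hd]
      exact min_le_right _ _

/-- `x` lies on arc `n` -/
def onA (n : ℕ) (x : Xc) : Prop := ∃ s, x.1 = P.arc n s

def pcoord : P → ℝ
  | P.ray t => t
  | P.arc _ s => s

def coord (x : Xc) : ℝ := pcoord x.1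

lemma onA_spec {n : ℕ} {x : Xc} (h : onA n x) :
    0 < coord x ∧ coord x < Ln n ∧ x = ap n (coord x) ∧
      depth x = min (coord x) (Ln n - coord x) := by
  obtain ⟨s, hs⟩ := h
  obtain ⟨v, hv⟩ := x
  simp only at hs
  subst hs
  refine ⟨hv.1, hv.2, ?_, ?_⟩
  · exact Subtype.ext (by
      rw [show coord (⟨P.arc n s, hv⟩ : Xc) = s by simp [coord, pcoord], ap_val hv.1 hv.2])
  · simp [depth, coord, pdepth, pcoord]

lemma depth_pos_onA {x : Xc} (h : 0 < depth x) : ∃ n, onA n x := by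
  obtain ⟨v, hv⟩ := x
  rcases v with u | ⟨n, s⟩
  · exact absurd h (by rw [show depth ⟨P.ray u, hv⟩ = 0 from rfl]; exact lt_irrefl 0)
  · exact ⟨n, s, rfl⟩

/-- distance between points on the same arc -/
lemma dist_onA_same {n : ℕ} {x y : Xc} (hx : onA n x) (hy : onA n y) :
    dist x y = min |coord x - coord y|
      (min (coord x + ell n + (Ln n - coord y)) (coord y + ell n + (Ln n - coord x))) := by
  obtain ⟨s, hs⟩ := hx
  obtain ⟨t, ht⟩ := hy
  have hxv := x.2; rw [hs] at hxv
  have hyv := y.2; rw [ht] at hyv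
  have hcx : coord x = s := by unfold coord; rw [hs]; simp [pcoord]
  have hcy : coord y = t := by unfold coord; rw [ht]; simp [pcoord]
  rw [hcx, hcy, dist_def, hs, ht]
  exact pd_arc_arc_same n (le_of_lt hxv.1) (le_of_lt hxv.2) (le_of_lt hyv.1) (le_of_lt hyv.2)

/-- points on different arcs are far apart -/
lemma dist_onA_ne {n m : ℕ} {x y : Xc} (hx : onA n x) (hy : onA m y) (h : n ≠ m) :
    depth x + depth y ≤ dist x y := by
  obtain ⟨s, hs⟩ := hx
  obtain ⟨t, ht⟩ := hy
  have hd : dist x y = pd (P.arc n s) (P.arc m t) := by rw [dist_def, hs, ht]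
  have hdx : depth x = min s (Ln n - s) := by unfold depth; rw [hs]; rfl
  have hdy : depth y = min t (Ln m - t) := by unfold depth; rw [ht]; rfl
  rw [hd, hdx, hdy, pd_arc_arc_ne h s t]
  have b1 := abs_nonneg (pa n - pa m)
  have b2 := abs_nonneg (pa n - qa m)
  have b3 := abs_nonneg (qa n - pa m)
  have b4 := abs_nonneg (qa n - qa m)
  refine le_min (le_min ?_ ?_) (le_min ?_ ?_) <;>
    · have m1 := min_le_left s (Ln n - s)
      have m2 := min_le_right s (Ln n - s)
      have m3 := min_le_left t (Ln m - t)
      have m4 := min_le_right t (Ln m - t)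
      linarith

/-- depth is 1-Lipschitz -/
lemma depth_lip (x y : Xc) : depth x ≤ depth y + dist x y := by
  rcases le_or_gt (depth x) 0 with h | h
  · exact le_trans h (by linarith [depth_nonneg y, dist_nonneg (x := x) (y := y)])
  obtain ⟨n, hn⟩ := depth_pos_onA h
  rcases repr_Xc y with ⟨v, hv, rfl⟩ | ⟨m, t, ht0, htL, rfl⟩
  · rw [depth_rp hv]
    linarith [dist_ge_depth x hv]
  · have hym : onA m (ap m t) := ⟨t, by rw [ap_val ht0 htL]⟩
    by_cases hnm : n = m
    · subst hnm
      obtain ⟨hx1, hx2, _, hx4⟩ := onA_spec hn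
      obtain ⟨hy1, hy2, _, hy4⟩ := onA_spec hym
      rw [dist_onA_same hn hym, hx4, hy4]
      have he := ell_pos n
      rcases abs_cases (coord x - coord (ap n t)) with ⟨h1, h2⟩ | ⟨h1, h2⟩ <;> rw [h1] <;>
        · simp only [min_def]; split_ifs <;> linarith
    · have := dist_onA_ne hn hym hnm
      linarith [depth_nonneg (ap m t)]

lemma min_le_half {a b : ℝ} : min a b ≤ (a + b) / 2 := by
  rcases min_cases a b with ⟨h, h'⟩ | ⟨h, h'⟩ <;> rw [h] <;> linarith

lemma same_arc_of_close {n : ℕ} {x y : Xc} (hx : onA n x) (hdy : 0 < depth y)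
    (hcl : dist x y < depth x + depth y) : onA n y := by
  obtain ⟨m, hm⟩ := depth_pos_onA hdy
  by_cases h : n = m
  · subst h; exact hm
  · exact absurd (dist_onA_ne hx hm h) (by linarith)

lemma coord_close {n : ℕ} {x y : Xc} (hx : onA n x) (hy : onA n y)
    (h : dist x y < depth x + depth y) : |coord x - coord y| ≤ dist x y := by
  have hds := dist_onA_same hx hy
  obtain ⟨hx1, hx2, _, hx4⟩ := onA_spec hx
  obtain ⟨hy1, hy2, _, hy4⟩ := onA_spec hy
  have hell := ell_pos n
  have hB : depth x + depth y ≤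
      min (coord x + ell n + (Ln n - coord y)) (coord y + ell n + (Ln n - coord x)) := by
    rw [hx4, hy4]
    have m1 := min_le_left (coord x) (Ln n - coord x)
    have m2 := min_le_right (coord x) (Ln n - coord x)
    have m3 := min_le_left (coord y) (Ln n - coord y)
    have m4 := min_le_right (coord y) (Ln n - coord y)
    exact le_min (by linarith) (by linarith)
  rcases le_total |coord x - coord y|
      (min (coord x + ell n + (Ln n - coord y)) (coord y + ell n + (Ln n - coord x)))
      with hc | hc
  · rw [hds, min_eq_left hc]
  · rw [hds, min_eq_right hc] at h
    linarith [le_trans hB hc]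

lemma dist_le_coord {n : ℕ} {x y : Xc} (hx : onA n x) (hy : onA n y) :
    dist x y ≤ |coord x - coord y| := by
  rw [dist_onA_same hx hy]; exact min_le_left _ _

lemma dist_le_via_p {n : ℕ} {x y : Xc} (hx : onA n x) (hy : onA n y) :
    dist x y ≤ coord x + ell n + (Ln n - coord y) := by
  rw [dist_onA_same hx hy]
  exact le_trans (min_le_right _ _) (min_le_left _ _)

lemma dist_le_via_q {n : ℕ} {x y : Xc} (hx : onA n x) (hy : onA n y) :
    dist x y ≤ coord y + ell n + (Ln n - coord x) := by
  rw [dist_onA_same hx hy]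
  exact le_trans (min_le_right _ _) (min_le_right _ _)

/-- the Morse gauge -/
def Nf (lam eps : ℝ) : ℝ :=
  (2*eps+2) + ((2*eps+2) + lam^2*((2*eps+2)+eps) + eps)
    + (2*(2*eps+2) + 2*lam^2*(1+eps)*(2*(2*eps+2)+eps) + 2*lam^2*(1+eps))^2/2
    + (1+eps) + 1


set_option maxHeartbeats 2000000 in
theorem morse : IsMorseWith Nf Im := by
  classical
  intro lam eps hlam heps a b hab σ hqg ha hb t htIcc
  have hlam0 : (0:ℝ) < lam := by linarith
  have hup : ∀ s ∈ Icc a b, ∀ s' ∈ Icc a b, dist (σ s) (σ s') ≤ lam * |s - s'| + eps :=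
    fun s hs s' hs' => (hqg s hs s' hs').2
  have hlow : ∀ s ∈ Icc a b, ∀ s' ∈ Icc a b, |s - s'| ≤ lam * (dist (σ s) (σ s') + eps) := by
    intro s hs s' hs'
    have h := (hqg s hs s' hs').1
    have h2 : (1/lam) * |s - s'| ≤ dist (σ s) (σ s') + eps := by linarith
    calc |s - s'| = lam * ((1/lam) * |s - s'|) := by field_simp
    _ ≤ lam * (dist (σ s) (σ s') + eps) := mul_le_mul_of_nonneg_left h2 (le_of_lt hlam0)
  obtain ⟨ua, hua, hae⟩ := Im_iff.mp ha
  obtain ⟨ub, hub, hbe⟩ := Im_iff.mp hb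
  have hda : depth (σ a) = 0 := by rw [hae]; exact depth_rp hua
  have hdb : depth (σ b) = 0 := by rw [hbe]; exact depth_rp hub
  have haI : a ∈ Icc a b := ⟨le_rfl, hab⟩
  have hbI : b ∈ Icc a b := ⟨hab, le_rfl⟩
  suffices hdep : depth (σ t) ≤ Nf lam eps from le_trans (infDist_le_depth _) hdep
  by_cases hT : lam * (b - a) ≤ 1
  · have h1 : dist (σ t) (σ a) ≤ lam * |t - a| + eps := hup t htIcc a haI
    have h2 : |t - a| ≤ b - a := by
      rw [abs_of_nonneg (by linarith [htIcc.1])]; linarith [htIcc.2]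
    have h3 : depth (σ t) ≤ depth (σ a) + dist (σ t) (σ a) := depth_lip _ _
    have hNf : 1 + eps ≤ Nf lam eps := by
      unfold Nf
      have h4 : (0:ℝ) ≤
          (2*(2*eps+2) + 2*lam^2*(1+eps)*(2*(2*eps+2)+eps) + 2*lam^2*(1+eps))^2/2 := by
        positivity
      have h5 : (0:ℝ) ≤ lam^2*((2*eps+2)+eps) := by positivity
      linarith
    have h5 : lam * |t - a| ≤ 1 :=
      le_trans (mul_le_mul_of_nonneg_left h2 (le_of_lt hlam0)) hT
    rw [hda] at h3
    linarith
  push_neg at hT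
  have hba : 0 < b - a := by nlinarith
  set k := ⌈lam * (b - a)⌉₊ with hk
  have hk1 : lam * (b - a) ≤ (k:ℝ) := Nat.le_ceil _
  have hkpos : 0 < k := by rw [hk]; exact Nat.ceil_pos.mpr (by linarith)
  have hk0 : (0:ℝ) < (k:ℝ) := by exact_mod_cast hkpos
  have hk2 : (k:ℝ) ≤ 2 * lam * (b - a) := by
    have h6 := (Nat.ceil_lt_add_one (show (0:ℝ) ≤ lam * (b-a) by nlinarith)).le
    rw [← hk] at h6
    linarith
  set st := (b - a) / (k:ℝ) with hst
  have hst0 : 0 < st := div_pos hba hk0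
  have hks : (k:ℝ) * st = b - a := by rw [hst]; field_simp
  have hstle : lam * st ≤ 1 := by
    rw [hst, show lam * ((b-a)/(k:ℝ)) = (lam*(b-a))/(k:ℝ) by ring, div_le_one hk0]
    exact hk1
  have hstge : 1 ≤ 2 * lam * st := by
    rw [hst, show 2 * lam * ((b-a)/(k:ℝ)) = (2*lam*(b-a))/(k:ℝ) by ring,
      le_div_iff₀ hk0, one_mul]
    exact hk2
  set v : ℕ → ℝ := fun j => a + j * st with hv
  have hvIcc : ∀ j : ℕ, j ≤ k → v j ∈ Icc a b := by
    intro j hj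
    have hjk : (j:ℝ) ≤ (k:ℝ) := by exact_mod_cast hj
    have hj0 : (0:ℝ) ≤ (j:ℝ) := Nat.cast_nonneg j
    constructor
    · simp only [hv]; nlinarith
    · simp only [hv]; nlinarith
  have hv0 : v 0 = a := by simp [hv]
  have hvk : v k = b := by simp only [hv]; linarith
  have hvmono : ∀ i j : ℕ, i ≤ j → v i ≤ v j := by
    intro i j hij
    simp only [hv]
    have h7 : (i:ℝ) ≤ (j:ℝ) := by exact_mod_cast hij
    nlinarith
  have hvstep : ∀ j : ℕ, v (j+1) - v j = st := by
    intro j; simp only [hv]; push_cast; ring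
  have hstepd : ∀ j : ℕ, j + 1 ≤ k → dist (σ (v (j+1))) (σ (v j)) ≤ 1 + eps := by
    intro j hj
    have h1 := hup (v (j+1)) (hvIcc _ hj) (v j) (hvIcc _ (by omega))
    have h2 : |v (j+1) - v j| = st := by rw [hvstep j, abs_of_pos hst0]
    rw [h2] at h1
    linarith
  obtain ⟨C2, hC2⟩ : ∃ x : ℝ, x = 2*eps+2 := ⟨2*eps+2, rfl⟩
  have hsq0 : (0:ℝ) ≤ (2*C2 + 2*lam^2*(1+eps)*(2*C2+eps) + 2*lam^2*(1+eps))^2/2 := by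
    rw [hC2]; positivity
  have key : ∀ js, js ≤ k → depth (σ (v js)) ≤
      C2 + (C2 + lam^2*(C2+eps) + eps)
        + (2*C2 + 2*lam^2*(1+eps)*(2*C2+eps) + 2*lam^2*(1+eps))^2/2 := by
    intro js hjs
    have hpos1 : (0:ℝ) ≤ lam^2*(C2+eps) := by rw [hC2]; positivity
    have hC2nn0 : (0:ℝ) ≤ C2 := by rw [hC2]; linarith
    by_cases hd : depth (σ (v js)) ≤ C2
    · linarith
    push_neg at hd
    have hdpos : 0 < depth (σ (v js)) := by linarith
    obtain ⟨n, hn⟩ := depth_pos_onA hdpos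
    set P : ℕ → Prop := fun j => depth (σ (v j)) ≤ eps + 1 with hP
    have hP0 : P 0 := by show depth (σ (v 0)) ≤ eps + 1; rw [hv0, hda]; linarith
    set j1 := Nat.findGreatest P js with hj1def
    have hj1P : P j1 := Nat.findGreatest_spec (Nat.zero_le js) hP0
    have hj1le : j1 ≤ js := Nat.findGreatest_le js
    have hnotPjs : ¬ P js := by
      show ¬ depth (σ (v js)) ≤ eps + 1
      push_neg
      rw [hC2] at hd
      linarith
    have hj1lt : j1 < js := lt_of_le_of_ne hj1le (fun h => hnotPjs (h ▸ hj1P))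
    have hGr1 : ∀ j, j1 < j → j ≤ js → ¬ P j := fun j h h' =>
      Nat.findGreatest_is_greatest h h'
    have hQw : P (js + (k - js)) := by
      rw [show js + (k - js) = k from by omega]
      show depth (σ (v k)) ≤ eps + 1
      rw [hvk, hdb]; linarith
    have hQex : ∃ i, P (js + i) := ⟨k - js, hQw⟩
    set i2 := Nat.find hQex with hi2def
    set j2 := js + i2 with hj2def
    have hj2P : P j2 := Nat.find_spec hQex
    have hi2pos : 0 < i2 := by
      rcases Nat.eq_zero_or_pos i2 with h | h
      · exfalso
        apply hnotPjs
        have h8 := hj2P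
        rw [hj2def, h, Nat.add_zero] at h8
        exact h8
      · exact h
    have hj2le : j2 ≤ k := by
      have h9 : i2 ≤ k - js := Nat.find_min' hQex hQw
      omega
    have hjslt2 : js < j2 := by omega
    have hGr2 : ∀ j, js ≤ j → j < j2 → ¬ P j := by
      intro j h h'
      have h2' : j - js < i2 := by omega
      have h3' := Nat.find_min hQex h2'
      rwa [show js + (j - js) = j from by omega] at h3'
    have hmid : ∀ j, j1 < j → j < j2 → eps + 1 < depth (σ (v j)) := by
      intro j h h'
      rcases le_or_gt j js with hle | hlt
      · exact not_le.mp (hGr1 j h hle)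
      · exact not_le.mp (hGr2 j (le_of_lt hlt) h')
    have down : ∀ i : ℕ, j1 < js - i → onA n (σ (v (js - i))) := by
      intro i
      induction i with
      | zero => intro _; simpa using hn
      | succ i ih =>
        intro hlt
        have hlt' : j1 < js - i := by omega
        have prev := ih hlt'
        have heq : js - i = (js - (i+1)) + 1 := by omega
        rw [heq] at prev
        have h1 : eps + 1 < depth (σ (v (js - (i+1)))) := hmid _ hlt (by omega)
        have h2 : eps + 1 < depth (σ (v ((js - (i+1)) + 1))) := by
          rw [← heq]; exact hmid _ hlt' (by omega)
        have hdist := hstepd (js - (i+1)) (by omega)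
        exact same_arc_of_close prev (by linarith) (by linarith)
    have up : ∀ i : ℕ, js + i < j2 → onA n (σ (v (js + i))) := by
      intro i
      induction i with
      | zero => intro _; simpa using hn
      | succ i ih =>
        intro hlt
        have prev := ih (by omega)
        have h1 : eps + 1 < depth (σ (v (js + i))) := hmid _ (by omega) (by omega)
        have h2 : eps + 1 < depth (σ (v (js + (i+1)))) := hmid _ (by omega) hlt
        have hdist := hstepd (js + i) (by omega)
        rw [dist_comm] at hdist
        have heq : js + (i+1) = (js + i) + 1 := by omega
        rw [heq]
        rw [heq] at h2
        exact same_arc_of_close prev (by linarith) (by linarith)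
    have hchain : ∀ j, j1 < j → j < j2 → onA n (σ (v j)) := by
      intro j h h'
      rcases le_or_gt j js with hle | hlt
      · have h10 := down (js - j) (by omega)
        rwa [show js - (js - j) = j from by omega] at h10
      · have h10 := up (j - js) (by omega)
        rwa [show js + (j - js) = j from by omega] at h10
    have hcoordstep : ∀ j, j1 < j → j + 1 < j2 →
        |coord (σ (v (j+1))) - coord (σ (v j))| ≤ 1 + eps := by
      intro j h h'
      have hx := hchain (j+1) (by omega) h'
      have hy := hchain j h (by omega)
      have h1 := hmid (j+1) (by omega) h'
      have h2 := hmid j h (by omega)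
      have hdd := hstepd j (by omega)
      exact le_trans (coord_close hx hy (by linarith)) hdd
    set e1 := coord (σ (v (j1+1))) with he1
    set e2 := coord (σ (v (j2-1))) with he2
    have htele : ∀ i : ℕ, j1 + 1 + i < j2 →
        |coord (σ (v (j1+1+i))) - e1| ≤ (i:ℝ) * (1+eps) := by
      intro i
      induction i with
      | zero => intro _; simp [he1]
      | succ i ih =>
        intro h
        have ih' := ih (by omega)
        have hstep := hcoordstep (j1+1+i) (by omega) (by omega)
        have heq : j1+1+(i+1) = (j1+1+i)+1 := by omega
        rw [heq]
        calc |coord (σ (v ((j1+1+i)+1))) - e1|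
            ≤ |coord (σ (v ((j1+1+i)+1))) - coord (σ (v (j1+1+i)))|
              + |coord (σ (v (j1+1+i))) - e1| := abs_sub_le _ _ _
        _ ≤ (1+eps) + (i:ℝ)*(1+eps) := add_le_add hstep ih'
        _ = ((i+1:ℕ):ℝ)*(1+eps) := by push_cast; ring
    have hch1 : onA n (σ (v (j1+1))) := hchain _ (by omega) (by omega)
    have hch2 : onA n (σ (v (j2-1))) := hchain _ (by omega) (by omega)
    obtain ⟨he1a, he1b, _, he1d⟩ := onA_spec hch1
    obtain ⟨he2a, he2b, _, he2d⟩ := onA_spec hch2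
    have hdu1 : depth (σ (v (j1+1))) ≤ C2 := by
      have h3 := depth_lip (σ (v (j1+1))) (σ (v j1))
      have h4 := hstepd j1 (by omega)
      have h5 : depth (σ (v j1)) ≤ eps + 1 := hj1P
      rw [hC2]; linarith
    have hdu2 : depth (σ (v (j2-1))) ≤ C2 := by
      have h3 := depth_lip (σ (v (j2-1))) (σ (v j2))
      have h4 := hstepd (j2-1) (by omega)
      rw [show (j2-1)+1 = j2 from by omega] at h4
      rw [dist_comm] at h4
      have h5 : depth (σ (v j2)) ≤ eps + 1 := hj2P
      rw [hC2]; linarith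
    obtain ⟨hsa, hsb, _, hsd⟩ := onA_spec hn
    have hdhalf : depth (σ (v js)) ≤ Ln n / 2 := by
      rw [hsd]
      linarith [min_le_half (a := coord (σ (v js))) (b := Ln n - coord (σ (v js)))]
    have hujs1 : v (j1+1) ≤ v js := hvmono _ _ (by omega)
    have hujs2 : v js ≤ v (j2-1) := hvmono _ _ (by omega)
    have hI1 : v (j1+1) ∈ Icc a b := hvIcc _ (by omega)
    have hI2 : v (j2-1) ∈ Icc a b := hvIcc _ (by omega)
    have hIjs : v js ∈ Icc a b := hvIcc _ hjs
    have hellpos := ell_pos n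
    have hell3 := ell_ge3 n
    have hLsq := Ln_eq_sq n
    have hC2nn : (0:ℝ) ≤ C2 := by rw [hC2]; linarith
    have caseA : |e1 - e2| ≤ C2 →
        depth (σ (v js)) ≤ C2 + lam^2*(C2+eps) + eps := by
      intro hee
      have hd12 : dist (σ (v (j1+1))) (σ (v (j2-1))) ≤ C2 :=
        le_trans (dist_le_coord hch1 hch2) hee
      have hdnn : (0:ℝ) ≤ dist (σ (v (j1+1))) (σ (v (j2-1))) := dist_nonneg
      have ht12 : v (j2-1) - v (j1+1) ≤ lam * (C2 + eps) := by
        have h11 := hlow (v (j2-1)) hI2 (v (j1+1)) hI1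
        rw [abs_of_nonneg (by linarith)] at h11
        rw [dist_comm] at h11
        have h12 := mul_le_mul_of_nonneg_left
          (show dist (σ (v (j1+1))) (σ (v (j2-1))) + eps ≤ C2 + eps by linarith)
          (le_of_lt hlam0)
        linarith
      have hmd : dist (σ (v js)) (σ (v (j1+1))) ≤ lam * (v js - v (j1+1)) + eps := by
        have h12 := hup (v js) hIjs (v (j1+1)) hI1
        rwa [abs_of_nonneg (by linarith)] at h12
      have h13 : lam * (v js - v (j1+1)) ≤ lam * (lam * (C2 + eps)) :=
        mul_le_mul_of_nonneg_left (by linarith) (le_of_lt hlam0)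
      have h13b : lam * (v js - v (j1+1)) ≤ lam^2 * (C2 + eps) :=
        h13.trans_eq (by ring)
      have h6 := depth_lip (σ (v js)) (σ (v (j1+1)))
      linarith
    have caseB : dist (σ (v (j1+1))) (σ (v (j2-1))) ≤ 2*C2 + ell n →
        Ln n - 2*C2 ≤ |e1 - e2| →
        depth (σ (v js)) ≤
          (2*C2 + 2*lam^2*(1+eps)*(2*C2+eps) + 2*lam^2*(1+eps))^2/2 := by
      intro hd12 hcross
      set m := (j2 - 1) - (j1 + 1) with hm
      have hmtele := htele m (by omega)
      rw [show j1+1+m = j2-1 from by omega] at hmtele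
      have habs2 : |e1 - e2| ≤ (m:ℝ)*(1+eps) := by
        rw [abs_sub_comm]; exact hmtele
      have hdnn : (0:ℝ) ≤ dist (σ (v (j1+1))) (σ (v (j2-1))) := dist_nonneg
      have htime : v (j2-1) - v (j1+1) ≤ lam * (2*C2 + ell n + eps) := by
        have h11 := hlow (v (j2-1)) hI2 (v (j1+1)) hI1
        rw [abs_of_nonneg (by linarith [hvmono (j1+1) (j2-1) (by omega)])] at h11
        rw [dist_comm] at h11
        have h12 := mul_le_mul_of_nonneg_left
          (show dist (σ (v (j1+1))) (σ (v (j2-1))) + eps ≤ 2*C2 + ell n + eps by linarith)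
          (le_of_lt hlam0)
        linarith
      have hmst : (m:ℝ) * st = v (j2-1) - v (j1+1) := by
        simp only [hv, hm]
        rw [Nat.cast_sub (by omega : j1+1 ≤ j2-1)]
        push_cast [Nat.cast_sub (by omega : 1 ≤ j2)]
        ring
      have hmnn : (0:ℝ) ≤ (m:ℝ) := Nat.cast_nonneg m
      have hmbound : (m:ℝ) ≤ 2*lam*(lam*(2*C2 + ell n + eps)) := by
        have h8 : (m:ℝ) ≤ 2*lam*((m:ℝ)*st) := by
          calc (m:ℝ) = (m:ℝ)*1 := by ring
          _ ≤ (m:ℝ)*(2*lam*st) := mul_le_mul_of_nonneg_left hstge hmnn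
          _ = 2*lam*((m:ℝ)*st) := by ring
        rw [hmst] at h8
        have h9' := mul_le_mul_of_nonneg_left htime
          (show (0:ℝ) ≤ 2*lam by linarith)
        linarith
      have hLle : Ln n - 2*C2 ≤ (m:ℝ)*(1+eps) := le_trans (by linarith) habs2
      have hLm : (m:ℝ)*(1+eps) ≤ 2*lam^2*(1+eps)*(2*C2+eps) + 2*lam^2*(1+eps)*(ell n) := by
        have h15' := mul_le_mul_of_nonneg_right hmbound (show (0:ℝ) ≤ 1+eps by linarith)
        have he : (2*lam*(lam*(2*C2 + ell n + eps)))*(1+eps)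
            = 2*lam^2*(1+eps)*(2*C2+eps) + 2*lam^2*(1+eps)*(ell n) := by ring
        linarith [h15'.trans_eq he]
      have hL : ell n ^ 2 ≤ 2*C2 + 2*lam^2*(1+eps)*(2*C2+eps) + 2*lam^2*(1+eps)*(ell n) := by
        rw [← hLsq]
        linarith
      have hA0 : (0:ℝ) ≤ 2*C2 + 2*lam^2*(1+eps)*(2*C2+eps) := by
        rw [hC2]; positivity
      have hAell : 2*C2 + 2*lam^2*(1+eps)*(2*C2+eps)
          ≤ (2*C2 + 2*lam^2*(1+eps)*(2*C2+eps)) * ell n :=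
        le_mul_of_one_le_right hA0 (by linarith)
      have h9 : ell n * ell n ≤
          (2*C2 + 2*lam^2*(1+eps)*(2*C2+eps) + 2*lam^2*(1+eps)) * ell n := by
        have hx : ell n * ell n = ell n ^ 2 := (sq (ell n)).symm
        have hy : (2*C2 + 2*lam^2*(1+eps)*(2*C2+eps) + 2*lam^2*(1+eps)) * ell n
            = (2*C2 + 2*lam^2*(1+eps)*(2*C2+eps)) * ell n + 2*lam^2*(1+eps)*(ell n) := by
          ring
        rw [hx, hy]
        linarith
      have hellb : ell n ≤ 2*C2 + 2*lam^2*(1+eps)*(2*C2+eps) + 2*lam^2*(1+eps) :=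
        le_of_mul_le_mul_right h9 (by linarith : (0:ℝ) < ell n)
      have hlmax0 : (0:ℝ) ≤ 2*C2 + 2*lam^2*(1+eps)*(2*C2+eps) + 2*lam^2*(1+eps) :=
        le_trans (le_of_lt hellpos) hellb
      have h10 : Ln n ≤ (2*C2 + 2*lam^2*(1+eps)*(2*C2+eps) + 2*lam^2*(1+eps))^2 := by
        rw [hLsq]
        calc ell n ^ 2 = ell n * ell n := sq (ell n)
        _ ≤ (2*C2 + 2*lam^2*(1+eps)*(2*C2+eps) + 2*lam^2*(1+eps))
            * (2*C2 + 2*lam^2*(1+eps)*(2*C2+eps) + 2*lam^2*(1+eps)) :=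
          mul_le_mul hellb hellb (le_of_lt hellpos) hlmax0
        _ = (2*C2 + 2*lam^2*(1+eps)*(2*C2+eps) + 2*lam^2*(1+eps))^2 := (sq _).symm
      linarith [hdhalf]
    rcases le_total e1 (Ln n - e1) with hs1 | hs1 <;>
      rcases le_total e2 (Ln n - e2) with hs2 | hs2
    · -- both near gate p
      have hb1 : e1 ≤ C2 := by rw [he1d, min_eq_left hs1] at hdu1; exact hdu1
      have hb2 : e2 ≤ C2 := by rw [he2d, min_eq_left hs2] at hdu2; exact hdu2
      have hee : |e1 - e2| ≤ C2 := abs_le.mpr ⟨by linarith, by linarith⟩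
      have := caseA hee
      linarith
    · -- e1 near p, e2 near q : crossing
      have hb1 : e1 ≤ C2 := by rw [he1d, min_eq_left hs1] at hdu1; exact hdu1
      have hb2 : Ln n - e2 ≤ C2 := by rw [he2d, min_eq_right hs2] at hdu2; exact hdu2
      have hd12 : dist (σ (v (j1+1))) (σ (v (j2-1))) ≤ 2*C2 + ell n := by
        have h15 := dist_le_via_p hch1 hch2
        rw [← he1, ← he2] at h15
        linarith
      have hcross : Ln n - 2*C2 ≤ |e1 - e2| := by
        rw [abs_sub_comm, abs_of_nonneg (by linarith)]
        linarith
      have := caseB hd12 hcross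
      linarith [hpos1]
    · -- e1 near q, e2 near p : crossing
      have hb1 : Ln n - e1 ≤ C2 := by rw [he1d, min_eq_right hs1] at hdu1; exact hdu1
      have hb2 : e2 ≤ C2 := by rw [he2d, min_eq_left hs2] at hdu2; exact hdu2
      have hd12 : dist (σ (v (j1+1))) (σ (v (j2-1))) ≤ 2*C2 + ell n := by
        have h15 := dist_le_via_q hch1 hch2
        rw [← he1, ← he2] at h15
        linarith
      have hcross : Ln n - 2*C2 ≤ |e1 - e2| := by
        rw [abs_of_nonneg (by linarith)]
        linarith
      have := caseB hd12 hcross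
      linarith [hpos1]
    · -- both near gate q
      have hb1 : Ln n - e1 ≤ C2 := by rw [he1d, min_eq_right hs1] at hdu1; exact hdu1
      have hb2 : Ln n - e2 ≤ C2 := by rw [he2d, min_eq_right hs2] at hdu2; exact hdu2
      have hee : |e1 - e2| ≤ C2 := abs_le.mpr ⟨by linarith, by linarith⟩
      have := caseA hee
      linarith
  -- conclude for the arbitrary parameter t
  set j := ⌊(t - a) / st⌋₊ with hjdef
  have hta : 0 ≤ t - a := by linarith [htIcc.1]
  have hjle : (j:ℝ) ≤ (t - a)/st := Nat.floor_le (by positivity)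
  have hjlt : (t - a)/st < (j:ℝ) + 1 := Nat.lt_floor_add_one _
  have hjk : j ≤ k := by
    have h1 : (t - a)/st ≤ (k:ℝ) := by
      rw [div_le_iff₀ hst0]
      linarith [htIcc.2]
    have h2 : (j:ℝ) ≤ (k:ℝ) := le_trans hjle h1
    exact_mod_cast h2
  have hvj1 : v j ≤ t := by
    rw [le_div_iff₀ hst0] at hjle
    simp only [hv]; linarith
  have hvj2 : t - v j ≤ st := by
    rw [div_lt_iff₀ hst0] at hjlt
    simp only [hv]; nlinarith
  have hdj := key j hjk
  have hlipt := depth_lip (σ t) (σ (v j))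
  have hdt : dist (σ t) (σ (v j)) ≤ 1 + eps := by
    have h16 := hup t htIcc (v j) (hvIcc j hjk)
    rw [abs_of_nonneg (by linarith)] at h16
    have h17 := mul_le_mul_of_nonneg_left hvj2 (le_of_lt hlam0)
    linarith
  rw [hC2] at hdj
  unfold Nf
  linarith


/-! ### Properness -/

lemma rp_clamp (s : ℝ) : rp s = rp (max s 0) := by
  refine Subtype.ext ?_
  show P.ray (max s 0) = P.ray (max (max s 0) 0)
  rw [max_assoc, max_self]

lemma dist_rp_le (s t : ℝ) : dist (rp s) (rp t) ≤ |s - t| := by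
  rw [rp_clamp s, rp_clamp t, dist_rp_rp (le_max_right _ _) (le_max_right _ _)]
  exact abs_max_sub_max_le_abs s t 0

lemma cont_rp : Continuous (fun t : ℝ => rp t) := by
  refine (LipschitzWith.of_dist_le' (K := 1) ?_).continuous
  intro s t
  rw [Real.dist_eq, one_mul]
  exact dist_rp_le s t

lemma ap_clamp (n : ℕ) (s : ℝ) : ap n s = ap n (max 0 (min s (Ln n))) := by
  have hL := Ln_pos n
  by_cases h1 : 0 < s ∧ s < Ln n
  · have : max 0 (min s (Ln n)) = s := by
      rw [min_eq_left (le_of_lt h1.2), max_eq_right (le_of_lt h1.1)]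
    rw [this]
  · push_neg at h1
    rcases le_or_gt s 0 with h2 | h2
    · have : max 0 (min s (Ln n)) = 0 := by
        rw [min_eq_left (by linarith), max_eq_left (by linarith)]
      rw [this, ap_of_nonpos h2, ap_zero]
    · have h3 : Ln n ≤ s := h1 h2
      have : max 0 (min s (Ln n)) = Ln n := by
        rw [min_eq_right h3, max_eq_right (le_of_lt hL)]
      rw [this, ap_of_ge h3, ap_of_ge le_rfl]

lemma clamp_lip (n : ℕ) (s t : ℝ) :
    |max 0 (min s (Ln n)) - max 0 (min t (Ln n))| ≤ |s - t| := by
  have h1 : |max 0 (min s (Ln n)) - max 0 (min t (Ln n))|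
      = |max (min s (Ln n)) 0 - max (min t (Ln n)) 0| := by
    rw [max_comm 0, max_comm 0]
  rw [h1]
  refine le_trans (abs_max_sub_max_le_abs _ _ 0) ?_
  have := abs_min_sub_min_le_max s (Ln n) t (Ln n)
  rw [sub_self, abs_zero] at this
  exact le_trans this (by simp [abs_nonneg])

lemma dist_ap_le (n : ℕ) (s t : ℝ) : dist (ap n s) (ap n t) ≤ |s - t| := by
  have hL := Ln_pos n
  rw [ap_clamp n s, ap_clamp n t]
  have hs1 : 0 ≤ max 0 (min s (Ln n)) := le_max_left _ _
  have hs2 : max 0 (min s (Ln n)) ≤ Ln n := max_le (le_of_lt hL) (min_le_right _ _)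
  have ht1 : 0 ≤ max 0 (min t (Ln n)) := le_max_left _ _
  have ht2 : max 0 (min t (Ln n)) ≤ Ln n := max_le (le_of_lt hL) (min_le_right _ _)
  rw [dist_ap_ap n hs1 hs2 ht1 ht2]
  exact le_trans (min_le_left _ _) (clamp_lip n s t)

lemma cont_ap (n : ℕ) : Continuous (fun s : ℝ => ap n s) := by
  refine (LipschitzWith.of_dist_le' (K := 1) ?_).continuous
  intro s t
  rw [Real.dist_eq, one_mul]
  exact dist_ap_le n s t

instance proper_Xc : ProperSpace Xc := by
  constructor
  intro x r
  set R := dist (rp 0) x + r with hR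
  set M := ⌈R⌉₊ + 1 with hM
  set K := (fun t : ℝ => rp t) '' Icc 0 R ∪
      ⋃ n ∈ Finset.range M, (fun s : ℝ => ap n s) '' Icc 0 (Ln n) with hK
  have hKc : IsCompact K := by
    refine (isCompact_Icc.image cont_rp).union ?_
    exact (Finset.range M).isCompact_biUnion fun n _ => isCompact_Icc.image (cont_ap n)
  refine IsCompact.of_isClosed_subset hKc Metric.isClosed_closedBall ?_
  intro z hz
  have hz0 : dist (rp 0) z ≤ R := by
    rw [hR]
    calc dist (rp 0) z ≤ dist (rp 0) x + dist x z := dist_triangle _ _ _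
    _ ≤ dist (rp 0) x + r := by
        have := Metric.mem_closedBall.mp hz
        rw [dist_comm] at this
        linarith
  rcases repr_Xc z with ⟨u, hu, rfl⟩ | ⟨n, s, hs0, hsL, rfl⟩
  · left
    have hd : dist (rp 0) (rp u) = u := by
      rw [dist_rp_rp le_rfl hu, abs_of_nonpos (by linarith)]; ring
    exact ⟨u, ⟨hu, by linarith [hd ▸ hz0]⟩, rfl⟩
  · right
    have hd : pa n ≤ dist (rp 0) (ap n s) := by
      rw [dist_rp_ap le_rfl n (le_of_lt hs0) (le_of_lt hsL)]
      have h1 : |0 - pa n| = pa n := by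
        rw [abs_of_nonpos (by linarith [pa_nonneg n])]; ring
      have h2 : |0 - qa n| = qa n := by
        rw [abs_of_nonpos (by linarith [qa_nonneg n])]; ring
      rw [h1, h2]
      have := qa_sub_pa n
      have := ell_pos n
      exact le_min (by linarith) (by linarith)
    have hnR : (n:ℝ) ≤ R := le_trans (pa_ge n) (le_trans hd hz0)
    have hnM : n ∈ Finset.range M := by
      rw [Finset.mem_range, hM]
      have h3 : (n:ℝ) ≤ (⌈R⌉₊ : ℝ) := le_trans hnR (Nat.le_ceil R)
      have h4 : n ≤ ⌈R⌉₊ := by exact_mod_cast h3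
      omega
    exact Set.mem_biUnion hnM ⟨s, ⟨le_of_lt hs0, le_of_lt hsL⟩, rfl⟩

/-! ### Failure of contraction -/

lemma Ln_ge9 (n : ℕ) : 9 ≤ Ln n := by
  have h := ell_ge3 n
  rw [Ln_eq_sq]
  nlinarith

theorem not_contracting : ∀ D : ℝ, 0 < D → ∃ (c : Xc) (r : ℝ), 0 < r ∧
    Metric.ball c r ∩ Im = ∅ ∧
    2 * D < Metric.diam (⋃ y ∈ Metric.ball c r, projSet Im y) := by
  intro D hD
  set n := ⌈2*D⌉₊ with hn
  have hL9 := Ln_ge9 n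
  have hLpos := Ln_pos n
  have hellpos := ell_pos n
  have hmid1 : 0 < Ln n / 2 := by linarith
  have hmid2 : Ln n / 2 < Ln n := by linarith
  set c := ap n (Ln n / 2) with hc
  have hdc : depth c = Ln n / 2 := by
    rw [hc, depth_ap hmid1 hmid2]
    rw [show Ln n - Ln n / 2 = Ln n / 2 by ring, min_self]
  refine ⟨c, 1, one_pos, ?_, ?_⟩
  · -- ball disjoint from the ray
    ext z
    simp only [Set.mem_inter_iff, Metric.mem_ball, Set.mem_empty_iff_false, iff_false,
      not_and]
    intro hzc hzIm
    obtain ⟨u, hu, rfl⟩ := Im_iff.mp hzIm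
    have h1 : Ln n / 2 ≤ dist c (rp u) := hdc ▸ dist_ge_depth c hu
    rw [dist_comm] at h1
    linarith
  · -- the projection of the ball has diameter > 2D
    have hIc : Metric.infDist c Im = Ln n / 2 := by
      refine le_antisymm (hdc ▸ infDist_le_depth c) (hdc ▸ depth_le_infDist c)
    have hp : rp (pa n) ∈ projSet Im c := by
      refine ⟨mem_Im (pa_nonneg n), ?_⟩
      rw [hIc, hc, dist_comm, dist_rp_ap (pa_nonneg n) n (le_of_lt hmid1) (le_of_lt hmid2),
        sub_self, abs_zero, zero_add, abs_pa_qa]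
      exact min_eq_left (by linarith)
    have hq : rp (qa n) ∈ projSet Im c := by
      refine ⟨mem_Im (qa_nonneg n), ?_⟩
      rw [hIc, hc, dist_comm, dist_rp_ap (qa_nonneg n) n (le_of_lt hmid1) (le_of_lt hmid2),
        sub_self, abs_zero, zero_add, abs_qa_pa,
        show Ln n - Ln n/2 = Ln n/2 by ring]
      exact min_eq_right (by linarith)
    have hpU : rp (pa n) ∈ ⋃ y ∈ Metric.ball c 1, projSet Im y :=
      Set.mem_biUnion (Metric.mem_ball_self one_pos) hp
    have hqU : rp (qa n) ∈ ⋃ y ∈ Metric.ball c 1, projSet Im y :=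
      Set.mem_biUnion (Metric.mem_ball_self one_pos) hq
    have hUsub : (⋃ y ∈ Metric.ball c 1, projSet Im y) ⊆
        Metric.closedBall c (Ln n / 2 + 2) := by
      rintro p hp'
      simp only [Set.mem_iUnion] at hp'
      obtain ⟨y, hy, hpIm, hyd⟩ := hp'
      have hy1 : dist y c < 1 := Metric.mem_ball.mp hy
      have h2 : Metric.infDist y Im ≤ depth y := infDist_le_depth y
      have h3 : depth y ≤ depth c + dist y c := depth_lip y c
      have h4 : dist y p ≤ Ln n / 2 + 1 := by
        rw [hyd]
        rw [hdc] at h3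
        linarith
      rw [Metric.mem_closedBall]
      calc dist p c ≤ dist p y + dist y c := dist_triangle _ _ _
      _ ≤ Ln n / 2 + 1 + 1 := by rw [dist_comm p y]; linarith
      _ = Ln n / 2 + 2 := by ring
    have hbdd : Bornology.IsBounded (⋃ y ∈ Metric.ball c 1, projSet Im y) :=
      Metric.isBounded_closedBall.subset hUsub
    have hdiam := Metric.dist_le_diam_of_mem hbdd hpU hqU
    have hdpq : dist (rp (pa n)) (rp (qa n)) = ell n := by
      rw [dist_rp_rp (pa_nonneg n) (qa_nonneg n), abs_pa_qa]
    rw [hdpq] at hdiam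
    have h2D : 2*D ≤ (n:ℝ) := by rw [hn]; exact Nat.le_ceil (2*D)
    have hell : ell n = (n:ℝ) + 3 := rfl
    linarith

/-! ### Main theorem assembly -/

theorem main_example : MorseNotContractingSpace Xc := by
  refine ⟨proper_Xc, geodesic_space, gray, gray_isray, ⟨Nf, morse⟩, not_contracting⟩

end

end MNC

/-- There exists a proper geodesic metric space containing a geodesic ray which is Morse but
not `D`-contracting for any constant `D`. -/
theorem exists_morse_not_contracting :
    ∃ (X : Type) (m : MetricSpace X), @MorseNotContractingSpace X m :=
  ⟨MNC.Xc, inferInstance, MNC.main_example⟩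
end

section
/- Let X be a geodesic metric space and let σ : [a,b] → X be a (λ,ε)-quasi-geodesic. Then there exists a continuous (λ, ε')-quasi-geodesic σ' : [a,b] → X with ε' = 2(λ+ε) such that: σ'(a) = σ(a), σ'(b) = σ(b); the length of σ' restricted to any subinterval [s,t] is at most k₁·d(σ'(s),σ'(t)) + k₂ where k₁ = λ(λ+ε) and k₂ = (λε'+3)(λ+ε); and the Hausdorff distance between the images of σ and σ' is at most λ+ε. -/
open Metric Set
open scoped ENNReal NNReal

set_option maxHeartbeats 1000000

/-- Taming quasi-geodesics (Bridson–Haefliger III.H.1.11): any `(λ,ε)`-quasi-geodesic in a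
geodesic space can be replaced by a continuous `(λ, ε')`-quasi-geodesic `σ'` with
`ε' = 2(λ+ε)`, with the same endpoints, whose length on any subinterval is bounded by
`k₁·d(σ'(s),σ'(t)) + k₂` with `k₁ = λ(λ+ε)` and `k₂ = (λε'+3)(λ+ε)`, and such that the
Hausdorff distance between the images of `σ` and `σ'` is at most `λ+ε`. -/
theorem taming_quasi_geodesics {X : Type*} [MetricSpace X] (hX : GeodesicSpace X)
    (lam eps a b : ℝ) (hlam : 1 ≤ lam) (heps : 0 ≤ eps) (hab : a ≤ b)
    (σ : ℝ → X) (hσ : IsQuasiGeodesicOn lam eps a b σ) :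
    ∃ σ' : ℝ → X,
      ContinuousOn σ' (Set.Icc a b) ∧
      IsQuasiGeodesicOn lam (2 * (lam + eps)) a b σ' ∧
      σ' a = σ a ∧ σ' b = σ b ∧
      (∀ s ∈ Set.Icc a b, ∀ t ∈ Set.Icc a b, s ≤ t →
        eVariationOn σ' (Set.Icc s t) ≤
          ENNReal.ofReal (lam * (lam + eps) * dist (σ' s) (σ' t) +
            (lam * (2 * (lam + eps)) + 3) * (lam + eps))) ∧
      Metric.hausdorffDist (σ '' Set.Icc a b) (σ' '' Set.Icc a b) ≤ lam + eps := by
  rcases eq_or_lt_of_le hab with rfl | hlt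
  · -- degenerate case a = b
    refine ⟨σ, ?_, ?_, rfl, rfl, ?_, ?_⟩
    · rw [Set.Icc_self]; exact continuousOn_singleton σ a
    · intro s hs t ht
      rw [Set.Icc_self, Set.mem_singleton_iff] at hs ht
      subst hs; subst ht
      constructor <;> simp <;> nlinarith
    · intro s hs t ht hst
      rw [Set.Icc_self, Set.mem_singleton_iff] at hs ht
      subst hs; subst ht
      rw [Set.Icc_self, eVariationOn.subsingleton σ Set.subsingleton_singleton]
      exact zero_le
    · rw [Set.Icc_self, Set.image_singleton, Metric.hausdorffDist_self_zero]
      nlinarith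
  -- main case a < b
  choose γ hγ using hX
  have hlam0 : (0:ℝ) < lam := lt_of_lt_of_le one_pos hlam
  have hinvlam : 1 / lam ≤ 1 := by rw [div_le_one hlam0]; exact hlam
  have hinvlam0 : 0 < 1 / lam := by positivity
  set N : ℕ := max 1 ⌈b - a⌉₊ with hNdef
  have hN1 : 1 ≤ N := le_max_left _ _
  have hNpos : (0:ℝ) < (N:ℝ) := by exact_mod_cast Nat.lt_of_lt_of_le Nat.zero_lt_one hN1
  have hNge : b - a ≤ (N:ℝ) := by
    refine le_trans (Nat.le_ceil _) ?_
    exact_mod_cast Nat.cast_le.mpr (le_max_right 1 ⌈b - a⌉₊)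
  have hNle : (N:ℝ) ≤ (b - a) + 1 := by
    have h1 : ((⌈b - a⌉₊ : ℕ) : ℝ) < (b - a) + 1 := Nat.ceil_lt_add_one (by linarith)
    have h2 : ((1:ℕ):ℝ) ≤ (b - a) + 1 := by push_cast; linarith
    rcases max_cases 1 ⌈b - a⌉₊ with ⟨hm, _⟩ | ⟨hm, _⟩ <;>
      · rw [hNdef, hm]; push_cast; linarith
  set δ : ℝ := (b - a) / N with hδdef
  have hδpos : 0 < δ := div_pos (by linarith) hNpos
  have hδ1 : δ ≤ 1 := by rw [hδdef, div_le_one hNpos]; linarith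
  have hb' : b = a + (N:ℝ) * δ := by rw [hδdef]; field_simp; ring
  set p : ℕ → ℝ := fun i => a + (i:ℝ) * δ with hpdef
  set x : ℕ → X := fun i => σ (p i) with hxdef
  set d : ℕ → ℝ := fun i => dist (x i) (x (i+1)) with hddef
  set g : ℕ → ℝ → X := fun i => γ (x i) (x (i+1)) with hgdef
  have hg0 : ∀ i : ℕ, g i 0 = x i := fun i => (hγ (x i) (x (i+1))).1
  have hg1 : ∀ i : ℕ, g i (d i) = x (i+1) := fun i => (hγ (x i) (x (i+1))).2.1
  have hgd : ∀ i : ℕ, ∀ s ∈ Set.Icc (0:ℝ) (d i), ∀ t ∈ Set.Icc (0:ℝ) (d i),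
      dist (g i s) (g i t) = |s - t| := fun i => (hγ (x i) (x (i+1))).2.2
  set idx : ℝ → ℕ := fun t => min ⌊(t - a) / δ⌋₊ (N - 1) with hidxdef
  set f : ℝ → X := fun t => g (idx t) ((t - p (idx t)) / δ * d (idx t)) with hfdef
  have hδne : δ ≠ 0 := ne_of_gt hδpos
  clear_value N δ p x d g idx f
  have hfval : ∀ t : ℝ, f t = g (idx t) ((t - p (idx t)) / δ * d (idx t)) := by
    intro t; rw [hfdef]
  have hpmono : ∀ i j : ℕ, i ≤ j → p i ≤ p j := by
    intro i j hij
    have h : ((i:ℝ)) ≤ (j:ℝ) := by exact_mod_cast hij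
    simp only [hpdef]
    nlinarith
  have hpsucc : ∀ i : ℕ, p (i+1) = p i + δ := by
    intro i; simp only [hpdef]; push_cast; ring
  have hpmem : ∀ i : ℕ, i ≤ N → p i ∈ Set.Icc a b := by
    intro i hi
    have h1 : ((i:ℝ)) ≤ (N:ℝ) := by exact_mod_cast hi
    have h2 : (0:ℝ) ≤ (i:ℝ) := Nat.cast_nonneg i
    constructor
    · simp only [hpdef]; nlinarith
    · simp only [hpdef]; rw [hb']; nlinarith
  have hp0 : p 0 = a := by simp [hpdef]
  have hpN : p N = b := by simp only [hpdef]; rw [hb']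
  have hd_nonneg : ∀ i : ℕ, 0 ≤ d i := by
    intro i; simp only [hddef]; exact dist_nonneg
  have hd_le : ∀ i : ℕ, i + 1 ≤ N → d i ≤ lam * δ + eps := by
    intro i hi
    have h1 := (hσ (p i) (hpmem i (by omega)) (p (i+1)) (hpmem (i+1) hi)).2
    have habs : |p i - p (i+1)| = δ := by
      rw [hpsucc i]; rw [abs_sub_comm]; simp [abs_of_nonneg hδpos.le]
    simp only [hddef, hxdef]
    rw [habs] at h1
    nlinarith
  have hd_le' : ∀ i : ℕ, i + 1 ≤ N → d i ≤ lam + eps := by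
    intro i hi
    have := hd_le i hi
    nlinarith
  -- basic facts about idx and the interpolation parameter
  have hidx_le : ∀ t : ℝ, idx t ≤ N - 1 := by
    intro t; simp only [hidxdef]; exact min_le_right _ _
  have hidx_lt : ∀ t : ℝ, idx t < N := fun t => lt_of_le_of_lt (hidx_le t) (by omega)
  have hidx_succ_le : ∀ t : ℝ, idx t + 1 ≤ N := fun t => hidx_lt t
  have hple : ∀ t ∈ Set.Icc a b, p (idx t) ≤ t := by
    intro t ht
    have h0 : (0:ℝ) ≤ (t - a) / δ := div_nonneg (by linarith [ht.1]) hδpos.le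
    have h1 : ((idx t : ℕ):ℝ) ≤ (t - a) / δ := by
      refine le_trans ?_ (Nat.floor_le h0)
      have : idx t ≤ ⌊(t - a) / δ⌋₊ := by simp only [hidxdef]; exact min_le_left _ _
      exact_mod_cast this
    have h2 : ((idx t:ℕ):ℝ) * δ ≤ t - a := (le_div_iff₀ hδpos).mp h1
    simp only [hpdef]; linarith
  have hpge : ∀ t ∈ Set.Icc a b, t ≤ p (idx t + 1) := by
    intro t ht
    by_cases hc : ⌊(t - a) / δ⌋₊ ≤ N - 1
    · have hidxeq : idx t = ⌊(t - a) / δ⌋₊ := by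
        simp only [hidxdef]; exact min_eq_left hc
      have h1 : (t - a) / δ < (⌊(t - a) / δ⌋₊ : ℝ) + 1 := Nat.lt_floor_add_one _
      have h2 : t - a < ((⌊(t - a) / δ⌋₊ : ℝ) + 1) * δ := (div_lt_iff₀ hδpos).mp h1
      simp only [hpdef, hidxeq]
      push_cast
      linarith
    · have hidxeq : idx t = N - 1 := by
        simp only [hidxdef]; exact min_eq_right (le_of_not_ge hc)
      have : idx t + 1 = N := by omega
      rw [this, hpN]
      exact ht.2
  have hu01 : ∀ t ∈ Set.Icc a b, 0 ≤ (t - p (idx t)) / δ ∧ (t - p (idx t)) / δ ≤ 1 := by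
    intro t ht
    constructor
    · exact div_nonneg (by linarith [hple t ht]) hδpos.le
    · rw [div_le_one hδpos]
      have := hpge t ht
      rw [hpsucc (idx t)] at this
      linarith
  -- the value of f on the geodesic pieces
  have harg_mem : ∀ t ∈ Set.Icc a b, (t - p (idx t)) / δ * d (idx t) ∈ Set.Icc 0 (d (idx t)) := by
    intro t ht
    obtain ⟨h0, h1⟩ := hu01 t ht
    constructor
    · exact mul_nonneg h0 (hd_nonneg _)
    · nlinarith [hd_nonneg (idx t)]
  have hdistA : ∀ t ∈ Set.Icc a b,
      dist (f t) (x (idx t)) = (t - p (idx t)) / δ * d (idx t) := by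
    intro t ht
    have h := hgd (idx t) _ (harg_mem t ht) 0 ⟨le_refl 0, hd_nonneg _⟩
    rw [hfval t, ← hg0 (idx t), h, sub_zero, abs_of_nonneg (harg_mem t ht).1]
  have hdistB : ∀ t ∈ Set.Icc a b,
      dist (f t) (x (idx t + 1)) = (1 - (t - p (idx t)) / δ) * d (idx t) := by
    intro t ht
    have h := hgd (idx t) _ (harg_mem t ht) (d (idx t)) ⟨hd_nonneg _, le_refl _⟩
    rw [hfval t, ← hg1 (idx t), h, abs_of_nonpos, neg_sub]
    · ring
    · obtain ⟨h0, h1⟩ := hu01 t ht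
      nlinarith [hd_nonneg (idx t)]
  -- f agrees with the samples at the sample points
  have hsample : ∀ k : ℕ, k ≤ N → f (p k) = x k := by
    intro k hk
    have hratio : (p k - a) / δ = (k:ℝ) := by
      simp only [hpdef]
      rw [add_sub_cancel_left, mul_div_assoc, div_self hδne, mul_one]
    have hfloor : ⌊(p k - a) / δ⌋₊ = k := by rw [hratio, Nat.floor_natCast]
    by_cases hc : k ≤ N - 1
    · have hidxeq : idx (p k) = k := by
        simp only [hidxdef]; rw [hfloor]; exact min_eq_left hc
      simp only [hfdef, hidxeq, sub_self, zero_div, zero_mul]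
      exact hg0 k
    · have hkN : k = N := by omega
      have hidxeq : idx (p k) = N - 1 := by
        simp only [hidxdef]; rw [hfloor]; exact min_eq_right (by omega)
      have hN1' : N - 1 + 1 = N := by omega
      have harg : (p k - p (N-1)) / δ = 1 := by
        have : p k = p (N - 1) + δ := by rw [← hpsucc (N-1), hN1', hkN]
        rw [this, add_sub_cancel_left, div_self hδne]
      simp only [hfdef, hidxeq]
      rw [harg, one_mul, hg1 (N-1), hN1', hkN]
  have hfa : f a = σ a := by
    have := hsample 0 (by omega)
    rw [hp0] at this
    rw [this]; simp only [hxdef, hp0]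
  have hfb : f b = σ b := by
    have := hsample N (le_refl N)
    rw [hpN] at this
    rw [this]; simp only [hxdef, hpN]
  -- nearest sample point
  have hnear : ∀ t ∈ Set.Icc a b, ∃ j : ℕ, j ≤ N ∧ |t - p j| ≤ δ / 2 ∧
      dist (f t) (x j) ≤ (lam + eps) / 2 := by
    intro t ht
    obtain ⟨h0, h1⟩ := hu01 t ht
    have hdle : d (idx t) ≤ lam + eps := hd_le' (idx t) (hidx_succ_le t)
    have hd0 : 0 ≤ d (idx t) := hd_nonneg _
    by_cases hc : (t - p (idx t)) / δ ≤ 1 / 2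
    · refine ⟨idx t, (hidx_lt t).le, ?_, ?_⟩
      · rw [abs_of_nonneg (by linarith [hple t ht])]
        have : t - p (idx t) = (t - p (idx t)) / δ * δ := by rw [div_mul_cancel₀ _ hδne]
        rw [this]; nlinarith
      · rw [hdistA t ht]; nlinarith
    · push_neg at hc
      refine ⟨idx t + 1, hidx_succ_le t, ?_, ?_⟩
      · have hge := hpge t ht
        rw [abs_of_nonpos (by linarith)]
        rw [hpsucc (idx t)]
        have : t - p (idx t) = (t - p (idx t)) / δ * δ := by rw [div_mul_cancel₀ _ hδne]
        nlinarith
      · rw [hdistB t ht]; nlinarith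
  -- the quasi-geodesic bounds for f
  have hQG : IsQuasiGeodesicOn lam (2 * (lam + eps)) a b f := by
    intro s hs t ht
    obtain ⟨j₁, hj₁N, hj₁, hd₁⟩ := hnear s hs
    obtain ⟨j₂, hj₂N, hj₂, hd₂⟩ := hnear t ht
    obtain ⟨hσlow, hσup⟩ := hσ (p j₁) (hpmem j₁ hj₁N) (p j₂) (hpmem j₂ hj₂N)
    have habs1 : |p j₁ - p j₂| ≤ |s - t| + δ := by
      calc |p j₁ - p j₂| = |(p j₁ - s) + (s - t) + (t - p j₂)| := by ring_nf
        _ ≤ |p j₁ - s| + |s - t| + |t - p j₂| := by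
            refine le_trans (abs_add_le _ _) ?_
            gcongr
            exact abs_add_le _ _
        _ ≤ δ/2 + |s - t| + δ/2 := by
            rw [abs_sub_comm (p j₁) s]
            linarith [hj₁, hj₂]
        _ = |s - t| + δ := by ring
    have habs2 : |s - t| ≤ |p j₁ - p j₂| + δ := by
      calc |s - t| = |(s - p j₁) + (p j₁ - p j₂) + (p j₂ - t)| := by ring_nf
        _ ≤ |s - p j₁| + |p j₁ - p j₂| + |p j₂ - t| := by
            refine le_trans (abs_add_le _ _) ?_
            gcongr
            exact abs_add_le _ _
        _ ≤ δ/2 + |p j₁ - p j₂| + δ/2 := by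
            rw [abs_sub_comm (p j₂) t]
            linarith [hj₁, hj₂]
        _ = |p j₁ - p j₂| + δ := by ring
    have hxx : dist (x j₁) (x j₂) = dist (σ (p j₁)) (σ (p j₂)) := by rw [hxdef]
    constructor
    · -- lower bound
      have htri : dist (x j₁) (x j₂) ≤ dist (f s) (f t) + (lam + eps) := by
        calc dist (x j₁) (x j₂) ≤ dist (x j₁) (f s) + dist (f s) (f t) + dist (f t) (x j₂) :=
              dist_triangle4 _ _ _ _
          _ ≤ (lam+eps)/2 + dist (f s) (f t) + (lam+eps)/2 := by
              rw [dist_comm (x j₁) (f s)]; linarith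
          _ = dist (f s) (f t) + (lam + eps) := by ring
      rw [hxx] at htri
      have h3 : 1/lam * |p j₁ - p j₂| ≥ 1/lam * (|s - t| - δ) := by
        have : |s - t| - δ ≤ |p j₁ - p j₂| := by linarith
        nlinarith
      have h4 : 1/lam * δ ≤ 1 := by nlinarith
      nlinarith [abs_nonneg (s - t)]
    · -- upper bound
      calc dist (f s) (f t) ≤ dist (f s) (x j₁) + dist (x j₁) (x j₂) + dist (x j₂) (f t) :=
            dist_triangle4 _ _ _ _
        _ ≤ (lam+eps)/2 + (lam * |p j₁ - p j₂| + eps) + (lam+eps)/2 := by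
            rw [dist_comm (x j₂) (f t)]
            rw [hxx]
            linarith
        _ ≤ (lam+eps)/2 + (lam * (|s - t| + δ) + eps) + (lam+eps)/2 := by nlinarith
        _ ≤ lam * |s - t| + 2 * (lam + eps) := by nlinarith
  -- Lipschitz bound with constant C
  set C : ℝ := (lam * δ + eps) / δ with hCdef
  have hC0 : 0 ≤ C := by positivity
  have hidx_mono : ∀ s t : ℝ, s ≤ t → idx s ≤ idx t := by
    intro s t hst
    simp only [hidxdef]
    have : ⌊(s - a) / δ⌋₊ ≤ ⌊(t - a) / δ⌋₊ := by
      apply Nat.floor_le_floor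
      have h1 : s - a ≤ t - a := by linarith
      exact div_le_div_of_nonneg_right h1 hδpos.le |>.trans_eq rfl
    omega
  have hsame : ∀ s ∈ Set.Icc a b, ∀ t ∈ Set.Icc a b, s ≤ t → idx s = idx t →
      dist (f s) (f t) ≤ C * (t - s) := by
    intro s hs t ht hst hidxeq
    have h := hgd (idx s) _ (harg_mem s hs) ((t - p (idx t)) / δ * d (idx t))
      (by rw [hidxeq]; exact harg_mem t ht)
    have hfeq : f t = g (idx s) ((t - p (idx t)) / δ * d (idx t)) := by
      simp only [hfdef]; rw [hidxeq]
    have hds : dist (f s) (f t) =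
        |(s - p (idx s)) / δ * d (idx s) - (t - p (idx t)) / δ * d (idx t)| := by
      rw [hfval s, hfeq]; exact h
    rw [hds, ← hidxeq]
    have hd0 : 0 ≤ d (idx s) := hd_nonneg _
    have hrw : (s - p (idx s)) / δ * d (idx s) - (t - p (idx s)) / δ * d (idx s)
        = -((t - s)/δ * d (idx s)) := by ring
    have hts0 : 0 ≤ (t - s) / δ := div_nonneg (by linarith) hδpos.le
    rw [hrw, abs_neg, abs_of_nonneg (mul_nonneg hts0 hd0)]
    have hdle : d (idx s) ≤ lam * δ + eps := hd_le _ (hidx_succ_le s)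
    have hCδ : C * δ = lam * δ + eps := by rw [hCdef, div_mul_cancel₀ _ hδne]
    have h1 : (t - s)/δ * d (idx s) ≤ (t - s)/δ * (C * δ) := by
      rw [hCδ]; exact mul_le_mul_of_nonneg_left hdle hts0
    have h2 : (t - s)/δ * (C * δ) = C * (t - s) := by
      rw [show (t - s)/δ * (C * δ) = C * ((t - s)/δ * δ) by ring, div_mul_cancel₀ _ hδne]
    linarith
  -- Lipschitz estimate by induction on the number of pieces
  have hlipkey : ∀ n : ℕ, ∀ s ∈ Set.Icc a b, ∀ t ∈ Set.Icc a b, s ≤ t →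
      idx t - idx s ≤ n → dist (f s) (f t) ≤ C * (t - s) := by
    intro n
    induction n with
    | zero =>
      intro s hs t ht hst hn
      have h1 : idx s ≤ idx t := hidx_mono s t hst
      have : idx s = idx t := by omega
      exact hsame s hs t ht hst this
    | succ n ih =>
      intro s hs t ht hst hn
      by_cases hc : idx t ≤ idx s
      · exact hsame s hs t ht hst (le_antisymm (hidx_mono s t hst) hc)
      · push_neg at hc
        set m := p (idx s + 1) with hmdef
        have hsm : s ≤ m := hpge s hs
        have hmt : m ≤ t := le_trans (hpmono _ _ hc) (hple t ht)
        have hmmem : m ∈ Set.Icc a b := hpmem _ (hidx_succ_le s)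
        have hfm : f m = x (idx s + 1) := hsample _ (hidx_succ_le s)
        have h1 : dist (f s) (f m) ≤ C * (m - s) := by
          rw [hfm, hdistB s hs]
          have hd0 : 0 ≤ d (idx s) := hd_nonneg _
          have hdle : d (idx s) ≤ lam * δ + eps := hd_le _ (hidx_succ_le s)
          have hCδ : C * δ = lam * δ + eps := by rw [hCdef, div_mul_cancel₀ _ hδne]
          have hu : (1 - (s - p (idx s)) / δ) = (m - s) / δ := by
            rw [hmdef, hpsucc (idx s)]
            field_simp
            ring
          rw [hu]
          have hts0 : 0 ≤ (m - s) / δ := div_nonneg (by linarith) hδpos.le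
          have h1 : (m - s)/δ * d (idx s) ≤ (m - s)/δ * (C * δ) := by
            rw [hCδ]; exact mul_le_mul_of_nonneg_left hdle hts0
          have h2 : (m - s)/δ * (C * δ) = C * (m - s) := by
            rw [show (m - s)/δ * (C * δ) = C * ((m - s)/δ * δ) by ring, div_mul_cancel₀ _ hδne]
          linarith
        have hidxm : idx m = idx s + 1 := by
          have hr : (m - a) / δ = ((idx s + 1 : ℕ) : ℝ) := by
            rw [hmdef]; simp only [hpdef]
            rw [add_sub_cancel_left, mul_div_assoc, div_self hδne, mul_one]
          have hfl : ⌊(m - a)/δ⌋₊ = idx s + 1 := by rw [hr, Nat.floor_natCast]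
          have hde : idx m = min ⌊(m - a)/δ⌋₊ (N - 1) := by rw [hidxdef]
          rw [hde, hfl]
          apply min_eq_left
          have := hidx_le t
          omega
        have h2 : dist (f m) (f t) ≤ C * (t - m) := by
          apply ih m hmmem t ht hmt
          omega
        calc dist (f s) (f t) ≤ dist (f s) (f m) + dist (f m) (f t) := dist_triangle _ _ _
          _ ≤ C * (m - s) + C * (t - m) := by linarith
          _ = C * (t - s) := by ring
  have hlip : LipschitzOnWith (Real.toNNReal C) f (Set.Icc a b) := by
    apply LipschitzOnWith.of_dist_le_mul
    intro y hy z hz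
    have hcoe : ((Real.toNNReal C : ℝ≥0) : ℝ) = C := Real.coe_toNNReal C hC0
    rw [hcoe]
    rcases le_total y z with hyz | hzy
    · have := hlipkey N y hy z hz hyz (by have := hidx_lt z; omega)
      rw [Real.dist_eq, abs_of_nonpos (by linarith)]
      linarith
    · have := hlipkey N z hz y hy hzy (by have := hidx_lt y; omega)
      rw [dist_comm, Real.dist_eq, abs_of_nonneg (by linarith)]
      linarith
  refine ⟨f, hlip.continuousOn, hQG, hfa, hfb, ?_, ?_⟩
  · -- variation bound
    intro s hs t ht hst
    have hsub : Set.Icc s t ⊆ Set.Icc a b := Set.Icc_subset_Icc hs.1 ht.2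
    have hlip' : LipschitzOnWith (Real.toNNReal C) f (Set.Icc s t) := hlip.mono hsub
    have hvar1 : eVariationOn f (Set.Icc s t) ≤
        (Real.toNNReal C : ℝ≥0∞) * eVariationOn id (Set.Icc s t) := by
      have := hlip'.comp_eVariationOn_le (Set.mapsTo_id (Set.Icc s t))
      simpa using this
    have hvar2 : eVariationOn (id : ℝ → ℝ) (Set.Icc s t) ≤ ENNReal.ofReal (t - s) := by
      have hmono : MonotoneOn (id : ℝ → ℝ) Set.univ := fun u _ v _ huv => huv
      have := hmono.eVariationOn_le (Set.mem_univ s) (Set.mem_univ t)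
      simpa using this
    have hvar3 : eVariationOn f (Set.Icc s t) ≤ ENNReal.ofReal (C * (t - s)) := by
      calc eVariationOn f (Set.Icc s t) ≤
          (Real.toNNReal C : ℝ≥0∞) * ENNReal.ofReal (t - s) := by
            exact le_trans hvar1 (mul_le_mul_right hvar2 _)
        _ = ENNReal.ofReal (C * (t - s)) := by
            rw [ENNReal.ofReal_mul hC0]
            rfl
    refine le_trans hvar3 (ENNReal.ofReal_le_ofReal ?_)
    -- real arithmetic
    have hq : (t - s) / δ ≤ (t - s) + 1 := by
      have h1 : (t - s) / δ = (t - s) * (N:ℝ) / (b - a) := by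
        rw [hδdef, div_div_eq_mul_div]
      have h2 : t - s ≤ b - a := by linarith [hs.1, ht.2]
      have h3 : 0 ≤ t - s := by linarith
      rw [h1, div_le_iff₀ (by linarith : (0:ℝ) < b - a)]
      nlinarith
    have hCts : C * (t - s) = lam * (t - s) + eps * ((t - s)/δ) := by
      rw [hCdef]; field_simp
    have hlow := (hQG s hs t ht).1
    have habs : |s - t| = t - s := by rw [abs_sub_comm, abs_of_nonneg (by linarith)]
    rw [habs] at hlow
    have hts : t - s ≤ lam * (dist (f s) (f t) + 2 * (lam + eps)) := by
      have h1 : 1/lam * (t - s) ≤ dist (f s) (f t) + 2 * (lam + eps) := by linarith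
      have h2 : lam * (1/lam * (t - s)) = t - s := by field_simp
      nlinarith
    have hd0 : 0 ≤ dist (f s) (f t) := dist_nonneg
    have h3 : 0 ≤ t - s := by linarith
    rw [hCts]
    nlinarith [mul_le_mul_of_nonneg_left hts heps, mul_le_mul_of_nonneg_left hts hlam0.le,
      mul_nonneg heps h3, mul_nonneg (mul_nonneg hlam0.le heps) hd0]
  · -- Hausdorff distance bound
    apply Metric.hausdorffDist_le_of_mem_dist (by linarith)
    · rintro _ ⟨t, ht, rfl⟩
      obtain ⟨j, hjN, hjt, _⟩ := hnear t ht
      refine ⟨f (p j), Set.mem_image_of_mem f (hpmem j hjN), ?_⟩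
      rw [hsample j hjN]
      have h1 := (hσ t ht (p j) (hpmem j hjN)).2
      simp only [hxdef]
      nlinarith [le_trans h1 (by nlinarith : lam * |t - p j| + eps ≤ lam + eps)]
    · rintro _ ⟨t, ht, rfl⟩
      obtain ⟨j, hjN, _, hdj⟩ := hnear t ht
      refine ⟨σ (p j), Set.mem_image_of_mem σ (hpmem j hjN), ?_⟩
      have : x j = σ (p j) := by rw [hxdef]
      rw [← this]
      nlinarith
end

section
/- Let X be a proper geodesic metric space, e ∈ X, and N a Morse gauge. There exists a constant δ_N depending only on N such that: if α and β are N-Morse geodesic rays with α(0) = β(0) = e that are asymptotic (i.e., have bounded Hausdorff distance), then d(α(t), β(t)) ≤ δ_N for all t ≥ 0. -/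
open Metric Set

/-- For each Morse gauge `N` there is a constant `δ_N` such that in any proper geodesic
space, two asymptotic `N`-Morse geodesic rays with the same basepoint stay within
distance `δ_N` of each other. -/
theorem asymptotic_morse_rays_uniformly_close (N : ℝ → ℝ → ℝ) :
    ∃ δ : ℝ, ∀ (X : Type) [MetricSpace X] [ProperSpace X],
      GeodesicSpace X →
      ∀ (e : X) (α β : ℝ → X),
        IsMorseRay N α → IsMorseRay N β → α 0 = e → β 0 = e →
        EMetric.hausdorffEdist (α '' Set.Ici 0) (β '' Set.Ici 0) ≠ ⊤ →
        ∀ t : ℝ, 0 ≤ t → dist (α t) (β t) ≤ δ := by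
  refine ⟨2 * N 3 1, ?_⟩
  intro X _ _ hgeo e α β hα hβ hα0 hβ0 hfin t ht
  obtain ⟨hαray, hαM⟩ := hα
  obtain ⟨hβray, hβM⟩ := hβ
  have hαd : ∀ x y : ℝ, 0 ≤ x → x ≤ y → dist (α x) (α y) = y - x := by
    intro x y hx hxy
    rw [hαray x hx y (le_trans hx hxy), abs_of_nonpos (by linarith), neg_sub]
  have hβd : ∀ x y : ℝ, 0 ≤ x → x ≤ y → dist (β x) (β y) = y - x := by
    intro x y hx hxy
    rw [hβray x hx y (le_trans hx hxy), abs_of_nonpos (by linarith), neg_sub]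
  have hAne : (α '' Set.Ici 0).Nonempty := ⟨α 0, 0, Set.mem_Ici.mpr le_rfl, rfl⟩
  have hBne : (β '' Set.Ici 0).Nonempty := ⟨β 0, 0, Set.mem_Ici.mpr le_rfl, rfl⟩
  -- the key estimate: α t is within N 3 1 of the image of β
  have key : infDist (α t) (β '' Set.Ici 0) ≤ N 3 1 := by
    set H := hausdorffDist (β '' Set.Ici 0) (α '' Set.Ici 0) with hH
    have hH0 : 0 ≤ H := hausdorffDist_nonneg
    set S := t + H + 2 with hSdef
    have hS0 : (0:ℝ) ≤ S := by linarith
    have hfin' : EMetric.hausdorffEdist (β '' Set.Ici 0) (α '' Set.Ici 0) ≠ ⊤ := by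
      intro h; apply hfin; rw [← h]; exact EMetric.hausdorffEdist_comm
    set m := infDist (β S) (α '' Set.Ici 0) with hm
    have hmH : m ≤ H :=
      infDist_le_hausdorffDist_of_mem ⟨S, hS0, rfl⟩ hfin'
    obtain ⟨y, hy, hylt⟩ := (infDist_lt_iff hAne).1 (lt_add_one m)
    obtain ⟨s', hs'0, rfl⟩ := hy
    have hs'0 : (0:ℝ) ≤ s' := hs'0
    -- s' is far out: s' > t + 1
    have hts' : t + 1 < s' := by
      have h1 : dist (β 0) (β S) = S := by
        have := hβd 0 S le_rfl hS0; simpa using this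
      have h2 : dist (β 0) (β S) ≤ dist (β 0) (α s') + dist (α s') (β S) := dist_triangle _ _ _
      have h3 : dist (β 0) (α s') = s' := by
        have := hαd 0 s' le_rfl hs'0
        rw [hβ0, ← hα0]; simpa using this
      have h4 : dist (α s') (β S) < m + 1 := by rwa [dist_comm]
      have := hmH
      rw [h1, h3] at h2
      linarith
    set r := dist (α s') (β S) with hrdef
    have hr0 : (0:ℝ) ≤ r := dist_nonneg
    have hrm : r < m + 1 := by rw [hrdef, dist_comm]; exact hylt
    obtain ⟨g, hg0, hgr, hgd⟩ := hgeo (α s') (β S)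
    rw [← hrdef] at hgr hgd
    set b := s' + r with hbdef
    set σ : ℝ → X := fun x => if x ≤ s' then α x else g (x - s') with hσdef
    have hgα : ∀ u, 0 ≤ u → u ≤ r → dist (α s') (g u) = u := by
      intro u h1 h2
      have := hgd 0 ⟨le_rfl, hr0⟩ u ⟨h1, h2⟩
      rw [hg0] at this; rw [this, abs_of_nonpos (by linarith), neg_sub, sub_zero]
    have hgS : ∀ u, 0 ≤ u → u ≤ r → dist (g u) (β S) = r - u := by
      intro u h1 h2
      have := hgd u ⟨h1, h2⟩ r ⟨hr0, le_rfl⟩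
      rw [hgr] at this; rw [this, abs_of_nonpos (by linarith), neg_sub]
    have hmle : ∀ x : ℝ, 0 ≤ x → m ≤ dist (β S) (α x) := by
      intro x hx; exact infDist_le_dist_of_mem ⟨x, hx, rfl⟩
    -- the cross estimate for the concatenated path
    have cross : ∀ x, 0 ≤ x → x ≤ s' → ∀ u, 0 ≤ u → u ≤ r →
        (1/3) * ((s' - x) + u) - 1 ≤ dist (α x) (g u) ∧
          dist (α x) (g u) ≤ (s' - x) + u := by
      intro x hx hxs u hu hur
      have hαx : dist (α x) (α s') = s' - x := hαd x s' hx hxs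
      have h1 : dist (α x) (g u) ≤ (s' - x) + u := by
        calc dist (α x) (g u) ≤ dist (α x) (α s') + dist (α s') (g u) := dist_triangle _ _ _
        _ = (s' - x) + u := by rw [hαx, hgα u hu hur]
      have h2 : (s' - x) - u ≤ dist (α x) (g u) := by
        have h := dist_triangle (α x) (g u) (α s')
        have h' : dist (g u) (α s') = u := by rw [dist_comm]; exact hgα u hu hur
        rw [hαx] at h; rw [h'] at h; linarith
      have h3 : u - 1 ≤ dist (α x) (g u) := by
        have hA := hmle x hx
        have hB := dist_triangle (β S) (g u) (α x)
        have hC : dist (β S) (g u) = r - u := by rw [dist_comm]; exact hgS u hu hur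
        have hD : dist (g u) (α x) = dist (α x) (g u) := dist_comm _ _
        rw [hC, hD] at hB
        linarith
      refine ⟨?_, h1⟩
      rcases le_total (s' - x) (2 * u) with h | h
      · linarith
      · linarith
    -- the path σ is a (3,1)-quasi-geodesic on [0, b]
    have key2 : ∀ x ∈ Set.Icc (0:ℝ) b, ∀ y ∈ Set.Icc (0:ℝ) b, x ≤ y →
        (1/3) * |x - y| - 1 ≤ dist (σ x) (σ y) ∧ dist (σ x) (σ y) ≤ 3 * |x - y| + 1 := by
      intro x hx y hy hxy
      have habs : |x - y| = y - x := by rw [abs_of_nonpos (by linarith), neg_sub]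
      rw [habs]
      by_cases hys : y ≤ s'
      · have hxs : x ≤ s' := le_trans hxy hys
        have : dist (σ x) (σ y) = y - x := by
          simp only [hσdef, if_pos hxs, if_pos hys]
          exact hαd x y hx.1 hxy
        rw [this]
        constructor <;> linarith
      · push_neg at hys
        by_cases hxs : x ≤ s'
        · have hu0 : 0 ≤ y - s' := by linarith
          have hur : y - s' ≤ r := by
            have := hy.2; rw [hbdef] at this; linarith
          have hc := cross x hx.1 hxs (y - s') hu0 hur
          have hσx : σ x = α x := if_pos hxs
          have hσy : σ y = g (y - s') := if_neg (not_le.mpr hys)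
          rw [hσx, hσy]
          have heq : (s' - x) + (y - s') = y - x := by ring
          rw [heq] at hc
          exact ⟨hc.1, by linarith [hc.2, sub_nonneg.mpr hxy]⟩
        · push_neg at hxs
          have hσx : σ x = g (x - s') := if_neg (not_le.mpr hxs)
          have hσy : σ y = g (y - s') := if_neg (not_le.mpr hys)
          have hux : (0:ℝ) ≤ x - s' := by linarith
          have huxr : x - s' ≤ r := by have := hx.2; rw [hbdef] at this; linarith
          have huy : (0:ℝ) ≤ y - s' := by linarith
          have huyr : y - s' ≤ r := by have := hy.2; rw [hbdef] at this; linarith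
          have : dist (σ x) (σ y) = y - x := by
            rw [hσx, hσy, hgd (x - s') ⟨hux, huxr⟩ (y - s') ⟨huy, huyr⟩,
              abs_of_nonpos (by linarith), neg_sub]
            ring
          rw [this]
          constructor <;> linarith
    have hqg : IsQuasiGeodesicOn 3 1 0 b σ := by
      intro x hx y hy
      rcases le_total x y with h | h
      · exact key2 x hx y hy h
      · have := key2 y hy x hx h
        rwa [dist_comm, abs_sub_comm] at this
    have hσ0 : σ 0 ∈ β '' Set.Ici 0 := by
      have : σ 0 = β 0 := by
        simp only [hσdef, if_pos (show (0:ℝ) ≤ s' by linarith)]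
        rw [hα0, hβ0]
      rw [this]; exact ⟨0, Set.mem_Ici.mpr le_rfl, rfl⟩
    have hσb : σ b ∈ β '' Set.Ici 0 := by
      by_cases hrz : r = 0
      · have hb' : b = s' := by rw [hbdef, hrz, add_zero]
        have : σ b = α s' := by rw [hb']; exact if_pos le_rfl
        have hαβ : α s' = β S := by
          have : dist (α s') (β S) = 0 := by rw [← hrdef, hrz]
          exact dist_eq_zero.mp this
        rw [this, hαβ]; exact ⟨S, hS0, rfl⟩
      · have hrpos : 0 < r := lt_of_le_of_ne hr0 (Ne.symm hrz)
        have : σ b = g r := by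
          simp only [hσdef, hbdef]
          rw [if_neg (by linarith), add_sub_cancel_left]
        rw [this, hgr]; exact ⟨S, hS0, rfl⟩
    have happ := hβM 3 1 (by norm_num) (by norm_num) 0 b (by linarith) σ hqg hσ0 hσb t
      ⟨ht, by rw [hbdef]; linarith⟩
    have hσt : σ t = α t := if_pos (by linarith)
    rwa [hσt] at happ
  -- convert infDist bound to a bound on dist (α t) (β t)
  refine le_of_forall_pos_le_add ?_
  intro ε hε
  have h1 : infDist (α t) (β '' Set.Ici 0) < infDist (α t) (β '' Set.Ici 0) + ε / 2 := by linarith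
  obtain ⟨y, hy, hylt⟩ := (infDist_lt_iff hBne).1 h1
  obtain ⟨s, hs0, rfl⟩ := hy
  have hdts : dist (α t) (β s) < N 3 1 + ε / 2 := by
    calc dist (α t) (β s) < infDist (α t) (β '' Set.Ici 0) + ε / 2 := hylt
    _ ≤ N 3 1 + ε / 2 := by linarith
  have hst : |s - t| ≤ dist (α t) (β s) := by
    have h2 : |dist (β s) e - dist (α t) e| ≤ dist (β s) (α t) := abs_dist_sub_le _ _ _
    have h3 : dist (β s) e = s := by
      rw [← hβ0, dist_comm]
      have := hβd 0 s le_rfl hs0; simpa using this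
    have h4 : dist (α t) e = t := by
      rw [← hα0, dist_comm]
      have := hαd 0 t le_rfl ht; simpa using this
    rw [h3, h4] at h2
    rwa [dist_comm] at h2
  have h5 : dist (β s) (β t) = |s - t| := hβray s hs0 t ht
  calc dist (α t) (β t) ≤ dist (α t) (β s) + dist (β s) (β t) := dist_triangle _ _ _
  _ = dist (α t) (β s) + |s - t| := by rw [h5]
  _ ≤ 2 * dist (α t) (β s) := by linarith
  _ ≤ 2 * N 3 1 + ε := by linarith
end
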